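/- arXiv:1310.0209 — 5 statements merged into one kernel-verified Lean document; each statement's English description precedes it below -/
import Mathlib

section
/- Let T>0 and U be an open subset of ℝ. Let k ∈ H¹₁([0,T]), H ∈ C¹(U), and u ∈ L₁([0,T]) with u(t) ∈ U for a.a. t ∈ (0,T). Suppose that the functions H(u), H'(u)u, and H'(u)(k̇⋆u) belong to L₁([0,T]). Then for a.a. t ∈ (0,T) one has the fundamental identity: H'(u(t))·(d/dt)(k⋆u)(t) = (d/dt)(k⋆H(u))(t) + (−H(u(t)) + H'(u(t))u(t))·k(t) + ∫₀ᵗ [H(u(t−s)) − H(u(t)) − H'(u(t))(u(t−s) − u(t))]·(−k̇(s)) ds. -/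
open MeasureTheory Set Filter Topology

/-- Convolution on the positive half-line: `(f ⋆ g)(t) = ∫₀ᵗ f(t-τ) g(τ) dτ`. -/
noncomputable def conv (f g : ℝ → ℝ) (t : ℝ) : ℝ :=
  ∫ τ in (0:ℝ)..t, f (t - τ) * g τ

section AuxiliaryLemmas

lemma ae_hasDerivAt_primitive (T : ℝ) (h : ℝ → ℝ) (hint : IntegrableOn h (Icc 0 T)) :
    ∀ᵐ t ∂(volume.restrict (Ioo 0 T)),
      HasDerivAt (fun x => ∫ s in (0:ℝ)..x, h s) (h t) t := by
  set g : ℝ → ℝ := (Icc 0 T).indicator h with hg_def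
  have hg : Integrable g := (integrable_indicator_iff measurableSet_Icc).2 hint
  have hloc : LocallyIntegrable g := hg.locallyIntegrable
  have hvit := ae_restrict_of_ae (s := Ioo 0 T)
    ((IsUnifLocDoublingMeasure.vitaliFamily (volume : Measure ℝ)
      1).ae_tendsto_average_norm_sub hloc)
  filter_upwards [hvit, ae_restrict_mem measurableSet_Ioo] with x hx hxmem
  have hx0T : x ∈ Icc 0 T := Ioo_subset_Icc_self hxmem
  have h0T : (0:ℝ) ∈ Icc 0 T := ⟨le_rfl, hxmem.1.le.trans hxmem.2.le⟩
  have hII : ∀ a b : ℝ, a ∈ Icc 0 T → b ∈ Icc 0 T → IntervalIntegrable h volume a b := by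
    intro a b ha hb
    exact (hint.mono_set (uIcc_subset_Icc ha hb)).intervalIntegrable
  rw [hasDerivAt_iff_tendsto_slope, tendsto_iff_norm_sub_tendsto_zero]
  have key : ∀ y ∈ Ioo 0 T, y ≠ x →
      ‖slope (fun x => ∫ s in (0:ℝ)..x, h s) x y - h x‖
        ≤ ⨍ z in Icc (min x y) (max x y), ‖g z - g x‖ := by
    intro y hy hyx
    have hy0T : y ∈ Icc 0 T := Ioo_subset_Icc_self hy
    have hFy : (∫ s in (0:ℝ)..y, h s) - ∫ s in (0:ℝ)..x, h s = ∫ s in x..y, h s :=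
      intervalIntegral.integral_interval_sub_left (hII 0 y h0T hy0T) (hII 0 x h0T hx0T)
    have hsub : Icc (min x y) (max x y) ⊆ Icc 0 T :=
      Icc_subset_Icc (le_min hx0T.1 hy0T.1) (max_le hx0T.2 hy0T.2)
    have hIcc_int : IntegrableOn (fun z => ‖h z - h x‖) (Icc (min x y) (max x y)) :=
      ((hint.mono_set hsub).sub (integrableOn_const (by
        simp [Real.volume_Icc]))).norm
    have e1 : ∫ s in x..y, (h s - h x) = (∫ s in x..y, h s) - (y - x) * h x := by
      rw [intervalIntegral.integral_sub (hII x y hx0T hy0T) intervalIntegrable_const,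
        intervalIntegral.integral_const, smul_eq_mul]
    have hyx' : y - x ≠ 0 := sub_ne_zero.2 hyx
    have step1 : slope (fun x => ∫ s in (0:ℝ)..x, h s) x y - h x
        = (y - x)⁻¹ * ∫ s in x..y, (h s - h x) := by
      rw [slope_def_field]
      simp only [e1, hFy]
      field_simp
    rw [step1, norm_mul, norm_inv, Real.norm_eq_abs]
    have step2 : ‖∫ s in x..y, (h s - h x)‖ ≤ ∫ z in Icc (min x y) (max x y), ‖g z - g x‖ := by
      refine intervalIntegral.norm_integral_le_integral_norm_uIoc.trans ?_
      have : ∫ z in uIoc x y, ‖h z - h x‖ ≤ ∫ z in Icc (min x y) (max x y), ‖h z - h x‖ := by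
        apply setIntegral_mono_set hIcc_int
          (Eventually.of_forall fun z => norm_nonneg _)
        exact HasSubset.Subset.eventuallyLE Ioc_subset_Icc_self
      refine this.trans_eq ?_
      apply setIntegral_congr_fun measurableSet_Icc
      intro z hz
      simp only [hg_def, indicator_of_mem (hsub hz) h, indicator_of_mem hx0T h]
    calc |y - x|⁻¹ * ‖∫ s in x..y, (h s - h x)‖
        ≤ |y - x|⁻¹ * ∫ z in Icc (min x y) (max x y), ‖g z - g x‖ := by
          exact mul_le_mul_of_nonneg_left step2 (by positivity)
      _ = ⨍ z in Icc (min x y) (max x y), ‖g z - g x‖ := by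
          rw [setAverage_eq, smul_eq_mul, Real.volume_real_Icc,
            max_eq_left (sub_nonneg.2 min_le_max)]
          rw [max_sub_min_eq_abs, abs_sub_comm]
  have hbound : Tendsto (fun y => ⨍ z in Icc (min x y) (max x y), ‖g z - g x‖)
      (𝓝[≠] x) (𝓝 0) := by
    rw [← nhdsLT_sup_nhdsGT, tendsto_sup]
    constructor
    · apply Tendsto.congr' ?_ (hx.comp (Real.tendsto_Icc_vitaliFamily_left x))
      filter_upwards [self_mem_nhdsWithin] with y (hy : y < x)
      simp [min_eq_right hy.le, max_eq_left hy.le]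
    · apply Tendsto.congr' ?_ (hx.comp (Real.tendsto_Icc_vitaliFamily_right x))
      filter_upwards [self_mem_nhdsWithin] with y (hy : x < y)
      simp [min_eq_left hy.le, max_eq_right hy.le]
  refine squeeze_zero' (Eventually.of_forall fun y => norm_nonneg _) ?_ hbound
  filter_upwards [self_mem_nhdsWithin,
    nhdsWithin_le_nhds (Ioo_mem_nhds hxmem.1 hxmem.2)] with y hyx hy
  exact key y hy hyx

lemma key_swap (T t : ℝ) (f g : ℝ → ℝ)
    (hf : IntegrableOn f (Icc 0 T)) (hg : IntegrableOn g (Icc 0 T)) (ht : t ∈ Ioc 0 T) :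
    ∫ σ in (0:ℝ)..t, conv f g σ = ∫ τ in (0:ℝ)..t, (∫ s in (0:ℝ)..(t-τ), f s) * g τ := by
  set F : ℝ → ℝ := (Ioc 0 T).indicator f with hF_def
  set G : ℝ → ℝ := (Ioc 0 t).indicator g with hG_def
  have hF : Integrable F :=
    (integrable_indicator_iff measurableSet_Ioc).2 (hf.mono_set Ioc_subset_Icc_self)
  have hG : Integrable G := (integrable_indicator_iff measurableSet_Ioc).2
    (hg.mono_set ((Ioc_subset_Ioc_right ht.2).trans Ioc_subset_Icc_self))
  have hΦ : Integrable (fun p : ℝ × ℝ => G p.2 * F (p.1 - p.2)) (volume.prod volume) := by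
    have := hG.convolution_integrand (ContinuousLinearMap.mul ℝ ℝ) hF
    simpa using this
  have hΦ' : Integrable
      (fun p : ℝ × ℝ => (Ioc 0 t ×ˢ (univ : Set ℝ)).indicator
        (fun p : ℝ × ℝ => G p.2 * F (p.1 - p.2)) p) (volume.prod volume) :=
    hΦ.indicator (measurableSet_Ioc.prod MeasurableSet.univ)
  have fact1 : ∀ σ τ : ℝ, (Ioc 0 t ×ˢ (univ : Set ℝ)).indicator
      (fun p : ℝ × ℝ => G p.2 * F (p.1 - p.2)) (σ, τ)
      = (Ioc 0 t).indicator (fun σ => G τ * F (σ - τ)) σ := by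
    intro σ τ
    by_cases hσ : σ ∈ Ioc 0 t <;>
      simp [Set.indicator_apply, hσ]
  have hswap := integral_integral_swap (μ := (volume : Measure ℝ)) (ν := (volume : Measure ℝ))
    (f := fun σ τ => (Ioc 0 t ×ˢ (univ : Set ℝ)).indicator
      (fun p : ℝ × ℝ => G p.2 * F (p.1 - p.2)) (σ, τ)) hΦ'
  -- LHS
  have hL : (∫ σ : ℝ, ∫ τ : ℝ, (Ioc 0 t ×ˢ (univ : Set ℝ)).indicator
      (fun p : ℝ × ℝ => G p.2 * F (p.1 - p.2)) (σ, τ))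
      = ∫ σ in (0:ℝ)..t, conv f g σ := by
    rw [intervalIntegral.integral_of_le ht.1.le, ← integral_indicator measurableSet_Ioc]
    congr 1
    funext σ
    rw [show (fun τ : ℝ => (Ioc 0 t ×ˢ (univ : Set ℝ)).indicator
        (fun p : ℝ × ℝ => G p.2 * F (p.1 - p.2)) (σ, τ))
      = fun τ : ℝ => (Ioc 0 t).indicator (fun σ => G τ * F (σ - τ)) σ from funext fun τ => fact1 σ τ]
    by_cases hσ : σ ∈ Ioc 0 t
    · simp only [indicator_of_mem hσ]
      have hpt : ∀ τ : ℝ, G τ * F (σ - τ) = (Ioo 0 σ).indicator (fun τ => f (σ - τ) * g τ) τ := by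
        intro τ
        by_cases h1 : τ ∈ Ioo 0 σ
        · have hτt : τ ∈ Ioc 0 t := ⟨h1.1, h1.2.le.trans hσ.2⟩
          have hστ : σ - τ ∈ Ioc 0 T := ⟨by linarith [h1.2], by
            have := hσ.2; have := ht.2; have := h1.1; linarith⟩
          rw [indicator_of_mem h1, hG_def, hF_def, indicator_of_mem hτt, indicator_of_mem hστ]
          ring
        · rw [indicator_of_notMem h1]
          rcases not_and_or.mp h1 with h2 | h2
          · push_neg at h2
            rw [hG_def, indicator_of_notMem (fun hc => absurd hc.1 (not_lt.2 h2))]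
            ring
          · push_neg at h2
            rw [hF_def, indicator_of_notMem (fun hc => absurd hc.1 (by simp; linarith))]
            ring
      rw [funext hpt, integral_indicator measurableSet_Ioo]
      rw [conv, intervalIntegral.integral_of_le hσ.1.le, integral_Ioc_eq_integral_Ioo]
    · simp [indicator_of_notMem hσ]
  -- RHS
  have hR : (∫ τ : ℝ, ∫ σ : ℝ, (Ioc 0 t ×ˢ (univ : Set ℝ)).indicator
      (fun p : ℝ × ℝ => G p.2 * F (p.1 - p.2)) (σ, τ))
      = ∫ τ in (0:ℝ)..t, (∫ s in (0:ℝ)..(t-τ), f s) * g τ := by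
    have inner : ∀ τ : ℝ, (∫ σ : ℝ, (Ioc 0 t ×ˢ (univ : Set ℝ)).indicator
        (fun p : ℝ × ℝ => G p.2 * F (p.1 - p.2)) (σ, τ))
        = G τ * ∫ σ in Ioc 0 t, F (σ - τ) := by
      intro τ
      rw [show (fun σ : ℝ => (Ioc 0 t ×ˢ (univ : Set ℝ)).indicator
          (fun p : ℝ × ℝ => G p.2 * F (p.1 - p.2)) (σ, τ))
        = fun σ : ℝ => (Ioc 0 t).indicator (fun σ => G τ * F (σ - τ)) σ
        from funext fun σ => fact1 σ τ]
      rw [integral_indicator measurableSet_Ioc, integral_const_mul]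
    simp_rw [inner]
    have pull : ∀ τ : ℝ, G τ * ∫ σ in Ioc 0 t, F (σ - τ)
        = (Ioc 0 t).indicator (fun τ => g τ * ∫ σ in Ioc 0 t, F (σ - τ)) τ := by
      intro τ
      by_cases hτ : τ ∈ Ioc 0 t
      · rw [indicator_of_mem hτ, hG_def, indicator_of_mem hτ]
      · rw [indicator_of_notMem hτ, hG_def, indicator_of_notMem hτ, zero_mul]
    rw [funext pull, integral_indicator measurableSet_Ioc,
      intervalIntegral.integral_of_le ht.1.le,
      integral_Ioc_eq_integral_Ioo, integral_Ioc_eq_integral_Ioo]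
    apply setIntegral_congr_fun measurableSet_Ioo
    intro τ hτ
    have hJ : (∫ σ in Ioc 0 t, F (σ - τ)) = ∫ s in (0:ℝ)..(t-τ), f s := by
      rw [← intervalIntegral.integral_of_le ht.1.le,
        intervalIntegral.integral_comp_sub_right (fun s => F s) τ]
      have hadj := intervalIntegral.integral_add_adjacent_intervals
        (a := 0 - τ) (b := 0) (c := t - τ)
        hF.intervalIntegrable hF.intervalIntegrable
      rw [← hadj]
      have hz : (∫ s in (0-τ:ℝ)..0, F s) = 0 := by
        rw [intervalIntegral.integral_of_le (by linarith [hτ.1])]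
        rw [setIntegral_congr_fun measurableSet_Ioc
          (fun s hs => indicator_of_notMem (fun hc => absurd hc.1 (not_lt.2 hs.2)) f)]
        simp
      rw [hz, zero_add]
      rw [intervalIntegral.integral_of_le (by linarith [hτ.2]),
        intervalIntegral.integral_of_le (by linarith [hτ.2] : (0:ℝ) ≤ t - τ)]
      apply setIntegral_congr_fun measurableSet_Ioc
      intro s hs
      exact indicator_of_mem (show s ∈ Ioc 0 T from
        ⟨hs.1, by have := hs.2; have := ht.2; have := hτ.1; linarith⟩) f
    show g τ * (∫ σ in Ioc 0 t, F (σ - τ)) = (∫ s in (0:ℝ)..(t-τ), f s) * g τ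
    rw [hJ, mul_comm]
  rw [← hL, ← hR, hswap]

lemma conv_integrableOn (T : ℝ) (f g : ℝ → ℝ)
    (hf : IntegrableOn f (Icc 0 T)) (hg : IntegrableOn g (Icc 0 T)) :
    IntegrableOn (conv f g) (Icc 0 T) := by
  set F : ℝ → ℝ := (Ioc 0 T).indicator f with hF_def
  set G : ℝ → ℝ := (Ioc 0 T).indicator g with hG_def
  have hF : Integrable F :=
    (integrable_indicator_iff measurableSet_Ioc).2 (hf.mono_set Ioc_subset_Icc_self)
  have hG : Integrable G :=
    (integrable_indicator_iff measurableSet_Ioc).2 (hg.mono_set Ioc_subset_Icc_self)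
  have hGF : Integrable (MeasureTheory.convolution G F (ContinuousLinearMap.mul ℝ ℝ) volume) :=
    hG.integrable_convolution (ContinuousLinearMap.mul ℝ ℝ) hF
  rw [integrableOn_Icc_iff_integrableOn_Ioc]
  apply (hGF.integrableOn (s := Ioc 0 T)).congr_fun ?_ measurableSet_Ioc
  intro σ hσ
  have hpt : ∀ τ : ℝ, G τ * F (σ - τ) = (Ioo 0 σ).indicator (fun τ => f (σ - τ) * g τ) τ := by
    intro τ
    by_cases h1 : τ ∈ Ioo 0 σ
    · have hτt : τ ∈ Ioc 0 T := ⟨h1.1, h1.2.le.trans hσ.2⟩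
      have hστ : σ - τ ∈ Ioc 0 T := ⟨by linarith [h1.2], by
        have := hσ.2; have := h1.1; linarith⟩
      rw [indicator_of_mem h1, hG_def, hF_def, indicator_of_mem hτt, indicator_of_mem hστ]
      ring
    · rw [indicator_of_notMem h1]
      rcases not_and_or.mp h1 with h2 | h2
      · push_neg at h2
        rw [hG_def, indicator_of_notMem (fun hc => absurd hc.1 (not_lt.2 h2))]
        ring
      · push_neg at h2
        rw [hF_def, indicator_of_notMem (fun hc => absurd hc.1 (by simp; linarith))]
        ring
  show MeasureTheory.convolution G F (ContinuousLinearMap.mul ℝ ℝ) volume σ = conv f g σ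
  rw [MeasureTheory.convolution]
  simp only [ContinuousLinearMap.mul_apply']
  rw [funext hpt, integral_indicator measurableSet_Ioo]
  rw [conv, intervalIntegral.integral_of_le hσ.1.le, integral_Ioc_eq_integral_Ioo]

lemma ae_section_intervalIntegrable (T : ℝ) (f g : ℝ → ℝ)
    (hf : IntegrableOn f (Icc 0 T)) (hg : IntegrableOn g (Icc 0 T)) :
    ∀ᵐ t ∂(volume.restrict (Ioo 0 T)),
      IntervalIntegrable (fun s => f s * g (t - s)) volume 0 t := by
  set F : ℝ → ℝ := (Ioc 0 T).indicator f with hF_def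
  set G : ℝ → ℝ := (Ioc 0 T).indicator g with hG_def
  have hF : Integrable F :=
    (integrable_indicator_iff measurableSet_Ioc).2 (hf.mono_set Ioc_subset_Icc_self)
  have hG : Integrable G :=
    (integrable_indicator_iff measurableSet_Ioc).2 (hg.mono_set Ioc_subset_Icc_self)
  have hae := ae_restrict_of_ae (s := Ioo 0 T)
    (hF.ae_convolution_exists (ContinuousLinearMap.mul ℝ ℝ) hG)
  filter_upwards [hae, ae_restrict_mem measurableSet_Ioo] with t hexist htmem
  have hint : Integrable (fun s => F s * G (t - s)) := by
    simpa [ConvolutionExistsAt] using hexist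
  rw [intervalIntegrable_iff_integrableOn_Ioo_of_le htmem.1.le]
  apply (hint.integrableOn (s := Ioo 0 t)).congr_fun ?_ measurableSet_Ioo
  intro s hs
  have hs1 : s ∈ Ioc 0 T := ⟨hs.1, hs.2.le.trans htmem.2.le⟩
  have hs2 : t - s ∈ Ioc 0 T := ⟨by linarith [hs.2], by linarith [htmem.2, hs.1]⟩
  show F s * G (t - s) = f s * g (t - s)
  rw [hF_def, hG_def, indicator_of_mem hs1, indicator_of_mem hs2]

lemma conv_rep (T : ℝ) (k k' g : ℝ → ℝ)
    (hk'int : IntegrableOn k' (Icc 0 T))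
    (hkFTC : ∀ t ∈ Icc (0:ℝ) T, k t = k 0 + ∫ s in (0:ℝ)..t, k' s)
    (hg : IntegrableOn g (Icc 0 T)) (y : ℝ) (hy : y ∈ Ioc 0 T) :
    conv k g y = ∫ s in (0:ℝ)..y, (k 0 * g s + conv k' g s) := by
  have hsub : Icc 0 y ⊆ Icc 0 T := Icc_subset_Icc_right hy.2
  have hgII : IntervalIntegrable g volume 0 y :=
    (hg.mono_set (by rw [uIcc_of_le hy.1.le]; exact hsub)).intervalIntegrable
  have hconvII : IntervalIntegrable (conv k' g) volume 0 y :=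
    ((conv_integrableOn T k' g hk'int hg).mono_set
      (by rw [uIcc_of_le hy.1.le]; exact hsub)).intervalIntegrable
  -- primitive of the indicator-extension of k'
  set K : ℝ → ℝ := (Icc 0 T).indicator k' with hK_def
  have hK : Integrable K := (integrable_indicator_iff measurableSet_Icc).2 hk'int
  have hKprim : Continuous (fun x : ℝ => ∫ s in (0:ℝ)..x, K s) := hK.continuous_primitive 0
  have hKeq : ∀ x ∈ Icc (0:ℝ) T, (∫ s in (0:ℝ)..x, K s) = ∫ s in (0:ℝ)..x, k' s := by
    intro x hx
    rw [intervalIntegral.integral_of_le hx.1, intervalIntegral.integral_of_le hx.1]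
    apply setIntegral_congr_fun measurableSet_Ioc
    intro s hs
    exact indicator_of_mem (show s ∈ Icc (0:ℝ) T from ⟨hs.1.le, hs.2.trans hx.2⟩) k'
  have hC : ∃ C, ∀ x : ℝ, ‖∫ s in (0:ℝ)..x, K s‖ ≤ C := by
    refine ⟨∫ s, ‖K s‖, fun x => ?_⟩
    refine intervalIntegral.norm_integral_le_integral_norm_uIoc.trans ?_
    exact setIntegral_le_integral hK.norm (Eventually.of_forall fun s => norm_nonneg _)
  -- integrability of the middle term
  have hmid : Integrable (fun τ => (∫ s in (0:ℝ)..(y - τ), K s) * g τ)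
      (volume.restrict (Ioo 0 y)) := by
    obtain ⟨C, hCb⟩ := hC
    apply Integrable.bdd_mul (c := C) (hg.mono_set (Ioo_subset_Icc_self.trans hsub))
      ((hKprim.comp (continuous_const.sub continuous_id)).aestronglyMeasurable)
    exact Eventually.of_forall fun x => hCb _
  -- rewrite conv k g y
  have main : conv k g y
      = ∫ τ in Ioo 0 y, (k 0 * g τ + (∫ s in (0:ℝ)..(y - τ), K s) * g τ) := by
    rw [conv, intervalIntegral.integral_of_le hy.1.le, integral_Ioc_eq_integral_Ioo]
    apply setIntegral_congr_fun measurableSet_Ioo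
    intro τ hτ
    have hyτ : y - τ ∈ Icc (0:ℝ) T := ⟨by linarith [hτ.2], by linarith [hy.2, hτ.1]⟩
    show k (y - τ) * g τ = k 0 * g τ + (∫ s in (0:ℝ)..(y - τ), K s) * g τ
    rw [hkFTC (y - τ) hyτ, hKeq (y - τ) hyτ]
    ring
  rw [main, integral_add ((hg.mono_set (Ioo_subset_Icc_self.trans hsub)).const_mul (k 0)) hmid]
  have step2 : (∫ τ in Ioo 0 y, (∫ s in (0:ℝ)..(y - τ), K s) * g τ)
      = ∫ σ in (0:ℝ)..y, conv k' g σ := by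
    rw [key_swap T y k' g hk'int hg hy, intervalIntegral.integral_of_le hy.1.le,
      integral_Ioc_eq_integral_Ioo]
    apply setIntegral_congr_fun measurableSet_Ioo
    intro τ hτ
    have hyτ : y - τ ∈ Icc (0:ℝ) T := ⟨by linarith [hτ.2], by linarith [hy.2, hτ.1]⟩
    show (∫ s in (0:ℝ)..(y - τ), K s) * g τ = (∫ s in (0:ℝ)..(y - τ), k' s) * g τ
    rw [hKeq (y - τ) hyτ]
  rw [step2]
  rw [intervalIntegral.integral_add (hgII.const_mul (k 0)) hconvII,
    intervalIntegral.integral_const_mul]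
  congr 1
  rw [intervalIntegral.integral_of_le hy.1.le, integral_Ioc_eq_integral_Ioo]
  exact integral_const_mul (k 0) g

lemma conv_eq_flip (f g : ℝ → ℝ) (t : ℝ) :
    conv f g t = ∫ s in (0:ℝ)..t, f s * g (t - s) := by
  rw [conv]
  have : (fun τ => f (t - τ) * g τ) = fun τ => (fun x => f x * g (t - x)) (t - τ) := by
    funext τ; simp [sub_sub_cancel]
  rw [this, intervalIntegral.integral_comp_sub_left (fun x => f x * g (t - x)) t]
  simp


end AuxiliaryLemmas

/-- The fundamental identity for operators of the form `∂ₜ(k ⋆ ·)`. -/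
theorem fundamental_identity
    (T : ℝ) (hT : 0 < T) (U : Set ℝ) (hU : IsOpen U)
    (k k' : ℝ → ℝ)
    (hk'int : IntegrableOn k' (Icc 0 T))
    (hkFTC : ∀ t ∈ Icc (0:ℝ) T, k t = k 0 + ∫ s in (0:ℝ)..t, k' s)
    (H H' : ℝ → ℝ)
    (hH : ∀ y ∈ U, HasDerivAt H (H' y) y)
    (hH'cont : ContinuousOn H' U)
    (u : ℝ → ℝ) (huint : IntegrableOn u (Icc 0 T))
    (huU : ∀ᵐ t ∂(volume.restrict (Ioo 0 T)), u t ∈ U)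
    (hHu : IntegrableOn (fun t => H (u t)) (Icc 0 T))
    (hH'uu : IntegrableOn (fun t => H' (u t) * u t) (Icc 0 T))
    (hH'uk'u : IntegrableOn (fun t => H' (u t) * conv k' u t) (Icc 0 T)) :
    ∀ᵐ t ∂(volume.restrict (Ioo 0 T)), ∃ d₁ d₂ : ℝ,
      HasDerivAt (conv k u) d₁ t ∧
      HasDerivAt (conv k (fun τ => H (u τ))) d₂ t ∧
      H' (u t) * d₁ =
        d₂ + (-(H (u t)) + H' (u t) * u t) * k t +
          ∫ s in (0:ℝ)..t,
            (H (u (t - s)) - H (u t) - H' (u t) * (u (t - s) - u t)) * (-(k' s)) := by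
  have hψ₁ : IntegrableOn (fun s => k 0 * u s + conv k' u s) (Icc 0 T) :=
    (huint.const_mul _).add (conv_integrableOn T k' u hk'int huint)
  have hψ₂ : IntegrableOn (fun s => k 0 * H (u s) + conv k' (fun τ => H (u τ)) s) (Icc 0 T) :=
    (hHu.const_mul _).add (conv_integrableOn T k' (fun τ => H (u τ)) hk'int hHu)
  filter_upwards [ae_hasDerivAt_primitive T _ hψ₁, ae_hasDerivAt_primitive T _ hψ₂,
    ae_restrict_mem measurableSet_Ioo,
    ae_section_intervalIntegrable T k' u hk'int huint,
    ae_section_intervalIntegrable T k' (fun τ => H (u τ)) hk'int hHu]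
    with t hd1 hd2 htmem hsec1 hsec2
  refine ⟨k 0 * u t + conv k' u t, k 0 * H (u t) + conv k' (fun τ => H (u τ)) t, ?_, ?_, ?_⟩
  · apply hd1.congr_of_eventuallyEq
    filter_upwards [Ioo_mem_nhds htmem.1 htmem.2] with y hy
    exact conv_rep T k k' u hk'int hkFTC huint y ⟨hy.1, hy.2.le⟩
  · apply hd2.congr_of_eventuallyEq
    filter_upwards [Ioo_mem_nhds htmem.1 htmem.2] with y hy
    exact conv_rep T k k' (fun τ => H (u τ)) hk'int hkFTC hHu y ⟨hy.1, hy.2.le⟩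
  · have htT : t ∈ Icc (0:ℝ) T := Ioo_subset_Icc_self htmem
    have hk'II : IntervalIntegrable k' volume 0 t :=
      (hk'int.mono_set (by
        rw [uIcc_of_le htmem.1.le]
        exact Icc_subset_Icc_right htmem.2.le)).intervalIntegrable
    have hFTCt : (∫ s in (0:ℝ)..t, k' s) = k t - k 0 := by rw [hkFTC t htT]; ring
    have hexp : (fun s => (H (u (t - s)) - H (u t) - H' (u t) * (u (t - s) - u t)) * (-(k' s)))
        = fun s => (-1 : ℝ) * (k' s * H (u (t - s)))
            + ((H (u t) - H' (u t) * u t) * k' s + H' (u t) * (k' s * u (t - s))) := by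
      funext s; ring
    rw [hexp, intervalIntegral.integral_add (hsec2.const_mul (-1 : ℝ))
        ((hk'II.const_mul _).add (hsec1.const_mul _)),
      intervalIntegral.integral_add (hk'II.const_mul _) (hsec1.const_mul _),
      intervalIntegral.integral_const_mul, intervalIntegral.integral_const_mul,
      intervalIntegral.integral_const_mul, hFTCt,
      ← conv_eq_flip k' u t, ← conv_eq_flip k' (fun τ => H (u τ)) t]
    ring
end

section
/- Let (k,l) be a pair of type PC, μ > 0, and T > 0. For n ∈ ℕ let hₙ ∈ L_{1,loc}(ℝ₊) be the (nonnegative) resolvent kernel of n·l, i.e. hₙ + n(hₙ⋆l) = n·l a.e. on (0,∞), and set kₙ := k⋆hₙ (so kₙ ∈ H¹₁([0,T]) is nonnegative and nonincreasing). Let fₙ ∈ L₁([0,T]) and let vₙ ∈ L₁([0,T]) be the solution of (d/dt)(kₙ⋆vₙ)(t) + μ·vₙ(t) = fₙ(t) for a.a. t ∈ (0,T). If fₙ → f in L₁([0,T]), then vₙ → v in L₁([0,T]), where v is the solution of v(t) + μ(l⋆v)(t) = (l⋆f)(t) for a.a. t ∈ (0,T). -/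
open MeasureTheory Set Filter

namespace CDAux

noncomputable abbrev mulL : ℝ →L[ℝ] ℝ →L[ℝ] ℝ := ContinuousLinearMap.mul ℝ ℝ

noncomputable def fc (A B : ℝ → ℝ) : ℝ → ℝ := convolution A B mulL volume

lemma fc_def (A B : ℝ → ℝ) (t : ℝ) : fc A B t = ∫ τ, A τ * B (t - τ) := by
  unfold fc convolution
  simp [ContinuousLinearMap.mul_apply']

def Caus (A : ℝ → ℝ) : Prop := ∀ y, y ≤ 0 → A y = 0

lemma conv_comm (f g : ℝ → ℝ) (t : ℝ) : conv f g t = conv g f t := by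
  have := intervalIntegral.integral_comp_sub_left (a := 0) (b := t)
    (fun τ => f (t - τ) * g τ) t
  simp only [sub_self, sub_zero] at this
  rw [conv, ← this, conv]
  refine intervalIntegral.integral_congr fun τ _ => ?_
  rw [sub_sub_cancel, mul_comm]

lemma conv_eq_Ioc (f g : ℝ → ℝ) {t : ℝ} (ht : 0 ≤ t) :
    conv f g t = ∫ τ in Ioc 0 t, f (t - τ) * g τ := by
  rw [conv, intervalIntegral.integral_of_le ht]

lemma fc_causal {A B : ℝ → ℝ} (hA : Caus A) (hB : Caus B) : Caus (fc A B) := by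
  intro t ht
  rw [fc_def]
  have : ∀ τ : ℝ, A τ * B (t - τ) = 0 := by
    intro τ
    rcases le_or_gt τ 0 with h | h
    · rw [hA τ h, zero_mul]
    · rw [hB (t - τ) (by linarith), mul_zero]
  simp only [this, integral_zero]

lemma fc_eq_conv {A B : ℝ → ℝ} (hA : Caus A) (hB : Caus B) {t : ℝ} (ht : 0 ≤ t) :
    fc A B t = conv A B t := by
  rw [conv_comm, conv_eq_Ioc _ _ ht, fc_def]
  rw [← setIntegral_eq_integral_of_forall_compl_eq_zero (s := Ioc 0 t)]
  · refine setIntegral_congr_fun measurableSet_Ioc fun τ hτ => ?_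
    rw [mul_comm]
  · intro τ hτ
    rcases le_or_gt τ 0 with h | h
    · rw [hA τ h, zero_mul]
    · have : t < τ := by
        by_contra hc
        exact hτ ⟨h, le_of_not_gt hc⟩
      rw [hB (t - τ) (by linarith), mul_zero]

lemma fc_comm {A B : ℝ → ℝ} (hA : Caus A) (hB : Caus B) : fc A B = fc B A := by
  funext t
  rcases le_or_gt t 0 with h | h
  · rw [fc_causal hA hB t h, fc_causal hB hA t h]
  · rw [fc_eq_conv hA hB h.le, fc_eq_conv hB hA h.le, conv_comm]



lemma real_ennnorm_eq_ofReal_abs (r : ℝ) : (‖r‖₊ : ENNReal) = ENNReal.ofReal |r| := by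
  rw [← enorm_eq_nnnorm, Real.enorm_eq_ofReal_abs]

lemma ae_ne (t : ℝ) : ∀ᵐ τ : ℝ, τ ≠ t := by simp [ae_iff, measure_singleton]

section Win
variable (T : ℝ)

/-- zero-extension restricted to the window `(0, T]` -/
noncomputable def ET (a : ℝ → ℝ) : ℝ → ℝ := (Ioc (0:ℝ) T).indicator a

lemma ET_suppT (a : ℝ → ℝ) : ∀ y ∉ Ioc (0:ℝ) T, ET T a y = 0 := fun _ hy =>
  indicator_of_notMem hy a

lemma ET_caus (a : ℝ → ℝ) : Caus (ET T a) := fun y hy =>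
  indicator_of_notMem (fun hc => absurd hc.1 (not_lt.2 hy)) a

lemma ET_eq {a : ℝ → ℝ} {y : ℝ} (hy : y ∈ Ioc (0:ℝ) T) : ET T a y = a y :=
  indicator_of_mem hy a

lemma ET_integrable {a : ℝ → ℝ} (ha : IntegrableOn a (Ioc (0:ℝ) T)) :
    Integrable (ET T a) := ha.integrable_indicator measurableSet_Ioc

variable {T}

lemma conv_ET {a b : ℝ → ℝ} {t : ℝ} (ht : t ∈ Icc (0:ℝ) T) :
    conv a b t = conv (ET T a) (ET T b) t := by
  rw [conv_eq_Ioc _ _ ht.1, conv_eq_Ioc _ _ ht.1]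
  refine setIntegral_congr_ae measurableSet_Ioc ?_
  filter_upwards [ae_ne t] with τ hne hmem
  have h1 : τ ∈ Ioc (0:ℝ) T := ⟨hmem.1, hmem.2.trans ht.2⟩
  have h2 : t - τ ∈ Ioc (0:ℝ) T :=
    ⟨sub_pos.2 (lt_of_le_of_ne hmem.2 hne), by linarith [hmem.1, ht.2]⟩
  rw [ET_eq T h1, ET_eq T h2]

lemma conv_eq_fc {a b : ℝ → ℝ} {t : ℝ} (ht : t ∈ Icc (0:ℝ) T) :
    conv a b t = fc (ET T a) (ET T b) t :=
  (conv_ET ht).trans (CDAux.fc_eq_conv (ET_caus T a) (ET_caus T b) ht.1).symm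

lemma fc_congr_right {A X Y : ℝ → ℝ} (hA : ∀ y ∉ Ioc (0:ℝ) T, A y = 0)
    (hX : Caus X) (hY : Caus Y) (hXY : X =ᵐ[volume.restrict (Ioc (0:ℝ) T)] Y)
    {t : ℝ} (ht : t ≤ T) : fc A X t = fc A Y t := by
  rw [fc_def, fc_def]
  refine integral_congr_ae ?_
  have h0 : ∀ᵐ u : ℝ, u ∈ Ioc (0:ℝ) T → X u = Y u :=
    (ae_restrict_iff' measurableSet_Ioc).1 hXY
  have h1 : ∀ᵐ τ : ℝ, (t - τ) ∈ Ioc (0:ℝ) T → X (t - τ) = Y (t - τ) :=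
    (quasiMeasurePreserving_sub_left_of_right_invariant volume t).ae h0
  filter_upwards [h1] with τ hτ
  rcases le_or_gt (t - τ) 0 with h | h
  · rw [hX _ h, hY _ h]
  · rcases le_or_gt (t - τ) T with h' | h'
    · rw [hτ ⟨h, h'⟩]
    · have hτ0 : τ ∉ Ioc (0:ℝ) T := fun hc => by
        have : τ < t - T := by linarith
        have : τ < 0 := by linarith [ht]
        exact absurd hc.1 (not_lt.2 this.le)
      rw [hA τ hτ0, zero_mul, zero_mul]

lemma setIntegral_shift_congr {X Y : ℝ → ℝ}
    (hXY : X =ᵐ[volume.restrict (Ioc (0:ℝ) T)] Y) (B : ℝ → ℝ) {t : ℝ} (ht : t ≤ T) :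
    ∫ τ in Ioc (0:ℝ) t, X (t - τ) * B τ = ∫ τ in Ioc (0:ℝ) t, Y (t - τ) * B τ := by
  refine setIntegral_congr_ae measurableSet_Ioc ?_
  have h1 : ∀ᵐ τ : ℝ, (t - τ) ∈ Ioc (0:ℝ) T → X (t - τ) = Y (t - τ) :=
    (quasiMeasurePreserving_sub_left_of_right_invariant volume t).ae
      ((ae_restrict_iff' measurableSet_Ioc).1 hXY)
  filter_upwards [h1, ae_ne t] with τ hτ hne hmem
  have : t - τ ∈ Ioc (0:ℝ) T :=
    ⟨sub_pos.2 (lt_of_le_of_ne hmem.2 hne), by linarith [hmem.1]⟩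
  rw [hτ this]

end Win

lemma fc_assoc_ae {A B C : ℝ → ℝ} (hA : Integrable A) (hB : Integrable B) (hC : Integrable C) :
    ∀ᵐ t : ℝ, fc (fc A B) C t = fc A (fc B C) t := by
  filter_upwards [hA.norm.ae_convolution_exists (ContinuousLinearMap.mul ℝ ℝ)
    ((hB.norm.integrable_convolution (ContinuousLinearMap.mul ℝ ℝ) hC.norm))] with t hfgk
  exact convolution_assoc mulL mulL mulL mulL (fun x y z => mul_assoc x y z)
    hA.1 hB.1 hC.1 (hA.ae_convolution_exists mulL hB)
    (hB.norm.ae_convolution_exists (ContinuousLinearMap.mul ℝ ℝ) hC.norm) hfgk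

lemma fc_assoc_of_bdd {A B C : ℝ → ℝ} (hAb : ∀ x, |A x| ≤ 1)
    (hA : Integrable A) (hB : Integrable B) (hC : Integrable C) (t : ℝ) :
    fc (fc A B) C t = fc A (fc B C) t := by
  refine convolution_assoc mulL mulL mulL mulL (fun x y z => mul_assoc x y z)
    hA.1 hB.1 hC.1 (hA.ae_convolution_exists mulL hB)
    (hB.norm.ae_convolution_exists (ContinuousLinearMap.mul ℝ ℝ) hC.norm) ?_
  unfold ConvolutionExistsAt
  have hZ : Integrable (fun τ : ℝ =>
      (convolution (fun x => ‖B x‖) (fun x => ‖C x‖) (ContinuousLinearMap.mul ℝ ℝ) volume)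
        (t - τ)) :=
    (hB.norm.integrable_convolution (ContinuousLinearMap.mul ℝ ℝ) hC.norm).comp_sub_left t
  have := hZ.bdd_mul (c := 1) (hA.1.norm) (Eventually.of_forall fun x => by simpa using hAb x)
  refine this.congr ?_
  filter_upwards with τ
  simp [ContinuousLinearMap.mul_apply']

lemma fc_sub_at {A B C : ℝ → ℝ} {t : ℝ}
    (h1 : ConvolutionExistsAt A B t mulL volume) (h2 : ConvolutionExistsAt A C t mulL volume) :
    fc A (fun u => B u - C u) t = fc A B t - fc A C t := by
  have h1' : Integrable (fun τ => A τ * B (t - τ)) := by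
    refine h1.congr (by filter_upwards with τ; simp [ContinuousLinearMap.mul_apply'])
  have h2' : Integrable (fun τ => A τ * C (t - τ)) := by
    refine h2.congr (by filter_upwards with τ; simp [ContinuousLinearMap.mul_apply'])
  rw [fc_def, fc_def, fc_def, ← integral_sub h1' h2']
  congr 1
  funext τ
  ring

lemma fc_const_mul (A B : ℝ → ℝ) (c t : ℝ) :
    fc A (fun u => c * B u) t = c * fc A B t := by
  rw [fc_def, fc_def, ← integral_const_mul]
  congr 1
  funext τ
  ring


noncomputable def wt (lam u : ℝ) : ENNReal := ENNReal.ofReal (Real.exp (-lam * u))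

lemma wt_meas (lam : ℝ) : Measurable (wt lam) :=
  ENNReal.measurable_ofReal.comp
    (Real.continuous_exp.comp (continuous_const.mul continuous_id)).measurable

lemma wt_ne_top (lam u : ℝ) : wt lam u ≠ ⊤ := ENNReal.ofReal_ne_top

lemma wt_mul (lam a b : ℝ) : wt lam (a + b) = wt lam a * wt lam b := by
  rw [wt, wt, wt, ← ENNReal.ofReal_mul (Real.exp_pos _).le, ← Real.exp_add]
  ring_nf

lemma wt_le_one {lam u : ℝ} (hlam : 0 ≤ lam) (hu : 0 ≤ u) : wt lam u ≤ 1 := by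
  rw [wt, ← ENNReal.ofReal_one]
  refine ENNReal.ofReal_le_ofReal ?_
  rw [← Real.exp_zero]
  exact Real.exp_le_exp.2 (by nlinarith)

/-- weighted L¹ bound for the convolution of two functions supported in `(0, T]`. -/
lemma wbound {T lam : ℝ} {A B : ℝ → ℝ}
    (hA : AEStronglyMeasurable A volume) (hB : AEStronglyMeasurable B volume)
    (hAs : ∀ y ∉ Ioc (0:ℝ) T, A y = 0) (hBs : ∀ y ∉ Ioc (0:ℝ) T, B y = 0) :
    ∫⁻ t in Ioc (0:ℝ) T, wt lam t * ‖fc A B t‖₊ ≤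
      (∫⁻ u in Ioc (0:ℝ) T, wt lam u * ‖A u‖₊) *
      (∫⁻ u in Ioc (0:ℝ) T, wt lam u * ‖B u‖₊) := by
  set F : ℝ → ENNReal := fun u => wt lam u * ‖A u‖₊ with hF
  set G : ℝ → ENNReal := fun u => wt lam u * ‖B u‖₊ with hG
  have hFm : AEMeasurable F volume := ((wt_meas lam).aemeasurable.mul hA.enorm)
  have hGm : AEMeasurable G volume := ((wt_meas lam).aemeasurable.mul hB.enorm)
  have hFsupp : ∀ y ∉ Ioc (0:ℝ) T, F y = 0 := by
    intro y hy; simp [hF, hAs y hy]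
  have hGsupp : ∀ y ∉ Ioc (0:ℝ) T, G y = 0 := by
    intro y hy; simp [hG, hBs y hy]
  -- pointwise bound
  have hpt : ∀ t : ℝ, wt lam t * ‖fc A B t‖₊ ≤ ∫⁻ τ, F τ * G (t - τ) := by
    intro t
    have h1 : (‖fc A B t‖₊ : ENNReal) ≤ ∫⁻ τ, ‖A τ‖₊ * ‖B (t - τ)‖₊ := by
      rw [fc_def]
      refine le_trans (enorm_integral_le_lintegral_enorm _) (le_of_eq ?_)
      congr 1
      funext τ
      rw [enorm_mul]; rfl
    calc wt lam t * ‖fc A B t‖₊ ≤ wt lam t * ∫⁻ τ, ‖A τ‖₊ * ‖B (t - τ)‖₊ :=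
          mul_le_mul_right h1 _
      _ = ∫⁻ τ, wt lam t * (‖A τ‖₊ * ‖B (t - τ)‖₊) :=
          (lintegral_const_mul' _ _ (wt_ne_top lam t)).symm
      _ = ∫⁻ τ, F τ * G (t - τ) := by
          refine lintegral_congr fun τ => ?_
          have : t = τ + (t - τ) := by ring
          rw [hF, hG]
          simp only []
          rw [this, wt_mul]
          ring_nf
  have hFfin : ∀ τ, F τ ≠ ⊤ := fun τ => ENNReal.mul_ne_top (wt_ne_top lam τ) ENNReal.coe_ne_top
  have h_unc : AEMeasurable (Function.uncurry fun t τ => F τ * G (t - τ))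
      (volume.prod volume) := by
    have hF2 : AEMeasurable (fun p : ℝ × ℝ => F p.2) (volume.prod volume) :=
      hFm.comp_quasiMeasurePreserving Measure.quasiMeasurePreserving_snd
    have hsubq : Measure.QuasiMeasurePreserving (fun p : ℝ × ℝ => p.1 - p.2)
        ((volume : Measure ℝ).prod volume) volume :=
      Measure.quasiMeasurePreserving_fst.comp
        (measurePreserving_sub_prod volume volume).quasiMeasurePreserving
    have hG2 : AEMeasurable (fun p : ℝ × ℝ => G (p.1 - p.2)) (volume.prod volume) :=
      hGm.comp_quasiMeasurePreserving hsubq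
    exact hF2.mul hG2
  have hsup : ∀ (H : ℝ → ENNReal), (∀ y ∉ Ioc (0:ℝ) T, H y = 0) →
      ∫⁻ u, H u = ∫⁻ u in Ioc (0:ℝ) T, H u := by
    intro H hH
    rw [← lintegral_indicator measurableSet_Ioc]
    refine lintegral_congr fun u => ?_
    by_cases hu : u ∈ Ioc (0:ℝ) T
    · rw [indicator_of_mem hu]
    · rw [indicator_of_notMem hu, hH u hu]
  calc ∫⁻ t in Ioc (0:ℝ) T, wt lam t * ‖fc A B t‖₊
      ≤ ∫⁻ t in Ioc (0:ℝ) T, ∫⁻ τ, F τ * G (t - τ) := lintegral_mono fun t => hpt t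
    _ ≤ ∫⁻ t, ∫⁻ τ, F τ * G (t - τ) := setLIntegral_le_lintegral _ _
    _ = ∫⁻ τ, ∫⁻ t, F τ * G (t - τ) := lintegral_lintegral_swap h_unc
    _ = ∫⁻ τ, F τ * ∫⁻ t, G (t - τ) := lintegral_congr fun τ =>
          lintegral_const_mul' _ _ (hFfin τ)
    _ = ∫⁻ τ, F τ * ∫⁻ t, G t := by
        refine lintegral_congr fun τ => ?_
        congr 1
        simp_rw [sub_eq_add_neg]
        exact lintegral_add_right_eq_self G (-τ)
    _ = (∫⁻ τ, F τ) * ∫⁻ t, G t := lintegral_mul_const'' _ hFm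
    _ = (∫⁻ u in Ioc (0:ℝ) T, F u) * ∫⁻ u in Ioc (0:ℝ) T, G u := by
        rw [hsup F hFsupp, hsup G hGsupp]


end CDAux


lemma ae_hasDerivAt_primitive_s2 {g : ℝ → ℝ} (hg : Integrable g) :
    ∀ᵐ x : ℝ, HasDerivAt (fun s => ∫ u in (0:ℝ)..s, g u) (g x) x := by
  filter_upwards [(Besicovitch.vitaliFamily (volume : Measure ℝ)).ae_tendsto_average_norm_sub
    hg.locallyIntegrable] with x hx
  have hav : Tendsto (fun r : ℝ => ⨍ y in Metric.closedBall x r, ‖g y - g x‖) (nhdsWithin 0 (Ioi 0))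
      (nhds 0) := hx.comp (Besicovitch.tendsto_filterAt volume x)
  rw [hasDerivAt_iff_isLittleO, Asymptotics.isLittleO_iff]
  intro ε hε
  have hev : ∀ᶠ r in nhdsWithin (0:ℝ) (Ioi 0),
      ⨍ y in Metric.closedBall x r, ‖g y - g x‖ < ε / 2 :=
    hav.eventually (gt_mem_nhds (by positivity))
  rw [eventually_nhdsWithin_iff] at hev
  rcases Metric.eventually_nhds_iff.1 hev with ⟨δ, hδpos, hδ⟩
  rw [Metric.eventually_nhds_iff]
  refine ⟨δ, hδpos, fun {y} hy => ?_⟩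
  rcases eq_or_ne y x with rfl | hne
  · simp
  set r : ℝ := |y - x| with hr
  have hrpos : 0 < r := abs_pos.2 (sub_ne_zero.2 hne)
  have hrδ : dist r 0 < δ := by
    rw [Real.dist_eq, sub_zero, abs_of_pos hrpos]
    rw [Real.dist_eq] at hy
    exact hy
  have havg : ⨍ u in Metric.closedBall x r, ‖g u - g x‖ < ε / 2 := hδ hrδ hrpos
  -- rewrite the difference as an interval integral
  have hii : ∀ a b : ℝ, IntervalIntegrable g volume a b := fun a b => hg.intervalIntegrable
  have h1 : (∫ u in (0:ℝ)..y, g u) - ∫ u in (0:ℝ)..x, g u = ∫ u in x..y, g u :=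
    intervalIntegral.integral_interval_sub_left (hii 0 y) (hii 0 x)
  have h2 : (y - x) • g x = ∫ u in x..y, g x := by
    rw [intervalIntegral.integral_const]
  have h3 : (∫ u in (0:ℝ)..y, g u) - (∫ u in (0:ℝ)..x, g u) - (y - x) • g x
      = ∫ u in x..y, (g u - g x) := by
    rw [h1, h2, ← intervalIntegral.integral_sub (hii x y)
      (intervalIntegrable_const (c := g x))]
  rw [h3]
  have h4 : ‖∫ u in x..y, (g u - g x)‖ ≤ ∫ u in Set.uIoc x y, ‖g u - g x‖ :=
    intervalIntegral.norm_integral_le_integral_norm_uIoc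
  have hB : IntegrableOn (fun u => ‖g u - g x‖) (Metric.closedBall x r) := by
    refine ((hg.integrableOn.sub ?_).norm)
    exact integrableOn_const measure_closedBall_lt_top.ne
  have hsub : Set.uIoc x y ⊆ Metric.closedBall x r := by
    intro u hu
    rw [Set.uIoc_eq_union] at hu
    simp only [Metric.mem_closedBall, Real.dist_eq]
    rcases hu with hu | hu
    · rw [Set.mem_Ioc] at hu
      rw [abs_of_nonneg (by linarith [hu.1.le]), hr]
      have : x ≤ y := by linarith [hu.1.le, hu.2]
      rw [abs_of_nonneg (by linarith)]
      linarith [hu.2]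
    · rw [Set.mem_Ioc] at hu
      rw [abs_of_nonpos (by linarith [hu.2]), hr]
      have : y ≤ x := by linarith [hu.1.le, hu.2]
      rw [abs_of_nonpos (by linarith)]
      linarith [hu.1]
  have h6 : ∫ u in Set.uIoc x y, ‖g u - g x‖ ≤ ∫ u in Metric.closedBall x r, ‖g u - g x‖ := by
    refine setIntegral_mono_set hB ?_ (HasSubset.Subset.eventuallyLE hsub)
    filter_upwards with u using norm_nonneg _
  have hμ : volume.real (Metric.closedBall x r) = 2 * r := by
    show (volume (Metric.closedBall x r)).toReal = 2 * r
    rw [Real.volume_closedBall, ENNReal.toReal_ofReal (by linarith)]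
  have h7 : ∫ u in Metric.closedBall x r, ‖g u - g x‖
      = (2 * r) * ⨍ u in Metric.closedBall x r, ‖g u - g x‖ := by
    rw [setAverage_eq, smul_eq_mul, ← mul_assoc, hμ, mul_inv_cancel₀ (by positivity), one_mul]
  have h8 : (2 * r) * ⨍ u in Metric.closedBall x r, ‖g u - g x‖ ≤ (2 * r) * (ε / 2) := by
    nlinarith [havg]
  calc ‖∫ u in x..y, (g u - g x)‖ ≤ ∫ u in Set.uIoc x y, ‖g u - g x‖ := h4
    _ ≤ ∫ u in Metric.closedBall x r, ‖g u - g x‖ := h6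
    _ = (2 * r) * ⨍ u in Metric.closedBall x r, ‖g u - g x‖ := h7
    _ ≤ (2 * r) * (ε / 2) := h8
    _ = ε * r := by ring
    _ = ε * ‖y - x‖ := by rw [hr, Real.norm_eq_abs]

namespace CDAux

lemma fc_lin2_at {A B C : ℝ → ℝ} {b c t : ℝ}
    (h1 : ConvolutionExistsAt A B t mulL volume)
    (h2 : ConvolutionExistsAt A C t mulL volume) :
    fc A (fun u => b * B u + c * C u) t = b * fc A B t + c * fc A C t := by
  have h1' : Integrable (fun τ => A τ * B (t - τ)) :=
    h1.congr (by filter_upwards with τ; simp [ContinuousLinearMap.mul_apply'])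
  have h2' : Integrable (fun τ => A τ * C (t - τ)) :=
    h2.congr (by filter_upwards with τ; simp [ContinuousLinearMap.mul_apply'])
  rw [fc_def, fc_def, fc_def, ← integral_const_mul b, ← integral_const_mul c,
    ← integral_add (h1'.const_mul b) (h2'.const_mul c)]
  refine integral_congr_ae (Eventually.of_forall fun τ => by ring)

lemma resE {T n : ℝ} {hn l : ℝ → ℝ}
    (hres' : ∀ᵐ t ∂(volume.restrict (Ioc (0:ℝ) T)),
      hn t + n * conv hn l t = n * l t) :
    ET T hn =ᵐ[volume.restrict (Ioc (0:ℝ) T)]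
      fun t => n * ET T l t - n * fc (ET T hn) (ET T l) t := by
  filter_upwards [hres', ae_restrict_mem measurableSet_Ioc] with t h1 h2
  have hIcc : t ∈ Icc (0:ℝ) T := ⟨h2.1.le, h2.2⟩
  simp only [ET_eq T h2, ← conv_eq_fc hIcc]
  linarith

lemma hveqE {T μ : ℝ} {l vv ff : ℝ → ℝ}
    (hveq : ∀ᵐ t ∂(volume.restrict (Ioo (0:ℝ) T)),
      vv t + μ * conv l vv t = conv l ff t) :
    ∀ᵐ t ∂(volume.restrict (Ioc (0:ℝ) T)),
      ET T vv t + μ * fc (ET T l) (ET T vv) t = fc (ET T l) (ET T ff) t := by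
  have h0 : ∀ᵐ t : ℝ, t ∈ Ioo (0:ℝ) T → (vv t + μ * conv l vv t = conv l ff t) :=
    (ae_restrict_iff' measurableSet_Ioo).1 hveq
  refine (ae_restrict_iff' measurableSet_Ioc).2 ?_
  filter_upwards [h0, ae_ne T] with t h1 hne h2
  have hIoo : t ∈ Ioo (0:ℝ) T := ⟨h2.1, lt_of_le_of_ne h2.2 hne⟩
  have hIcc : t ∈ Icc (0:ℝ) T := ⟨h2.1.le, h2.2⟩
  simp only [ET_eq T h2, ← conv_eq_fc hIcc]
  exact h1 hIoo

lemma stepA {T : ℝ} {k l hn : ℝ → ℝ} {n : ℝ} (hn1 : 1 ≤ n)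
    (hkI : IntegrableOn k (Ioc (0:ℝ) T)) (hlI : IntegrableOn l (Ioc (0:ℝ) T))
    (hhI : IntegrableOn hn (Ioc (0:ℝ) T))
    (hkl : ∀ t, 0 < t → conv k l t = 1)
    (hres' : ∀ᵐ t ∂(volume.restrict (Ioc (0:ℝ) T)),
      hn t + n * conv hn l t = n * l t) :
    fc (ET T k) (ET T hn) =ᵐ[volume.restrict (Ioc (0:ℝ) T)]
      fun s => n - n * ∫ u in (0:ℝ)..s, ET T hn u := by
  set K := ET T k with hK
  set L := ET T l with hL
  set H := ET T hn with hH
  have hKc : Caus K := ET_caus T k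
  have hLc : Caus L := ET_caus T l
  have hHc : Caus H := ET_caus T hn
  have hKs : ∀ y ∉ Ioc (0:ℝ) T, K y = 0 := ET_suppT T k
  have IK : Integrable K := ET_integrable T hkI
  have IL : Integrable L := ET_integrable T hlI
  have IH : Integrable H := ET_integrable T hhI
  have IHL : Integrable (fc H L) := IH.integrable_convolution mulL IL
  have hres2 := resE hres'
  -- (K ⋆ L) = 1 on (0, T]
  have klE : ∀ s ∈ Ioc (0:ℝ) T, fc K L s = 1 := by
    intro s hs
    rw [← conv_eq_fc ⟨hs.1.le, hs.2⟩]
    exact hkl s hs.1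
  -- (K ⋆ L) ⋆ H evaluates to the primitive of H
  have hKLH : ∀ t ∈ Ioc (0:ℝ) T, fc (fc K L) H t = ∫ u in (0:ℝ)..t, H u := by
    intro t ht
    rw [fc_def]
    have : ∫ τ, fc K L τ * H (t - τ) = ∫ τ, (Ioc (0:ℝ) t).indicator (fun τ => H (t - τ)) τ := by
      refine integral_congr_ae ?_
      filter_upwards [ae_ne t] with τ hne
      by_cases hτ : τ ∈ Ioc (0:ℝ) t
      · rw [indicator_of_mem hτ, klE τ ⟨hτ.1, hτ.2.trans ht.2⟩, one_mul]
      · rw [indicator_of_notMem hτ]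
        rcases le_or_gt τ 0 with h | h
        · rw [fc_causal hKc hLc τ h, zero_mul]
        · have : t < τ := by
            by_contra hc
            exact hτ ⟨h, le_of_not_gt hc⟩
          rw [hHc (t - τ) (by linarith), mul_zero]
    rw [this, integral_indicator measurableSet_Ioc,
      ← intervalIntegral.integral_of_le ht.1.le]
    have := intervalIntegral.integral_comp_sub_left (a := 0) (b := t) H t
    simp only [sub_self, sub_zero] at this
    rw [this]
  -- main a.e. computation
  have hcea1 : ∀ᵐ t ∂(volume.restrict (Ioc (0:ℝ) T)),
      ConvolutionExistsAt K L t mulL volume :=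
    ae_restrict_of_ae (IK.ae_convolution_exists mulL IL)
  have hcea2 : ∀ᵐ t ∂(volume.restrict (Ioc (0:ℝ) T)),
      ConvolutionExistsAt K (fc H L) t mulL volume :=
    ae_restrict_of_ae (IK.ae_convolution_exists mulL IHL)
  have hassoc : ∀ᵐ t ∂(volume.restrict (Ioc (0:ℝ) T)),
      fc (fc K L) H t = fc K (fc L H) t :=
    ae_restrict_of_ae (fc_assoc_ae IK IL IH)
  filter_upwards [hcea1, hcea2, hassoc, ae_restrict_mem measurableSet_Ioc]
    with t h1 h2 h3 h4
  have hsub : fc K H t = fc K (fun u => n * L u + (-n) * fc H L u) t := by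
    refine fc_congr_right hKs hHc ?_ ?_ h4.2
    · intro y hy
      show n * L y + (-n) * fc H L y = 0
      rw [hLc y hy, fc_causal hHc hLc y hy]
      ring
    · refine hres2.mono fun u hu => ?_
      have hu' : ET T hn u = n * ET T l u - n * fc (ET T hn) (ET T l) u := hu
      show ET T hn u = n * ET T l u + (-n) * fc (ET T hn) (ET T l) u
      linarith
  rw [hsub, fc_lin2_at h1 h2]
  have hcomm : fc H L = fc L H := fc_comm hHc hLc
  rw [klE t h4, hcomm, ← h3, hKLH t h4]
  ring

lemma norm_primitive_le {H : ℝ → ℝ} (IH : Integrable H) (s : ℝ) :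
    |∫ u in (0:ℝ)..s, H u| ≤ ∫ u, |H u| := by
  rw [← Real.norm_eq_abs]
  refine le_trans intervalIntegral.norm_integral_le_integral_norm_uIoc ?_
  refine setIntegral_le_integral IH.norm ?_
  filter_upwards with u using norm_nonneg _

lemma stepB {T : ℝ} {k hn vnn : ℝ → ℝ} {n : ℝ}
    (hhI : IntegrableOn hn (Ioc (0:ℝ) T)) (hvI : IntegrableOn vnn (Ioc (0:ℝ) T))
    (hKH : fc (ET T k) (ET T hn) =ᵐ[volume.restrict (Ioc (0:ℝ) T)]
      fun s => n - n * ∫ u in (0:ℝ)..s, ET T hn u) :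
    ∀ t ∈ Icc (0:ℝ) T, conv (conv k hn) vnn t =
      n * (∫ u in (0:ℝ)..t, ET T vnn u) -
        n * ∫ u in (0:ℝ)..t, fc (ET T hn) (ET T vnn) u := by
  intro t ht
  set H := ET T hn with hH
  set Vn := ET T vnn with hVn
  have hHc : Caus H := ET_caus T hn
  have hVnc : Caus Vn := ET_caus T vnn
  have IH : Integrable H := ET_integrable T hhI
  have IVn : Integrable Vn := ET_integrable T hvI
  have IG : Integrable (fc H Vn) := IH.integrable_convolution mulL IVn
  set W : ℝ → ℝ := ET T (fun _ => (1:ℝ)) with hW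
  have hWc : Caus W := ET_caus T _
  have IW : Integrable W := ET_integrable T
    (integrableOn_const (C := (1:ℝ)) measure_Ioc_lt_top.ne)
  have hWb : ∀ x, |W x| ≤ 1 := by
    intro x
    by_cases hx : x ∈ Ioc (0:ℝ) T
    · rw [hW, ET_eq T hx]; norm_num
    · rw [hW, ET_suppT T _ x hx]; norm_num
  -- primitive of H as a convolution with the window
  have hWH : ∀ s ∈ Icc (0:ℝ) T, fc W H s = ∫ u in (0:ℝ)..s, H u := by
    intro s hs
    rw [fc_eq_conv hWc hHc hs.1, conv_eq_Ioc _ _ hs.1,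
      ← intervalIntegral.integral_of_le hs.1]
    refine intervalIntegral.integral_congr_ae ?_
    have : ∀ᵐ u : ℝ, u ∈ Set.uIoc (0:ℝ) s → W (s - u) * H u = H u := by
      filter_upwards [ae_ne s] with u hne hu
      rw [Set.uIoc_of_le hs.1] at hu
      have : s - u ∈ Ioc (0:ℝ) T :=
        ⟨sub_pos.2 (lt_of_le_of_ne hu.2 hne), by linarith [hu.1, hs.2]⟩
      rw [hW, ET_eq T this, one_mul]
    exact this
  -- continuity and boundedness of the primitive of H
  have hPcont : Continuous fun s : ℝ => ∫ u in (0:ℝ)..s, H u :=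
    intervalIntegral.continuous_primitive (fun a b => IH.intervalIntegrable) 0
  -- step b1/b2: replace the kernel
  calc conv (conv k hn) vnn t
      = ∫ τ in Ioc (0:ℝ) t, fc (ET T k) H (t - τ) * Vn τ := by
        rw [conv_eq_Ioc _ _ ht.1]
        refine setIntegral_congr_fun measurableSet_Ioc fun τ hτ => ?_
        have hτT : τ ∈ Ioc (0:ℝ) T := ⟨hτ.1, hτ.2.trans ht.2⟩
        have hsub : t - τ ∈ Icc (0:ℝ) T := ⟨by linarith [hτ.2], by linarith [hτ.1, ht.2]⟩
        rw [conv_eq_fc hsub, hVn, ET_eq T hτT]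
    _ = ∫ τ in Ioc (0:ℝ) t, (n - n * ∫ u in (0:ℝ)..(t - τ), H u) * Vn τ :=
        setIntegral_shift_congr hKH Vn ht.2
    _ = ∫ τ in Ioc (0:ℝ) t, (n * Vn τ - n * ((∫ u in (0:ℝ)..(t - τ), H u) * Vn τ)) := by
        refine setIntegral_congr_fun measurableSet_Ioc fun τ _ => ?_
        ring
    _ = n * (∫ τ in Ioc (0:ℝ) t, Vn τ) -
        n * ∫ τ in Ioc (0:ℝ) t, (∫ u in (0:ℝ)..(t - τ), H u) * Vn τ := by
        have i1 : IntegrableOn (fun τ => n * Vn τ) (Ioc (0:ℝ) t) :=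
          (IVn.integrableOn).const_mul n
        have i2 : IntegrableOn (fun τ => (∫ u in (0:ℝ)..(t - τ), H u) * Vn τ) (Ioc (0:ℝ) t) := by
          refine Integrable.bdd_mul (c := ∫ u, |H u|) IVn.integrableOn ?_ ?_
          · exact (hPcont.comp (continuous_const.sub continuous_id)).aestronglyMeasurable
          · exact Eventually.of_forall fun τ => by
              simpa [Real.norm_eq_abs] using norm_primitive_le IH (t - τ)
        rw [← integral_const_mul, ← integral_const_mul, ← integral_sub i1 (i2.const_mul n)]
    _ = n * (∫ u in (0:ℝ)..t, Vn u) - n * ∫ u in (0:ℝ)..t, fc H Vn u := by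
        rw [← intervalIntegral.integral_of_le ht.1]
        congr 1
        congr 1
        -- the associativity step
        have e1 : ∫ τ in Ioc (0:ℝ) t, (∫ u in (0:ℝ)..(t - τ), H u) * Vn τ
            = conv (fc W H) Vn t := by
          rw [conv_eq_Ioc _ _ ht.1]
          refine setIntegral_congr_fun measurableSet_Ioc fun τ hτ => ?_
          have hsub : t - τ ∈ Icc (0:ℝ) T := ⟨by linarith [hτ.2], by linarith [hτ.1, ht.2]⟩
          rw [hWH _ hsub]
        have e2 : conv (fc W H) Vn t = fc W (fc H Vn) t := by
          rw [← fc_eq_conv (fc_causal hWc hHc) hVnc ht.1]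
          exact fc_assoc_of_bdd hWb IW IH IVn t
        have e3 : fc W (fc H Vn) t = ∫ u in Ioc (0:ℝ) t, fc H Vn u := by
          rw [fc_eq_conv hWc (fc_causal hHc hVnc) ht.1, conv_eq_Ioc _ _ ht.1]
          refine setIntegral_congr_ae measurableSet_Ioc ?_
          filter_upwards [ae_ne t] with τ hne hτ
          have : t - τ ∈ Ioc (0:ℝ) T :=
            ⟨sub_pos.2 (lt_of_le_of_ne hτ.2 hne), by linarith [hτ.1, ht.2]⟩
          rw [hW, ET_eq T this, one_mul]
        rw [e1, e2, e3, ← intervalIntegral.integral_of_le ht.1]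

lemma stepC {T μ : ℝ} {k hn vnn fnn : ℝ → ℝ} {n : ℝ}
    (hhI : IntegrableOn hn (Ioc (0:ℝ) T)) (hvI : IntegrableOn vnn (Ioc (0:ℝ) T))
    (hΦ : ∀ t ∈ Icc (0:ℝ) T, conv (conv k hn) vnn t =
      n * (∫ u in (0:ℝ)..t, ET T vnn u) -
        n * ∫ u in (0:ℝ)..t, fc (ET T hn) (ET T vnn) u)
    (hde : ∀ᵐ t ∂(volume.restrict (Ioo (0:ℝ) T)),
      ∃ d, HasDerivAt (conv (conv k hn) vnn) d t ∧ d + μ * vnn t = fnn t) :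
    (fun t => n * ET T vnn t - n * fc (ET T hn) (ET T vnn) t + μ * ET T vnn t)
      =ᵐ[volume.restrict (Ioc (0:ℝ) T)] ET T fnn := by
  have IH : Integrable (ET T hn) := ET_integrable T hhI
  have IVn : Integrable (ET T vnn) := ET_integrable T hvI
  have IG : Integrable (fc (ET T hn) (ET T vnn)) := IH.integrable_convolution mulL IVn
  have hd1 : ∀ᵐ x : ℝ, HasDerivAt
      (fun s => n * (∫ u in (0:ℝ)..s, ET T vnn u) -
        n * ∫ u in (0:ℝ)..s, fc (ET T hn) (ET T vnn) u)
      (n * ET T vnn x - n * fc (ET T hn) (ET T vnn) x) x := by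
    filter_upwards [ae_hasDerivAt_primitive_s2 IVn, ae_hasDerivAt_primitive_s2 IG] with x h1 h2
    exact (h1.const_mul n).sub (h2.const_mul n)
  have hde' := (ae_restrict_iff' measurableSet_Ioo).1 hde
  refine (ae_restrict_iff' measurableSet_Ioc).2 ?_
  filter_upwards [hde', hd1, ae_ne T] with t h1 h2 hne h3
  have hIoo : t ∈ Ioo (0:ℝ) T := ⟨h3.1, lt_of_le_of_ne h3.2 hne⟩
  obtain ⟨d, hdc, hdeq⟩ := h1 hIoo
  have hev : (fun s => n * (∫ u in (0:ℝ)..s, ET T vnn u) -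
      n * ∫ u in (0:ℝ)..s, fc (ET T hn) (ET T vnn) u)
      =ᶠ[nhds t] conv (conv k hn) vnn := by
    filter_upwards [Ioo_mem_nhds hIoo.1 hIoo.2] with s hs
    exact (hΦ s ⟨hs.1.le, hs.2.le⟩).symm
  have hdc' := hdc.congr_of_eventuallyEq hev
  have huniq : d = n * ET T vnn t - n * fc (ET T hn) (ET T vnn) t := hdc'.unique h2
  show n * ET T vnn t - n * fc (ET T hn) (ET T vnn) t + μ * ET T vnn t = ET T fnn t
  have e1 : ET T vnn t = vnn t := ET_eq T h3
  have e2 : ET T fnn t = fnn t := ET_eq T h3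
  rw [e1] at huniq
  rw [e1, e2]
  linarith [hdeq, huniq]

lemma stepD {T μ : ℝ} {l hn vnn fnn vv ff : ℝ → ℝ} {n : ℝ} (hn1 : 1 ≤ n)
    (hlI : IntegrableOn l (Ioc (0:ℝ) T)) (hhI : IntegrableOn hn (Ioc (0:ℝ) T))
    (hvI : IntegrableOn vnn (Ioc (0:ℝ) T)) (hfI : IntegrableOn fnn (Ioc (0:ℝ) T))
    (hvvI : IntegrableOn vv (Ioc (0:ℝ) T)) (hffI : IntegrableOn ff (Ioc (0:ℝ) T))
    (resE' : ET T hn =ᵐ[volume.restrict (Ioc (0:ℝ) T)]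
      fun t => n * ET T l t - n * fc (ET T hn) (ET T l) t)
    (sFn : (fun t => n * ET T vnn t - n * fc (ET T hn) (ET T vnn) t + μ * ET T vnn t)
      =ᵐ[volume.restrict (Ioc (0:ℝ) T)] ET T fnn)
    (sV : ∀ᵐ t ∂(volume.restrict (Ioc (0:ℝ) T)),
      ET T vv t + μ * fc (ET T l) (ET T vv) t = fc (ET T l) (ET T ff) t) :
    ∀ᵐ t ∂(volume.restrict (Ioc (0:ℝ) T)),
      ET T vnn t - ET T vv t =
        fc (ET T l) (fun u => ET T fnn u - ET T ff u) t
        - μ * fc (ET T l) (fun u => ET T vnn u - ET T vv u) t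
        + (1/n) * (ET T fnn t - μ * ET T vnn t) := by
  have hn0 : n ≠ 0 := by linarith
  set L := ET T l with hLdef
  set H := ET T hn with hHdef
  set Vn := ET T vnn with hVndef
  set Fn := ET T fnn with hFndef
  set V := ET T vv with hVdef
  set F := ET T ff with hFdef
  have hLc : Caus L := ET_caus T l
  have hHc : Caus H := ET_caus T hn
  have hVnc : Caus Vn := ET_caus T vnn
  have hFnc : Caus Fn := ET_caus T fnn
  have hLs : ∀ y ∉ Ioc (0:ℝ) T, L y = 0 := ET_suppT T l
  have hVns : ∀ y ∉ Ioc (0:ℝ) T, Vn y = 0 := ET_suppT T vnn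
  have IL : Integrable L := ET_integrable T hlI
  have IH : Integrable H := ET_integrable T hhI
  have IVn : Integrable Vn := ET_integrable T hvI
  have IFn : Integrable Fn := ET_integrable T hfI
  have IV : Integrable V := ET_integrable T hvvI
  have IF : Integrable F := ET_integrable T hffI
  have IG : Integrable (fc H Vn) := IH.integrable_convolution mulL IVn
  -- X₁ agrees a.e. with Fn
  set X₁ : ℝ → ℝ := fun u => (n + μ) * Vn u + (-n) * fc H Vn u with hX₁def
  have hX₁Fn : X₁ =ᵐ[volume.restrict (Ioc (0:ℝ) T)] Fn := by
    have e : X₁ =ᵐ[volume.restrict (Ioc (0:ℝ) T)]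
        (fun t => n * Vn t - n * fc H Vn t + μ * Vn t) := by
      filter_upwards with u
      show (n + μ) * Vn u + (-n) * fc H Vn u = n * Vn u - n * fc H Vn u + μ * Vn u
      ring
    exact e.trans sFn
  have hX₁c : Caus X₁ := by
    intro y hy
    show (n + μ) * Vn y + (-n) * fc H Vn y = 0
    rw [hVnc y hy, fc_causal hHc hVnc y hy]
    ring
  have hq1' : ∀ t ≤ T, fc L X₁ t = fc L Fn t := fun t ht =>
    fc_congr_right hLs hX₁c hFnc hX₁Fn ht
  -- Y agrees a.e. with fc H L
  set Y : ℝ → ℝ := fun u => 1 * L u + (-(1/n)) * H u with hYdef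
  have hYc : Caus Y := by
    intro y hy
    show 1 * L y + (-(1/n)) * H y = 0
    rw [hLc y hy, hHc y hy]
    ring
  have hHLY : fc H L =ᵐ[volume.restrict (Ioc (0:ℝ) T)] Y := by
    filter_upwards [resE'] with t h
    have h' : H t = n * L t - n * fc H L t := h
    show fc H L t = 1 * L t + (-(1/n)) * H t
    field_simp
    linear_combination h'
  have hq3' : ∀ t ≤ T, fc Vn (fc H L) t = fc Vn Y t := fun t ht =>
    fc_congr_right hVns (fc_causal hHc hLc) hYc hHLY ht
  -- function-level commutations
  have hcLH : fc L H = fc H L := fc_comm hLc hHc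
  have hcHLVn : fc (fc H L) Vn = fc Vn (fc H L) := fc_comm (fc_causal hHc hLc) hVnc
  have hcVnL : fc Vn L = fc L Vn := fc_comm hVnc hLc
  have hcVnH : fc Vn H = fc H Vn := fc_comm hVnc hHc
  -- a.e. facts
  have hassoc : ∀ᵐ t ∂(volume.restrict (Ioc (0:ℝ) T)),
      fc (fc L H) Vn t = fc L (fc H Vn) t :=
    ae_restrict_of_ae (fc_assoc_ae IL IH IVn)
  have cLVn : ∀ᵐ t ∂(volume.restrict (Ioc (0:ℝ) T)),
      ConvolutionExistsAt L Vn t mulL volume :=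
    ae_restrict_of_ae (IL.ae_convolution_exists mulL IVn)
  have cLG : ∀ᵐ t ∂(volume.restrict (Ioc (0:ℝ) T)),
      ConvolutionExistsAt L (fc H Vn) t mulL volume :=
    ae_restrict_of_ae (IL.ae_convolution_exists mulL IG)
  have cVnL : ∀ᵐ t ∂(volume.restrict (Ioc (0:ℝ) T)),
      ConvolutionExistsAt Vn L t mulL volume :=
    ae_restrict_of_ae (IVn.ae_convolution_exists mulL IL)
  have cVnH : ∀ᵐ t ∂(volume.restrict (Ioc (0:ℝ) T)),
      ConvolutionExistsAt Vn H t mulL volume :=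
    ae_restrict_of_ae (IVn.ae_convolution_exists mulL IH)
  have cLFn : ∀ᵐ t ∂(volume.restrict (Ioc (0:ℝ) T)),
      ConvolutionExistsAt L Fn t mulL volume :=
    ae_restrict_of_ae (IL.ae_convolution_exists mulL IFn)
  have cLF : ∀ᵐ t ∂(volume.restrict (Ioc (0:ℝ) T)),
      ConvolutionExistsAt L F t mulL volume :=
    ae_restrict_of_ae (IL.ae_convolution_exists mulL IF)
  have cLV : ∀ᵐ t ∂(volume.restrict (Ioc (0:ℝ) T)),
      ConvolutionExistsAt L V t mulL volume :=
    ae_restrict_of_ae (IL.ae_convolution_exists mulL IV)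
  filter_upwards [sFn, sV, hassoc, cLVn, cLG, cVnL, cVnH, cLFn, cLF, cLV,
    ae_restrict_mem measurableSet_Ioc] with t f1 f2 f5 f3 f4 f6 f7 f11 f9 f10 h0
  have q4 : n * Vn t - n * fc H Vn t + μ * Vn t = Fn t := f1
  have q5 : V t + μ * fc L V t = fc L F t := f2
  have q1 : fc L Fn t = (n + μ) * fc L Vn t + (-n) * fc L (fc H Vn) t := by
    rw [← hq1' t h0.2, hX₁def]
    exact fc_lin2_at f3 f4
  have q2 : fc Vn (fc H L) t = fc L (fc H Vn) t := by
    rw [hcLH, hcHLVn] at f5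
    exact f5
  have q3 : fc Vn (fc H L) t = 1 * fc L Vn t + (-(1/n)) * fc H Vn t := by
    rw [hq3' t h0.2, hYdef, fc_lin2_at f6 f7, hcVnL, hcVnH]
  have q3' : n * fc Vn (fc H L) t = n * fc L Vn t - fc H Vn t := by
    rw [q3]
    field_simp
    ring
  have q6 : fc L (fun u => Fn u - F u) t = fc L Fn t - fc L F t := fc_sub_at f11 f9
  have q7 : fc L (fun u => Vn u - V u) t = fc L Vn t - fc L V t := fc_sub_at f3 f10
  have goal' : n * (Vn t - V t) = n * fc L (fun u => Fn u - F u) t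
      - n * μ * fc L (fun u => Vn u - V u) t + (Fn t - μ * Vn t) := by
    linear_combination (-n) * q1 + (-(n^2)) * q2 + n * q3' + q4 + (-n) * q5 +
      (-n) * q6 + (n * μ) * q7
  show Vn t - V t = fc L (fun u => Fn u - F u) t
      - μ * fc L (fun u => Vn u - V u) t + (1/n) * (Fn t - μ * Vn t)
  field_simp
  linear_combination goal'

section StepG
variable {T lam μ : ℝ} {l vnn fnn vv ff : ℝ → ℝ} {n : ℝ}

lemma stepG1 (hμ : 0 < μ) (hlam : 0 ≤ lam) (hn1 : 1 ≤ n)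
    (hlI : IntegrableOn l (Ioc (0:ℝ) T)) (hvI : IntegrableOn vnn (Ioc (0:ℝ) T))
    (hfI : IntegrableOn fnn (Ioc (0:ℝ) T)) (hvvI : IntegrableOn vv (Ioc (0:ℝ) T))
    (hffI : IntegrableOn ff (Ioc (0:ℝ) T))
    (sW : ∀ᵐ t ∂(volume.restrict (Ioc (0:ℝ) T)),
      ET T vnn t - ET T vv t =
        fc (ET T l) (fun u => ET T fnn u - ET T ff u) t
        - μ * fc (ET T l) (fun u => ET T vnn u - ET T vv u) t
        + (1/n) * (ET T fnn t - μ * ET T vnn t))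
    (hc_half : ENNReal.ofReal μ * (∫⁻ u in Ioc (0:ℝ) T, wt lam u * ‖ET T l u‖₊) ≤
      ENNReal.ofReal (1/2))
    (hn4 : ENNReal.ofReal (1/n) * ENNReal.ofReal μ ≤ ENNReal.ofReal (1/4)) :
    (∫⁻ t in Ioc (0:ℝ) T, wt lam t * ‖ET T vnn t - ET T vv t‖₊) ≤
      ENNReal.ofReal 4 *
        ((∫⁻ u in Ioc (0:ℝ) T, wt lam u * ‖ET T l u‖₊) *
          (∫⁻ t in Ioc (0:ℝ) T, wt lam t * ‖ET T fnn t - ET T ff t‖₊) +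
         ENNReal.ofReal (1/n) *
          ((∫⁻ t in Ioc (0:ℝ) T, wt lam t * ‖ET T fnn t‖₊) +
            ENNReal.ofReal μ * ∫⁻ t in Ioc (0:ℝ) T, wt lam t * ‖ET T vv t‖₊)) := by
  have hn0 : (0:ℝ) < n := by linarith
  set L := ET T l with hLdef
  set Vn := ET T vnn with hVndef
  set Fn := ET T fnn with hFndef
  set V := ET T vv with hVdef
  set F := ET T ff with hFdef
  set Wn : ℝ → ℝ := fun u => Vn u - V u with hWndef
  set Gn : ℝ → ℝ := fun u => Fn u - F u with hGndef
  set a : ENNReal := ENNReal.ofReal μ with hadef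
  set bn : ENNReal := ENNReal.ofReal (1/n) with hbndef
  have IL : Integrable L := ET_integrable T hlI
  have IVn : Integrable Vn := ET_integrable T hvI
  have IFn : Integrable Fn := ET_integrable T hfI
  have IV : Integrable V := ET_integrable T hvvI
  have IF : Integrable F := ET_integrable T hffI
  have IWn : Integrable Wn := IVn.sub IV
  have IGn : Integrable Gn := IFn.sub IF
  have ILWn : Integrable (fc L Wn) := IL.integrable_convolution mulL IWn
  have ILGn : Integrable (fc L Gn) := IL.integrable_convolution mulL IGn
  -- notation for the weighted seminorm
  set J : (ℝ → ℝ) → ENNReal := fun p => ∫⁻ t in Ioc (0:ℝ) T, wt lam t * ‖p t‖₊ with hJdef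
  have hmono_pt : ∀ᵐ t ∂(volume.restrict (Ioc (0:ℝ) T)),
      wt lam t * ‖Wn t‖₊ ≤
        wt lam t * ‖fc L Gn t‖₊ +
          (a * (wt lam t * ‖fc L Wn t‖₊) +
            bn * (wt lam t * ‖Fn t‖₊ + a * (wt lam t * ‖Vn t‖₊))) := by
    filter_upwards [sW] with t ht
    have hreal : |Wn t| ≤ |fc L Gn t| + (μ * |fc L Wn t| + (1/n) * (|Fn t| + μ * |Vn t|)) := by
      have h1 : Wn t = fc L Gn t - μ * fc L Wn t + (1/n) * (Fn t - μ * Vn t) := ht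
      rw [h1]
      have t1 : |fc L Gn t - μ * fc L Wn t + (1/n) * (Fn t - μ * Vn t)| ≤
          |fc L Gn t - μ * fc L Wn t| + |(1/n) * (Fn t - μ * Vn t)| := abs_add_le _ _
      have t2 : |fc L Gn t - μ * fc L Wn t| ≤ |fc L Gn t| + |μ * fc L Wn t| := abs_sub _ _
      have t3 : |μ * fc L Wn t| = μ * |fc L Wn t| := by
        rw [abs_mul, abs_of_pos hμ]
      have t4 : |(1/n) * (Fn t - μ * Vn t)| = (1/n) * |Fn t - μ * Vn t| := by
        rw [abs_mul, abs_of_pos (by positivity)]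
      have t5 : |Fn t - μ * Vn t| ≤ |Fn t| + μ * |Vn t| := by
        refine le_trans (abs_sub _ _) ?_
        rw [abs_mul, abs_of_pos hμ]
      have t6 : (1/n) * |Fn t - μ * Vn t| ≤ (1/n) * (|Fn t| + μ * |Vn t|) := by
        apply mul_le_mul_of_nonneg_left t5 (by positivity)
      linarith
    calc wt lam t * ‖Wn t‖₊
        = wt lam t * ENNReal.ofReal |Wn t| := by rw [CDAux.real_ennnorm_eq_ofReal_abs]
      _ ≤ wt lam t * ENNReal.ofReal
            (|fc L Gn t| + (μ * |fc L Wn t| + (1/n) * (|Fn t| + μ * |Vn t|))) :=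
          mul_le_mul_right (ENNReal.ofReal_le_ofReal hreal) _
      _ = wt lam t * ‖fc L Gn t‖₊ +
          (a * (wt lam t * ‖fc L Wn t‖₊) +
            bn * (wt lam t * ‖Fn t‖₊ + a * (wt lam t * ‖Vn t‖₊))) := by
          rw [ENNReal.ofReal_add (by positivity) (by positivity),
            ENNReal.ofReal_add (by positivity) (by positivity),
            ENNReal.ofReal_mul hμ.le, ENNReal.ofReal_mul (by positivity : (0:ℝ) ≤ 1/n),
            ENNReal.ofReal_add (by positivity) (by positivity),
            ENNReal.ofReal_mul hμ.le,
            ← CDAux.real_ennnorm_eq_ofReal_abs, ← CDAux.real_ennnorm_eq_ofReal_abs,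
            ← CDAux.real_ennnorm_eq_ofReal_abs, ← CDAux.real_ennnorm_eq_ofReal_abs]
          rw [← hadef, ← hbndef]
          ring
  -- measurability helpers
  have am : ∀ (p : ℝ → ℝ), AEStronglyMeasurable p volume →
      AEMeasurable (fun t => wt lam t * ‖p t‖₊) (volume.restrict (Ioc (0:ℝ) T)) :=
    fun p hp => ((wt_meas lam).aemeasurable.mul hp.enorm).restrict
  have amLGn := am _ ILGn.aestronglyMeasurable
  have amLWn := am _ ILWn.aestronglyMeasurable
  have amFn := am _ IFn.aestronglyMeasurable
  have amVn := am _ IVn.aestronglyMeasurable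
  have amV := am _ IV.aestronglyMeasurable
  have amWn := am _ IWn.aestronglyMeasurable
  -- step: integrate
  have g2 : J Wn ≤ J (fc L Gn) + (a * J (fc L Wn) + bn * (J Fn + a * J Vn)) := by
    refine le_trans (lintegral_mono_ae hmono_pt) ?_
    rw [lintegral_add_left' amLGn]
    refine add_le_add_right ?_ _
    rw [lintegral_add_left' (amLWn.const_mul a)]
    rw [lintegral_const_mul' _ _ (by simp [hadef])]
    refine add_le_add_right ?_ _
    rw [lintegral_const_mul' _ _ (by simp [hbndef])]
    refine mul_le_mul_right ?_ _
    rw [lintegral_add_left' amFn]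
    refine add_le_add_right ?_ _
    rw [lintegral_const_mul' _ _ (by simp [hadef])]
  -- step: wbound
  have hLs : ∀ y ∉ Ioc (0:ℝ) T, L y = 0 := ET_suppT T l
  have hWns : ∀ y ∉ Ioc (0:ℝ) T, Wn y = 0 := by
    intro y hy
    have e1 : Vn y = 0 := ET_suppT T vnn y hy
    have e2 : V y = 0 := ET_suppT T vv y hy
    show Vn y - V y = 0
    rw [e1, e2, sub_zero]
  have hGns : ∀ y ∉ Ioc (0:ℝ) T, Gn y = 0 := by
    intro y hy
    have e1 : Fn y = 0 := ET_suppT T fnn y hy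
    have e2 : F y = 0 := ET_suppT T ff y hy
    show Fn y - F y = 0
    rw [e1, e2, sub_zero]
  have g3a : J (fc L Gn) ≤ J L * J Gn :=
    wbound IL.aestronglyMeasurable IGn.aestronglyMeasurable hLs hGns
  have g3b : J (fc L Wn) ≤ J L * J Wn :=
    wbound IL.aestronglyMeasurable IWn.aestronglyMeasurable hLs hWns
  -- step: J Vn ≤ J Wn + J V
  have g4 : J Vn ≤ J Wn + J V := by
    have : ∀ᵐ t ∂(volume.restrict (Ioc (0:ℝ) T)),
        wt lam t * ‖Vn t‖₊ ≤ wt lam t * ‖Wn t‖₊ + wt lam t * ‖V t‖₊ := by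
      filter_upwards with t
      have : (‖Vn t‖₊ : ENNReal) ≤ ‖Wn t‖₊ + ‖V t‖₊ := by
        have : Vn t = Wn t + V t := by show Vn t = (Vn t - V t) + V t; ring
        rw [this]
        exact_mod_cast nnnorm_add_le _ _
      calc wt lam t * ‖Vn t‖₊ ≤ wt lam t * (‖Wn t‖₊ + ‖V t‖₊) := mul_le_mul_right this _
        _ = wt lam t * ‖Wn t‖₊ + wt lam t * ‖V t‖₊ := by ring
    refine le_trans (lintegral_mono_ae this) ?_
    rw [lintegral_add_left' amWn]
  -- finiteness of J Wn
  have g5 : J Wn ≠ ⊤ := by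
    have hle : J Wn ≤ ∫⁻ t in Ioc (0:ℝ) T, ‖Wn t‖₊ := by
      refine lintegral_mono_ae ?_
      filter_upwards [ae_restrict_mem measurableSet_Ioc] with t ht
      calc wt lam t * ‖Wn t‖₊ ≤ 1 * ‖Wn t‖₊ :=
            mul_le_mul_left (wt_le_one hlam ht.1.le) _
        _ = ‖Wn t‖₊ := one_mul _
    exact (lt_of_le_of_lt hle (IWn.restrict).2).ne
  -- assemble
  have g6 : J Wn ≤ (J L * J Gn + bn * (J Fn + a * J V)) +
      (ENNReal.ofReal (1/2) * J Wn + ENNReal.ofReal (1/4) * J Wn) := by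
    refine le_trans g2 ?_
    have step1 : J (fc L Gn) + (a * J (fc L Wn) + bn * (J Fn + a * J Vn)) ≤
        (J L * J Gn) + (a * (J L * J Wn) + bn * (J Fn + a * (J Wn + J V))) :=
      add_le_add g3a (add_le_add (mul_le_mul_right g3b a)
        (mul_le_mul_right (add_le_add_right (mul_le_mul_right g4 a) _) bn))
    refine le_trans step1 ?_
    have rearr : (J L * J Gn) + (a * (J L * J Wn) + bn * (J Fn + a * (J Wn + J V))) =
        (J L * J Gn + bn * (J Fn + a * J V)) + (a * (J L * J Wn) + bn * a * J Wn) := by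
      ring
    rw [rearr]
    refine add_le_add_right (add_le_add ?_ ?_) _
    · rw [← mul_assoc]
      exact mul_le_mul_left hc_half _
    · exact mul_le_mul_left hn4 _
  -- cancel
  have hE : J Wn = ENNReal.ofReal (3/4) * J Wn + ENNReal.ofReal (1/4) * J Wn := by
    rw [← add_mul, ← ENNReal.ofReal_add (by norm_num) (by norm_num)]
    norm_num
  have hsum : ENNReal.ofReal (1/2) * J Wn + ENNReal.ofReal (1/4) * J Wn =
      ENNReal.ofReal (3/4) * J Wn := by
    rw [← add_mul, ← ENNReal.ofReal_add (by norm_num) (by norm_num)]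
    norm_num
  rw [hsum] at g6
  have hfin : ENNReal.ofReal (3/4) * J Wn ≠ ⊤ := ENNReal.mul_ne_top ENNReal.ofReal_ne_top g5
  have hqtr : ENNReal.ofReal (1/4) * J Wn ≤ J L * J Gn + bn * (J Fn + a * J V) := by
    have h' : ENNReal.ofReal (3/4) * J Wn + ENNReal.ofReal (1/4) * J Wn ≤
        ENNReal.ofReal (3/4) * J Wn + (J L * J Gn + bn * (J Fn + a * J V)) := by
      rw [← hE]
      refine le_trans g6 ?_
      rw [add_comm]
    exact (ENNReal.add_le_add_iff_left hfin).1 h'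
  calc J Wn = ENNReal.ofReal 4 * (ENNReal.ofReal (1/4) * J Wn) := by
        rw [← mul_assoc, ← ENNReal.ofReal_mul (by norm_num)]
        norm_num
    _ ≤ ENNReal.ofReal 4 * (J L * J Gn + bn * (J Fn + a * J V)) :=
        mul_le_mul_right hqtr _

end StepG

lemma lint_nnnorm_eq {T : ℝ} {p : ℝ → ℝ} (hp : IntegrableOn p (Icc (0:ℝ) T)) :
    ∫⁻ t in Ioc (0:ℝ) T, (‖p t‖₊ : ENNReal) =
      ENNReal.ofReal (∫ t in Icc (0:ℝ) T, |p t|) := by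
  rw [ofReal_integral_eq_lintegral_ofReal hp.abs
    (Eventually.of_forall fun x => abs_nonneg _)]
  rw [setLIntegral_congr (Ioc_ae_eq_Icc (μ := volume) (a := (0:ℝ)) (b := T))]
  exact lintegral_congr fun t => Real.enorm_eq_ofReal_abs _

lemma J_le_ofReal {T lam : ℝ} (hlam : 0 ≤ lam) {p : ℝ → ℝ}
    (hp : IntegrableOn p (Icc (0:ℝ) T)) :
    (∫⁻ t in Ioc (0:ℝ) T, wt lam t * ‖ET T p t‖₊) ≤
      ENNReal.ofReal (∫ t in Icc (0:ℝ) T, |p t|) := by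
  calc (∫⁻ t in Ioc (0:ℝ) T, wt lam t * ‖ET T p t‖₊)
      ≤ ∫⁻ t in Ioc (0:ℝ) T, (‖ET T p t‖₊ : ENNReal) := by
        refine lintegral_mono_ae ?_
        filter_upwards [ae_restrict_mem measurableSet_Ioc] with t ht
        calc wt lam t * ‖ET T p t‖₊ ≤ 1 * ‖ET T p t‖₊ :=
              mul_le_mul_left (wt_le_one hlam ht.1.le) _
          _ = ‖ET T p t‖₊ := one_mul _
    _ = ∫⁻ t in Ioc (0:ℝ) T, (‖p t‖₊ : ENNReal) := by
        refine setLIntegral_congr_fun measurableSet_Ioc ?_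
        intro t ht
        dsimp only
        rw [ET_eq T ht]
    _ = ENNReal.ofReal (∫ t in Icc (0:ℝ) T, |p t|) := lint_nnnorm_eq hp

lemma J_sub_le_ofReal {T lam : ℝ} (hlam : 0 ≤ lam) {p q : ℝ → ℝ}
    (hp : IntegrableOn p (Icc (0:ℝ) T)) (hq : IntegrableOn q (Icc (0:ℝ) T)) :
    (∫⁻ t in Ioc (0:ℝ) T, wt lam t * ‖ET T p t - ET T q t‖₊) ≤
      ENNReal.ofReal (∫ t in Icc (0:ℝ) T, |p t - q t|) := by
  have hpq : IntegrableOn (fun t => p t - q t) (Icc (0:ℝ) T) := hp.sub hq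
  calc (∫⁻ t in Ioc (0:ℝ) T, wt lam t * ‖ET T p t - ET T q t‖₊)
      ≤ ∫⁻ t in Ioc (0:ℝ) T, (‖ET T p t - ET T q t‖₊ : ENNReal) := by
        refine lintegral_mono_ae ?_
        filter_upwards [ae_restrict_mem measurableSet_Ioc] with t ht
        calc wt lam t * ‖ET T p t - ET T q t‖₊ ≤ 1 * ‖ET T p t - ET T q t‖₊ :=
              mul_le_mul_left (wt_le_one hlam ht.1.le) _
          _ = ‖ET T p t - ET T q t‖₊ := one_mul _
    _ = ∫⁻ t in Ioc (0:ℝ) T, (‖p t - q t‖₊ : ENNReal) := by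
        refine setLIntegral_congr_fun measurableSet_Ioc ?_
        intro t ht
        dsimp only
        rw [ET_eq T ht, ET_eq T ht]
    _ = ENNReal.ofReal (∫ t in Icc (0:ℝ) T, |p t - q t|) := lint_nnnorm_eq hpq

lemma stepG2 (hμ : 0 < μ) (hlam : 0 ≤ lam) (hn1 : 1 ≤ n)
    (hlI : IntegrableOn l (Ioc (0:ℝ) T)) (hvI : IntegrableOn vnn (Icc (0:ℝ) T))
    (hfI : IntegrableOn fnn (Icc (0:ℝ) T)) (hvvI : IntegrableOn vv (Icc (0:ℝ) T))
    (hffI : IntegrableOn ff (Icc (0:ℝ) T))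
    (sW : ∀ᵐ t ∂(volume.restrict (Ioc (0:ℝ) T)),
      ET T vnn t - ET T vv t =
        fc (ET T l) (fun u => ET T fnn u - ET T ff u) t
        - μ * fc (ET T l) (fun u => ET T vnn u - ET T vv u) t
        + (1/n) * (ET T fnn t - μ * ET T vnn t))
    (hc_half : ENNReal.ofReal μ * (∫⁻ u in Ioc (0:ℝ) T, wt lam u * ‖ET T l u‖₊) ≤
      ENNReal.ofReal (1/2))
    (hn4 : ENNReal.ofReal (1/n) * ENNReal.ofReal μ ≤ ENNReal.ofReal (1/4)) :
    ∫ t in Icc (0:ℝ) T, |vnn t - vv t| ≤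
      Real.exp (lam * T) * 4 *
        ((∫⁻ u in Ioc (0:ℝ) T, wt lam u * ‖ET T l u‖₊).toReal *
            (∫ t in Icc (0:ℝ) T, |fnn t - ff t|)
          + (1/n) * (((∫ t in Icc (0:ℝ) T, |fnn t - ff t|) + ∫ t in Icc (0:ℝ) T, |ff t|)
            + μ * ∫ t in Icc (0:ℝ) T, |vv t|)) := by
  have hvI' := hvI.mono_set Ioc_subset_Icc_self
  have hfI' := hfI.mono_set Ioc_subset_Icc_self
  have hvvI' := hvvI.mono_set Ioc_subset_Icc_self
  have hffI' := hffI.mono_set Ioc_subset_Icc_self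
  set cE : ENNReal := ∫⁻ u in Ioc (0:ℝ) T, wt lam u * ‖ET T l u‖₊ with hcE
  set gn : ℝ := ∫ t in Icc (0:ℝ) T, |fnn t - ff t| with hgn
  set Cf : ℝ := ∫ t in Icc (0:ℝ) T, |ff t| with hCf
  set Cv : ℝ := ∫ t in Icc (0:ℝ) T, |vv t| with hCv
  have hgn0 : 0 ≤ gn := integral_nonneg fun t => abs_nonneg _
  have hCf0 : 0 ≤ Cf := integral_nonneg fun t => abs_nonneg _
  have hCv0 : 0 ≤ Cv := integral_nonneg fun t => abs_nonneg _
  have hlI2 : IntegrableOn l (Icc (0:ℝ) T) := (integrableOn_Icc_iff_integrableOn_Ioc (by simp)).2 hlI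
  have hcfin : cE ≠ ⊤ :=
    ne_of_lt (lt_of_le_of_lt (J_le_ofReal hlam hlI2) ENNReal.ofReal_lt_top)
  set cr : ℝ := cE.toReal with hcr
  have hcr0 : 0 ≤ cr := ENNReal.toReal_nonneg
  -- the key ENNReal bound
  have key := stepG1 hμ hlam hn1 hlI hvI' hfI' hvvI' hffI' sW hc_half hn4
  -- LHS as toReal of lintegral
  have hLHS : ∫ t in Icc (0:ℝ) T, |vnn t - vv t| =
      (∫⁻ t in Ioc (0:ℝ) T, (‖ET T vnn t - ET T vv t‖₊ : ENNReal)).toReal := by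
    have e1 : (∫⁻ t in Ioc (0:ℝ) T, (‖ET T vnn t - ET T vv t‖₊ : ENNReal)) =
        ∫⁻ t in Ioc (0:ℝ) T, (‖vnn t - vv t‖₊ : ENNReal) := by
      refine setLIntegral_congr_fun measurableSet_Ioc ?_
      intro t ht
      dsimp only
      rw [ET_eq T ht, ET_eq T ht]
    have hsub : IntegrableOn (fun t => vnn t - vv t) (Icc (0:ℝ) T) := hvI.sub hvvI
    rw [e1, lint_nnnorm_eq hsub,
      ENNReal.toReal_ofReal (integral_nonneg fun t => abs_nonneg _)]
  -- remove the weight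
  have hw : (∫⁻ t in Ioc (0:ℝ) T, (‖ET T vnn t - ET T vv t‖₊ : ENNReal)) ≤
      ENNReal.ofReal (Real.exp (lam * T)) *
        ∫⁻ t in Ioc (0:ℝ) T, wt lam t * ‖ET T vnn t - ET T vv t‖₊ := by
    rw [← lintegral_const_mul' _ _ (ENNReal.ofReal_ne_top)]
    refine lintegral_mono_ae ?_
    filter_upwards [ae_restrict_mem measurableSet_Ioc] with t ht
    have h1 : (1:ENNReal) ≤ ENNReal.ofReal (Real.exp (lam * T)) * wt lam t := by
      rw [wt, ← ENNReal.ofReal_mul (Real.exp_pos _).le, ← Real.exp_add, ← ENNReal.ofReal_one]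
      refine ENNReal.ofReal_le_ofReal ?_
      rw [← Real.exp_zero]
      refine Real.exp_le_exp.2 ?_
      nlinarith [ht.2]
    calc (‖ET T vnn t - ET T vv t‖₊ : ENNReal) = 1 * ‖ET T vnn t - ET T vv t‖₊ :=
          (one_mul _).symm
      _ ≤ (ENNReal.ofReal (Real.exp (lam * T)) * wt lam t) * ‖ET T vnn t - ET T vv t‖₊ :=
          mul_le_mul_left h1 _
      _ = ENNReal.ofReal (Real.exp (lam * T)) * (wt lam t * ‖ET T vnn t - ET T vv t‖₊) := by
          rw [mul_assoc]
  -- bound the RHS pieces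
  have hb1 : cE * (∫⁻ t in Ioc (0:ℝ) T, wt lam t * ‖ET T fnn t - ET T ff t‖₊) ≤
      ENNReal.ofReal (cr * gn) := by
    rw [ENNReal.ofReal_mul hcr0]
    refine mul_le_mul ?_ (J_sub_le_ofReal hlam hfI hffI) (by simp) (by simp)
    rw [hcr, ENNReal.ofReal_toReal hcfin]
  have hfn1 : (∫ t in Icc (0:ℝ) T, |fnn t|) ≤ gn + Cf := by
    have hA1 : IntegrableOn (fun t => |fnn t - ff t|) (Icc (0:ℝ) T) := (hfI.sub hffI).abs
    have hA : IntegrableOn (fun t => |fnn t - ff t| + |ff t|) (Icc (0:ℝ) T) :=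
      hA1.add hffI.abs
    have hstep : (∫ t in Icc (0:ℝ) T, |fnn t|) ≤
        ∫ t in Icc (0:ℝ) T, (|fnn t - ff t| + |ff t|) := by
      refine integral_mono hfI.abs hA fun t => ?_
      have := abs_add_le (fnn t - ff t) (ff t)
      simpa using this
    rw [integral_add hA1 hffI.abs] at hstep
    exact hstep
  have hb2 : (∫⁻ t in Ioc (0:ℝ) T, wt lam t * ‖ET T fnn t‖₊) +
      ENNReal.ofReal μ * (∫⁻ t in Ioc (0:ℝ) T, wt lam t * ‖ET T vv t‖₊) ≤
      ENNReal.ofReal ((gn + Cf) + μ * Cv) := by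
    rw [ENNReal.ofReal_add (by positivity) (by positivity), ENNReal.ofReal_mul hμ.le]
    refine add_le_add (le_trans (J_le_ofReal hlam hfI) (ENNReal.ofReal_le_ofReal hfn1))
      (mul_le_mul_right (J_le_ofReal hlam hvvI) _)
  -- put it together
  have hfinal : (∫⁻ t in Ioc (0:ℝ) T, (‖ET T vnn t - ET T vv t‖₊ : ENNReal)) ≤
      ENNReal.ofReal (Real.exp (lam * T) * 4 *
        (cr * gn + (1/n) * ((gn + Cf) + μ * Cv))) := by
    refine le_trans hw ?_
    refine le_trans (mul_le_mul_right key _) ?_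
    have : ENNReal.ofReal 4 *
        (cE * (∫⁻ t in Ioc (0:ℝ) T, wt lam t * ‖ET T fnn t - ET T ff t‖₊) +
          ENNReal.ofReal (1/n) *
            ((∫⁻ t in Ioc (0:ℝ) T, wt lam t * ‖ET T fnn t‖₊) +
              ENNReal.ofReal μ * ∫⁻ t in Ioc (0:ℝ) T, wt lam t * ‖ET T vv t‖₊)) ≤
        ENNReal.ofReal 4 * (ENNReal.ofReal (cr * gn) +
          ENNReal.ofReal (1/n) * ENNReal.ofReal ((gn + Cf) + μ * Cv)) :=
      mul_le_mul_right (add_le_add hb1 (mul_le_mul_right hb2 _)) _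
    refine le_trans (mul_le_mul_right this _) (le_of_eq ?_)
    rw [← ENNReal.ofReal_mul (by positivity : (0:ℝ) ≤ 1/n),
      ← ENNReal.ofReal_add (by positivity) (by positivity),
      ← ENNReal.ofReal_mul (by norm_num : (0:ℝ) ≤ 4),
      ← ENNReal.ofReal_mul (Real.exp_pos _).le]
    congr 1
    ring
  rw [hLHS]
  refine ENNReal.toReal_le_of_le_ofReal (by positivity) hfinal

end CDAux


open CDAux

/-- A pair `(k, l)` of locally integrable kernels on `ℝ₊` is of type `PC` if `k` is
nonnegative and nonincreasing on `(0,∞)` and `k ⋆ l ≡ 1` on `(0,∞)`. -/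
def IsPCPair (k l : ℝ → ℝ) : Prop :=
  (∀ t, 0 < t → 0 ≤ k t) ∧
  (∀ s t, 0 < s → s ≤ t → k t ≤ k s) ∧
  (∀ T, 0 < T → IntegrableOn k (Ioc 0 T)) ∧
  (∀ T, 0 < T → IntegrableOn l (Ioc 0 T)) ∧
  (∀ t, 0 < t → conv k l t = 1)

/-- Continuous dependence: if `fₙ → f` in `L₁([0,T])` and `vₙ` solves
`∂ₜ(kₙ ⋆ vₙ) + μ vₙ = fₙ` (with `kₙ = k ⋆ hₙ` the regularized kernels), then `vₙ → v`
in `L₁([0,T])`, where `v` solves `v + μ (l ⋆ v) = l ⋆ f`. -/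
theorem continuous_dependence
    (k l : ℝ → ℝ) (hPC : IsPCPair k l)
    (μ T : ℝ) (hμ : 0 < μ) (hT : 0 < T)
    (h : ℕ → ℝ → ℝ)
    (hnn : ∀ n t, 0 < t → 0 ≤ h n t)
    (hint : ∀ n T', 0 < T' → IntegrableOn (h n) (Ioc 0 T'))
    (hres : ∀ n : ℕ, ∀ᵐ t ∂(volume.restrict (Ioi (0:ℝ))),
      h n t + (n : ℝ) * conv (h n) l t = (n : ℝ) * l t)
    (f v : ℝ → ℝ) (fn vn : ℕ → ℝ → ℝ)
    (hfn : ∀ n, IntegrableOn (fn n) (Icc 0 T))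
    (hvn : ∀ n, IntegrableOn (vn n) (Icc 0 T))
    (hf : IntegrableOn f (Icc 0 T)) (hv : IntegrableOn v (Icc 0 T))
    (heq : ∀ n : ℕ, ∀ᵐ t ∂(volume.restrict (Ioo 0 T)),
      ∃ d : ℝ, HasDerivAt (conv (conv k (h n)) (vn n)) d t ∧ d + μ * vn n t = fn n t)
    (hveq : ∀ᵐ t ∂(volume.restrict (Ioo 0 T)), v t + μ * conv l v t = conv l f t)
    (hfconv : Tendsto (fun n => ∫ t in Icc (0:ℝ) T, |fn n t - f t|) atTop (nhds 0)) :
    Tendsto (fun n => ∫ t in Icc (0:ℝ) T, |vn n t - v t|) atTop (nhds 0) := by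
  obtain ⟨hk_nn, hk_mono, hk_int, hl_int, hkl⟩ := hPC
  have hkI := hk_int T hT
  have hlI := hl_int T hT
  have IL : Integrable (ET T l) := ET_integrable T hlI
  -- choose the exponential weight
  obtain ⟨lam, hlam0, hc_half⟩ : ∃ lam : ℝ, 0 ≤ lam ∧
      ENNReal.ofReal μ * (∫⁻ u in Ioc (0:ℝ) T, wt lam u * ‖ET T l u‖₊) ≤
        ENNReal.ofReal (1/2) := by
    set c : ℕ → ENNReal := fun j => ∫⁻ u in Ioc (0:ℝ) T, wt (j:ℝ) u * ‖ET T l u‖₊ with hc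
    have htend : Tendsto c atTop (nhds 0) := by
      have h0 : (0:ENNReal) = ∫⁻ _ in Ioc (0:ℝ) T, 0 := by simp
      rw [h0]
      refine tendsto_lintegral_of_dominated_convergence' (fun u => (‖ET T l u‖₊ : ENNReal))
        (fun j => ((wt_meas (j:ℝ)).aemeasurable.mul IL.aestronglyMeasurable.enorm).restrict)
        (fun j => ?_) ?_ ?_
      · filter_upwards [ae_restrict_mem measurableSet_Ioc] with u hu
        calc wt (j:ℝ) u * ‖ET T l u‖₊ ≤ 1 * ‖ET T l u‖₊ :=
              mul_le_mul_left (wt_le_one (Nat.cast_nonneg j) hu.1.le) _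
          _ = ‖ET T l u‖₊ := one_mul _
      · exact (IL.restrict).2.ne
      · filter_upwards [ae_restrict_mem measurableSet_Ioc] with u hu
        have hlt : Real.exp (-u) < 1 := Real.exp_lt_one_iff.2 (by linarith [hu.1])
        have h1 : Tendsto (fun j : ℕ => ENNReal.ofReal (Real.exp (-u) ^ j))
            atTop (nhds (ENNReal.ofReal 0)) :=
          ENNReal.tendsto_ofReal
            (tendsto_pow_atTop_nhds_zero_of_lt_one (Real.exp_pos _).le hlt)
        have h2 : ∀ j : ℕ, wt (j:ℝ) u = ENNReal.ofReal (Real.exp (-u) ^ j) := by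
          intro j
          rw [wt]
          congr 1
          rw [← Real.exp_nat_mul]
          ring_nf
        have h3 : Tendsto (fun j : ℕ => wt (j:ℝ) u * ‖ET T l u‖₊) atTop
            (nhds (ENNReal.ofReal 0 * ‖ET T l u‖₊)) := by
          simp_rw [h2]
          exact ENNReal.Tendsto.mul_const h1 (Or.inr ENNReal.coe_ne_top)
        simpa using h3
    have hpos : (0:ENNReal) < ENNReal.ofReal (1/(2*μ)) :=
      ENNReal.ofReal_pos.2 (by positivity)
    obtain ⟨j, hj⟩ := (htend.eventually (gt_mem_nhds hpos)).exists
    refine ⟨(j:ℝ), Nat.cast_nonneg j, ?_⟩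
    have : ENNReal.ofReal μ * c j ≤ ENNReal.ofReal μ * ENNReal.ofReal (1/(2*μ)) :=
      mul_le_mul_right hj.le _
    refine le_trans this (le_of_eq ?_)
    rw [← ENNReal.ofReal_mul hμ.le]
    congr 1
    field_simp
  set cE : ENNReal := ∫⁻ u in Ioc (0:ℝ) T, wt lam u * ‖ET T l u‖₊ with hcE
  set cr : ℝ := cE.toReal with hcr
  set gn : ℕ → ℝ := fun n => ∫ t in Icc (0:ℝ) T, |fn n t - f t| with hgndef
  set Cf : ℝ := ∫ t in Icc (0:ℝ) T, |f t| with hCf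
  set Cv : ℝ := ∫ t in Icc (0:ℝ) T, |v t| with hCv
  set s : ℕ → ℝ := fun n => Real.exp (lam * T) * 4 *
    (cr * gn n + (1/(n:ℝ)) * ((gn n + Cf) + μ * Cv)) with hsdef
  set N : ℕ := max 1 ⌈4*μ⌉₊ with hN
  have hub : ∀ n : ℕ, n ≥ N → (∫ t in Icc (0:ℝ) T, |vn n t - v t|) ≤ s n := by
    intro n hn
    have hn1 : 1 ≤ n := le_trans (le_max_left _ _) hn
    have hcast1 : (1:ℝ) ≤ (n:ℝ) := by exact_mod_cast hn1
    have hres'' : ∀ᵐ t ∂(volume.restrict (Ioc (0:ℝ) T)),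
        h n t + (n:ℝ) * conv (h n) l t = (n:ℝ) * l t :=
      ae_restrict_of_ae_restrict_of_subset (fun x hx => hx.1) (hres n)
    have hhI := hint n T hT
    have hvIoc := (hvn n).mono_set Ioc_subset_Icc_self
    have hfIoc := (hfn n).mono_set Ioc_subset_Icc_self
    have hvvIoc := hv.mono_set Ioc_subset_Icc_self
    have hffIoc := hf.mono_set Ioc_subset_Icc_self
    have hA := stepA hcast1 hkI hlI hhI hkl hres''
    have hB := stepB hhI hvIoc hA
    have hC := stepC hhI hvIoc hB (heq n)
    have hresE := resE hres''
    have hveq' := hveqE hveq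
    have sW := stepD hcast1 hlI hhI hvIoc hfIoc hvvIoc hffIoc hresE hC hveq'
    have hn4 : ENNReal.ofReal (1/(n:ℝ)) * ENNReal.ofReal μ ≤ ENNReal.ofReal (1/4) := by
      rw [← ENNReal.ofReal_mul (by positivity)]
      refine ENNReal.ofReal_le_ofReal ?_
      have h4μ : 4 * μ ≤ (n:ℝ) := by
        have h1 : (4:ℝ) * μ ≤ (⌈4*μ⌉₊ : ℝ) := Nat.le_ceil _
        have h2 : (⌈4*μ⌉₊:ℕ) ≤ n := le_trans (le_max_right 1 _) hn
        exact le_trans h1 (by exact_mod_cast h2)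
      rw [div_mul_eq_mul_div, one_mul, div_le_div_iff₀ (by linarith) (by norm_num)]
      linarith
    exact stepG2 hμ hlam0 hcast1 hlI (hvn n) (hfn n) hv hf sW hc_half hn4
  have hs0 : Tendsto s atTop (nhds 0) := by
    have h1 : Tendsto (fun n : ℕ => (1:ℝ)/(n:ℝ)) atTop (nhds 0) :=
      tendsto_one_div_atTop_nhds_zero_nat
    have h2 : Tendsto (fun n : ℕ => cr * gn n + (1/(n:ℝ)) * ((gn n + Cf) + μ * Cv)) atTop
        (nhds (cr * 0 + 0 * ((0 + Cf) + μ * Cv))) :=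
      (hfconv.const_mul cr).add (h1.mul ((hfconv.add tendsto_const_nhds).add
        tendsto_const_nhds))
    have h3 := h2.const_mul (Real.exp (lam * T) * 4)
    have h4 : Real.exp (lam * T) * 4 * (cr * 0 + 0 * ((0 + Cf) + μ * Cv)) = 0 := by ring
    rw [h4] at h3
    exact h3
  refine squeeze_zero' ?_ ?_ hs0
  · filter_upwards with n
    exact integral_nonneg fun t => abs_nonneg _
  · exact Filter.eventually_atTop.2 ⟨N, hub⟩
end

section
/- Let 𝓗 be a real Hilbert space and T > 0. Let k ∈ H¹₁([0,T]) be nonnegative and nonincreasing. Then for any u₀ ∈ 𝓗 and any u ∈ L₂([0,T];𝓗) there holds, for a.a. t ∈ (0,T): ‖u(t)‖·(d/dt)(k⋆(‖u(·)‖ − ‖u₀‖))(t) ≤ ⟨u(t), (d/dt)(k⋆[u−u₀])(t)⟩, where k⋆(‖u(·)‖ − ‖u₀‖) denotes the convolution of k with the scalar function t ↦ ‖u(t)‖ − ‖u₀‖. -/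
open MeasureTheory Set

/-- Hilbert-space-valued convolution on the positive half-line. -/
noncomputable def convH {𝓗 : Type*} [NormedAddCommGroup 𝓗] [NormedSpace ℝ 𝓗]
    (f : ℝ → ℝ) (g : ℝ → 𝓗) (t : ℝ) : 𝓗 :=
  ∫ τ in (0:ℝ)..t, f (t - τ) • g τ

/-- The Hilbert space version of the norm inequality (case `p = 2`) for
`∂ₜ(k ⋆ [· - u₀])` with a nonnegative, nonincreasing kernel `k ∈ H¹₁([0,T])`.
The derivatives are encoded via `HasDerivAt` hypotheses. -/
theorem hilbert_norm_inequality
    {𝓗 : Type*} [NormedAddCommGroup 𝓗] [InnerProductSpace ℝ 𝓗] [CompleteSpace 𝓗]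
    (T : ℝ) (hT : 0 < T)
    (k k' : ℝ → ℝ)
    (hknn : ∀ t ∈ Icc (0:ℝ) T, 0 ≤ k t)
    (hkmono : AntitoneOn k (Icc 0 T))
    (hk'int : IntegrableOn k' (Icc 0 T))
    (hkFTC : ∀ t ∈ Icc (0:ℝ) T, k t = k 0 + ∫ s in (0:ℝ)..t, k' s)
    (u₀ : 𝓗) (u : ℝ → 𝓗) (hu : MemLp u 2 (volume.restrict (Icc 0 T)))
    (D₁ : ℝ → 𝓗)
    (hD₁ : ∀ᵐ t ∂(volume.restrict (Ioo 0 T)),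
      HasDerivAt (convH k (fun τ => u τ - u₀)) (D₁ t) t)
    (D₂ : ℝ → ℝ)
    (hD₂ : ∀ᵐ t ∂(volume.restrict (Ioo 0 T)),
      HasDerivAt (conv k (fun τ => ‖u τ‖ - ‖u₀‖)) (D₂ t) t) :
    ∀ᵐ t ∂(volume.restrict (Ioo 0 T)),
      ‖u t‖ * D₂ t ≤ (inner ℝ (u t) (D₁ t) : ℝ) := by
  have hT0 : (0:ℝ) ≤ T := hT.le
  -- modified kernel, globally antitone, equal to `k` on `[0,T]`
  set K : ℝ → ℝ := fun s => k (max 0 (min s T)) with hKdef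
  have hmem : ∀ s : ℝ, max 0 (min s T) ∈ Icc (0:ℝ) T :=
    fun s => ⟨le_max_left _ _, max_le hT0 (min_le_right _ _)⟩
  have hKanti : Antitone K := fun s s' h =>
    hkmono (hmem s) (hmem s') (max_le_max le_rfl (min_le_min_right _ h))
  have hKnn : ∀ s, 0 ≤ K s := fun s => hknn _ (hmem s)
  have hKeq : ∀ s ∈ Icc (0:ℝ) T, K s = k s := by
    intro s hs
    simp only [hKdef]
    rw [min_eq_left hs.2, max_eq_right hs.1]
  have hK0 : K 0 = k 0 := hKeq 0 ⟨le_rfl, hT0⟩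
  have hKle : ∀ s, K s ≤ k 0 := by
    intro s
    rcases le_total 0 s with h | h
    · have := hKanti h; rwa [hK0] at this
    · simp only [hKdef]
      rw [min_eq_left (h.trans hT0), max_eq_left h]
  have hk00 : 0 ≤ k 0 := hknn 0 ⟨le_rfl, hT0⟩
  have hKmeas : Measurable K := hKanti.measurable
  have hKsm : ∀ (y : ℝ) (μ : Measure ℝ), AEStronglyMeasurable (fun τ => K (y - τ)) μ :=
    fun y μ => (hKmeas.comp (measurable_const.sub measurable_id)).aestronglyMeasurable
  have hKnorm : ∀ x : ℝ, ‖K x‖ ≤ k 0 := by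
    intro x; rw [Real.norm_eq_abs, abs_of_nonneg (hKnn x)]; exact hKle x
  -- integrability of u
  haveI : Fact (volume (Icc (0:ℝ) T) < ⊤) :=
    ⟨by rw [Real.volume_Icc]; exact ENNReal.ofReal_lt_top⟩
  have huI : IntegrableOn u (Icc 0 T) := hu.integrable one_le_two
  -- K is integrable on finite-measure sets, after composition with (y - ·)
  have hKint : ∀ (y : ℝ) (S : Set ℝ), volume S < ⊤ →
      IntegrableOn (fun τ => K (y - τ)) S := by
    intro y S hS
    refine Integrable.mono' (g := fun _ => k 0) (integrableOn_const hS.ne)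
      (hKsm y _) (ae_of_all _ fun x => hKnorm _)
  have hKint' : ∀ (S : Set ℝ), volume S < ⊤ → IntegrableOn K S := fun S hS =>
    Integrable.mono' (integrableOn_const hS.ne) hKmeas.aestronglyMeasurable
      (ae_of_all _ hKnorm)
  have hrefl : ∀ z : ℝ, 0 ≤ z →
      (∫ τ in Ioc (0:ℝ) z, K (z - τ)) = ∫ τ in Ioc (0:ℝ) z, K τ := by
    intro z hz
    have h := intervalIntegral.integral_comp_sub_left (a := (0:ℝ)) (b := z) K z
    simp only [sub_self, sub_zero] at h
    simpa [intervalIntegral.integral_of_le hz] using h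
  -- indicator of u, for the Lebesgue differentiation theorem
  set v : ℝ → 𝓗 := (Icc (0:ℝ) T).indicator u with hvdef
  have hvInt : Integrable v := huI.integrable_indicator measurableSet_Icc
  have hvLoc : LocallyIntegrable v volume := hvInt.locallyIntegrable
  have hleb := IsUnifLocDoublingMeasure.ae_tendsto_average_norm_sub volume hvLoc 1
  have hleb' : ∀ᵐ t ∂(volume.restrict (Ioo 0 T)),
      ∀ {ι : Type} {l : Filter ι} (w : ι → ℝ) (δ : ι → ℝ)
        (_ : Filter.Tendsto δ l (nhdsWithin 0 (Ioi 0)))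
        (_ : ∀ᶠ j in l, t ∈ Metric.closedBall (w j) (1 * δ j)),
        Filter.Tendsto (fun j => ⨍ y in Metric.closedBall (w j) (δ j), ‖v y - v t‖) l (nhds 0) :=
    Filter.Eventually.filter_mono (ae_mono Measure.restrict_le_self) hleb
  filter_upwards [hD₁, hD₂, hleb', ae_restrict_mem measurableSet_Ioo] with t hFd hGd hLeb ht
  obtain ⟨ht0, htT⟩ := ht
  set c : ℝ := ‖u t‖ with hcdef
  have hc0 : 0 ≤ c := norm_nonneg _
  set a : ℝ → ℝ := fun τ => c * ‖u τ‖ - inner ℝ (u t) (u τ) with hadef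
  set b : ℝ := c * ‖u₀‖ - inner ℝ (u t) u₀ with hbdef
  have ha0 : ∀ τ, 0 ≤ a τ := fun τ => sub_nonneg.2 (real_inner_le_norm _ _)
  have hb0 : 0 ≤ b := sub_nonneg.2 (real_inner_le_norm _ _)
  have habd : ∀ τ, a τ ≤ 2 * c * ‖u τ - u t‖ := by
    intro τ
    have h1 : (inner ℝ (u t) (u t) : ℝ) = c * c := real_inner_self_eq_norm_mul_norm (u t)
    have h2 : (inner ℝ (u t) (u t - u τ) : ℝ) ≤ c * ‖u t - u τ‖ := real_inner_le_norm _ _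
    have h3 : ‖u τ‖ - ‖u t‖ ≤ ‖u τ - u t‖ := norm_sub_norm_le _ _
    have h4 : ‖u t - u τ‖ = ‖u τ - u t‖ := norm_sub_rev _ _
    have h5 : (inner ℝ (u t) (u t - u τ) : ℝ)
        = inner ℝ (u t) (u t) - inner ℝ (u t) (u τ) := inner_sub_right _ _ _
    simp only [hadef]
    nlinarith [hc0]
  have haInt : IntegrableOn a (Icc 0 T) :=
    (huI.norm.const_mul c).sub (huI.const_inner (u t))
  set g : ℝ → ℝ := fun τ => b - a τ with hgdef
  have hgInt : IntegrableOn g (Icc 0 T) :=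
    (integrableOn_const (Fact.out : volume (Icc (0:ℝ) T) < ⊤).ne).sub haInt
  have hKg : ∀ (z : ℝ) (S : Set ℝ), S ⊆ Icc 0 T →
      IntegrableOn (fun τ => K (z - τ) * g τ) S := fun z S hS =>
    (hgInt.mono_set hS).bdd_mul (hKsm z _) (ae_of_all _ fun x => hKnorm _)
  -- the key identity
  have key : ∀ y ∈ Icc (0:ℝ) T,
      (inner ℝ (u t) (convH k (fun τ => u τ - u₀) y) : ℝ)
        - c * conv k (fun τ => ‖u τ‖ - ‖u₀‖) y
      = ∫ τ in Ioc (0:ℝ) y, K (y - τ) * g τ := by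
    intro y hy
    have hy0 : (0:ℝ) ≤ y := hy.1
    have hsub : Ioc (0:ℝ) y ⊆ Icc 0 T := fun τ hτ => ⟨hτ.1.le, hτ.2.trans hy.2⟩
    have hmemK : ∀ τ ∈ uIcc (0:ℝ) y, (y - τ) ∈ Icc (0:ℝ) T := by
      intro τ hτ
      rw [uIcc_of_le hy0] at hτ
      exact ⟨sub_nonneg.2 hτ.2, (sub_le_self y hτ.1).trans hy.2⟩
    have hμ : volume (Ioc (0:ℝ) y) < ⊤ := measure_Ioc_lt_top
    have huy : IntegrableOn (fun τ => u τ - u₀) (Ioc 0 y) :=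
      (huI.mono_set hsub).sub (integrableOn_const hμ.ne)
    have hphi : MemLp (fun τ => K (y - τ)) ⊤ (volume.restrict (Ioc 0 y)) :=
      memLp_top_of_bound (hKsm y _) (k 0) (ae_of_all _ fun x => hKnorm _)
    have hIvec : IntegrableOn (fun τ => K (y - τ) • (u τ - u₀)) (Ioc 0 y) :=
      huy.smul_of_top_right hphi
    have e1 : convH k (fun τ => u τ - u₀) y
        = ∫ τ in Ioc (0:ℝ) y, K (y - τ) • (u τ - u₀) := by
      rw [convH, intervalIntegral.integral_congr (g := fun τ => K (y - τ) • (u τ - u₀))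
        (fun τ hτ => by
          show k (y - τ) • (u τ - u₀) = K (y - τ) • (u τ - u₀)
          rw [hKeq _ (hmemK τ hτ)]),
        intervalIntegral.integral_of_le hy0]
    have e2 : conv k (fun τ => ‖u τ‖ - ‖u₀‖) y
        = ∫ τ in Ioc (0:ℝ) y, K (y - τ) * (‖u τ‖ - ‖u₀‖) := by
      rw [conv, intervalIntegral.integral_congr (g := fun τ => K (y - τ) * (‖u τ‖ - ‖u₀‖))
        (fun τ hτ => by
          show k (y - τ) * (‖u τ‖ - ‖u₀‖) = K (y - τ) * (‖u τ‖ - ‖u₀‖)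
          rw [hKeq _ (hmemK τ hτ)]),
        intervalIntegral.integral_of_le hy0]
    have hI1 : IntegrableOn (fun τ => (inner ℝ (u t) (K (y - τ) • (u τ - u₀)) : ℝ)) (Ioc 0 y) :=
      hIvec.const_inner (u t)
    have hw : IntegrableOn (fun τ => ‖u τ‖ - ‖u₀‖) (Ioc 0 y) :=
      ((huI.mono_set hsub).norm).sub (integrableOn_const hμ.ne)
    have hI2 : IntegrableOn (fun τ => K (y - τ) * (‖u τ‖ - ‖u₀‖)) (Ioc 0 y) :=
      hw.bdd_mul (hKsm y _) (ae_of_all _ fun x => hKnorm _)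
    rw [e1, e2, ← integral_inner hIvec (u t), ← integral_const_mul, ← integral_sub hI1 (hI2.const_mul c)]
    refine setIntegral_congr_fun measurableSet_Ioc fun τ hτ => ?_
    simp only [real_inner_smul_right, inner_sub_right, hgdef, hadef, hbdef]
    ring
  -- the main inequality for difference quotients
  have main : ∀ y ∈ Ioc t T,
      c * (conv k (fun τ => ‖u τ‖ - ‖u₀‖) y - conv k (fun τ => ‖u τ‖ - ‖u₀‖) t)
        ≤ (inner ℝ (u t) (convH k (fun τ => u τ - u₀) y - convH k (fun τ => u τ - u₀) t) : ℝ)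
          + k 0 * ∫ τ in Ioc t y, a τ := by
    intro y hy
    obtain ⟨hty, hyT⟩ := hy
    have h0t : (0:ℝ) ≤ t := ht0.le
    have hty' : t ≤ y := hty.le
    have hSt : Ioc (0:ℝ) t ⊆ Icc 0 T := fun τ hτ => ⟨hτ.1.le, hτ.2.trans htT.le⟩
    have hSty : Ioc t y ⊆ Icc 0 T := fun τ hτ => ⟨h0t.trans hτ.1.le, hτ.2.trans hyT⟩
    have hUnion : Ioc (0:ℝ) t ∪ Ioc t y = Ioc 0 y := Ioc_union_Ioc_eq_Ioc h0t hty'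
    have hdisj : Disjoint (Ioc (0:ℝ) t) (Ioc t y) := Ioc_disjoint_Ioc_of_le le_rfl
    have hμt : volume (Ioc (0:ℝ) t) < ⊤ := measure_Ioc_lt_top
    have hμty : volume (Ioc t y) < ⊤ := measure_Ioc_lt_top
    have haty : IntegrableOn a (Ioc t y) := haInt.mono_set hSty
    have hsplitg : (∫ τ in Ioc (0:ℝ) y, K (y - τ) * g τ)
        = (∫ τ in Ioc (0:ℝ) t, K (y - τ) * g τ) + ∫ τ in Ioc t y, K (y - τ) * g τ := by
      rw [← hUnion]
      exact setIntegral_union hdisj measurableSet_Ioc (hKg y _ hSt) (hKg y _ hSty)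
    have hsplitK : (∫ τ in Ioc (0:ℝ) y, K τ)
        = (∫ τ in Ioc (0:ℝ) t, K τ) + ∫ τ in Ioc t y, K τ := by
      rw [← hUnion]
      exact setIntegral_union hdisj measurableSet_Ioc (hKint' _ hμt) (hKint' _ hμty)
    have hsplitKy : (∫ τ in Ioc (0:ℝ) y, K (y - τ))
        = (∫ τ in Ioc (0:ℝ) t, K (y - τ)) + ∫ τ in Ioc t y, K (y - τ) := by
      rw [← hUnion]
      exact setIntegral_union hdisj measurableSet_Ioc (hKint y _ hμt) (hKint y _ hμty)
    have hmono1 : (∫ τ in Ioc (0:ℝ) t, (K (y - τ) * b - K (t - τ) * b))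
        ≤ ∫ τ in Ioc (0:ℝ) t, (K (y - τ) * g τ - K (t - τ) * g τ) := by
      refine setIntegral_mono_on
        (((hKint y _ hμt).mul_const b).sub ((hKint t _ hμt).mul_const b))
        ((hKg y _ hSt).sub (hKg t _ hSt)) measurableSet_Ioc ?_
      intro τ hτ
      have hKK : K (y - τ) ≤ K (t - τ) := hKanti (by linarith : t - τ ≤ y - τ)
      simp only [hgdef]
      nlinarith [mul_nonneg (sub_nonneg.2 hKK) (ha0 τ)]
    have hmono2 : (∫ τ in Ioc t y, (b * K (y - τ) - k 0 * a τ))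
        ≤ ∫ τ in Ioc t y, K (y - τ) * g τ := by
      refine setIntegral_mono_on
        (((hKint y _ hμty).const_mul b).sub (haty.const_mul (k 0)))
        (hKg y _ hSty) measurableSet_Ioc ?_
      intro τ hτ
      have h1 : K (y - τ) * a τ ≤ k 0 * a τ := mul_le_mul_of_nonneg_right (hKle _) (ha0 τ)
      simp only [hgdef]
      nlinarith [hKnn (y - τ)]
    have hsub1 : (∫ τ in Ioc (0:ℝ) t, (K (y - τ) * g τ - K (t - τ) * g τ))
        = (∫ τ in Ioc (0:ℝ) t, K (y - τ) * g τ) - ∫ τ in Ioc (0:ℝ) t, K (t - τ) * g τ :=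
      integral_sub (hKg y _ hSt) (hKg t _ hSt)
    have hsub2 : (∫ τ in Ioc (0:ℝ) t, (K (y - τ) * b - K (t - τ) * b))
        = (∫ τ in Ioc (0:ℝ) t, K (y - τ)) * b - (∫ τ in Ioc (0:ℝ) t, K (t - τ)) * b := by
      rw [integral_sub ((hKint y _ hμt).mul_const b) ((hKint t _ hμt).mul_const b),
        integral_mul_const, integral_mul_const]
    have hsub3 : (∫ τ in Ioc t y, (b * K (y - τ) - k 0 * a τ))
        = b * (∫ τ in Ioc t y, K (y - τ)) - k 0 * ∫ τ in Ioc t y, a τ := by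
      rw [integral_sub ((hKint y _ hμty).const_mul b) (haty.const_mul (k 0)),
        integral_const_mul, integral_const_mul]
    have hW : 0 ≤ ∫ τ in Ioc t y, K τ :=
      setIntegral_nonneg measurableSet_Ioc fun τ _ => hKnn τ
    have hbW : 0 ≤ b * ∫ τ in Ioc t y, K τ := mul_nonneg hb0 hW
    have hkey_y := key y ⟨h0t.trans hty', hyT⟩
    have hkey_t := key t ⟨h0t, htT.le⟩
    have hrefl_y := hrefl y (h0t.trans hty')
    have hrefl_t := hrefl t h0t
    have hlin : (∫ τ in Ioc (0:ℝ) t, K (y - τ)) - (∫ τ in Ioc (0:ℝ) t, K (t - τ))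
        + (∫ τ in Ioc t y, K (y - τ)) = ∫ τ in Ioc t y, K τ := by
      linarith [hsplitKy, hrefl_y, hrefl_t, hsplitK]
    have hcomb : (∫ τ in Ioc (0:ℝ) t, K (y - τ)) * b - (∫ τ in Ioc (0:ℝ) t, K (t - τ)) * b
        + b * (∫ τ in Ioc t y, K (y - τ)) = b * ∫ τ in Ioc t y, K τ := by
      linear_combination b * hlin
    have hmulsub : c * (conv k (fun τ => ‖u τ‖ - ‖u₀‖) y - conv k (fun τ => ‖u τ‖ - ‖u₀‖) t)
        = c * conv k (fun τ => ‖u τ‖ - ‖u₀‖) y - c * conv k (fun τ => ‖u τ‖ - ‖u₀‖) t :=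
      mul_sub c _ _
    rw [inner_sub_right]
    linarith [hmono1, hmono2, hsub1, hsub2, hsub3, hcomb, hbW, hsplitg, hkey_y, hkey_t, hmulsub]
  -- pass to the limit along difference quotients from the right
  have hslopeF : Filter.Tendsto (slope (convH k fun τ => u τ - u₀) t)
      (nhdsWithin t (Ioi t)) (nhds (D₁ t)) :=
    (hasDerivAt_iff_tendsto_slope.1 hFd).mono_left
      (nhdsWithin_mono t fun y hy => Set.mem_compl_singleton_iff.2 (LT.lt.ne' hy))
  have l1 : Filter.Tendsto (fun y => (inner ℝ (u t) (slope (convH k fun τ => u τ - u₀) t y) : ℝ))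
      (nhdsWithin t (Ioi t)) (nhds (inner ℝ (u t) (D₁ t))) :=
    Filter.Tendsto.inner tendsto_const_nhds hslopeF
  have hslopeG : Filter.Tendsto (slope (conv k fun τ => ‖u τ‖ - ‖u₀‖) t)
      (nhdsWithin t (Ioi t)) (nhds (D₂ t)) :=
    (hasDerivAt_iff_tendsto_slope.1 hGd).mono_left
      (nhdsWithin_mono t fun y hy => Set.mem_compl_singleton_iff.2 (LT.lt.ne' hy))
  have l2 : Filter.Tendsto (fun y => c * slope (conv k fun τ => ‖u τ‖ - ‖u₀‖) t y)
      (nhdsWithin t (Ioi t)) (nhds (c * D₂ t)) := tendsto_const_nhds.mul hslopeG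
  have hδ : Filter.Tendsto (fun y : ℝ => y - t) (nhdsWithin t (Ioi t))
      (nhdsWithin 0 (Ioi 0)) := by
    rw [tendsto_nhdsWithin_iff]
    constructor
    · have h1 : Filter.Tendsto (fun y : ℝ => y - t) (nhds t) (nhds (t - t)) :=
        (continuous_id.sub continuous_const).tendsto t
      rw [sub_self] at h1
      exact h1.mono_left nhdsWithin_le_nhds
    · filter_upwards [self_mem_nhdsWithin] with y hy
      exact sub_pos.2 (Set.mem_Ioi.1 hy)
  have hmemball : ∀ᶠ y in nhdsWithin t (Ioi t),
      t ∈ Metric.closedBall ((fun _ : ℝ => t) y) (1 * ((fun y : ℝ => y - t) y)) := by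
    filter_upwards [self_mem_nhdsWithin] with y hy
    simp only [Metric.mem_closedBall, dist_self, one_mul]
    linarith [sub_pos.2 (Set.mem_Ioi.1 hy)]
  have hball := hLeb (fun _ : ℝ => t) (fun y : ℝ => y - t) hδ hmemball
  have l3 : Filter.Tendsto (fun y => (y - t)⁻¹ * ∫ τ in Ioc t y, a τ)
      (nhdsWithin t (Ioi t)) (nhds 0) := by
    have h4c : Filter.Tendsto
        (fun y => (4 * c) * ⨍ τ in Metric.closedBall t (y - t), ‖v τ - v t‖)
        (nhdsWithin t (Ioi t)) (nhds 0) := by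
      have h := hball.const_mul (4 * c)
      simpa using h
    refine squeeze_zero' ?_ ?_ h4c
    · filter_upwards [self_mem_nhdsWithin] with y hy
      exact mul_nonneg (inv_nonneg.2 (sub_pos.2 hy).le)
        (setIntegral_nonneg measurableSet_Ioc fun τ _ => ha0 τ)
    · filter_upwards [Ioo_mem_nhdsGT_of_mem (⟨le_rfl, htT⟩ : t ∈ Ico t T)] with y hy
      have hr : 0 < y - t := sub_pos.2 hy.1
      have hIoc_sub : Ioc t y ⊆ Metric.closedBall t (y - t) := by
        intro τ hτ
        rw [Real.closedBall_eq_Icc]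
        exact ⟨by linarith [hτ.1.le], by linarith [hτ.2]⟩
      have hvn : IntegrableOn (fun τ => 2 * c * ‖v τ - v t‖) (Metric.closedBall t (y - t)) :=
        ((hvInt.integrableOn.sub (integrableOn_const
          measure_closedBall_lt_top.ne)).norm).const_mul (2 * c)
      have hsubset : Ioc t y ⊆ Icc (0:ℝ) T :=
        fun τ hτ => ⟨(ht0.trans hτ.1).le, hτ.2.trans hy.2.le⟩
      have hb1 : (∫ τ in Ioc t y, a τ) ≤ ∫ τ in Ioc t y, 2 * c * ‖v τ - v t‖ := by
        refine setIntegral_mono_on (haInt.mono_set hsubset) (hvn.mono_set hIoc_sub)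
          measurableSet_Ioc ?_
        intro τ hτ
        have hvτ : v τ = u τ := Set.indicator_of_mem (hsubset hτ) u
        have hvt : v t = u t := Set.indicator_of_mem (Set.mem_Icc.mpr ⟨ht0.le, htT.le⟩) u
        rw [hvτ, hvt]
        exact habd τ
      have hb2 : (∫ τ in Ioc t y, 2 * c * ‖v τ - v t‖)
          ≤ ∫ τ in Metric.closedBall t (y - t), 2 * c * ‖v τ - v t‖ :=
        setIntegral_mono_set hvn (ae_of_all _ fun τ => by positivity)
          (HasSubset.Subset.eventuallyLE hIoc_sub)
      have havg : (⨍ τ in Metric.closedBall t (y - t), ‖v τ - v t‖)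
          = (2 * (y - t))⁻¹ * ∫ τ in Metric.closedBall t (y - t), ‖v τ - v t‖ := by
        rw [setAverage_eq, Real.volume_real_closedBall (by linarith)]
        simp [smul_eq_mul]
      have hIcb : (∫ τ in Metric.closedBall t (y - t), 2 * c * ‖v τ - v t‖)
          = 2 * c * ∫ τ in Metric.closedBall t (y - t), ‖v τ - v t‖ := integral_const_mul _ _
      have hstep := mul_le_mul_of_nonneg_left (hb1.trans hb2) (inv_nonneg.2 hr.le)
      calc (y - t)⁻¹ * ∫ τ in Ioc t y, a τ
          ≤ (y - t)⁻¹ * ∫ τ in Metric.closedBall t (y - t), 2 * c * ‖v τ - v t‖ := hstep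
        _ = 4 * c * ⨍ τ in Metric.closedBall t (y - t), ‖v τ - v t‖ := by
            rw [havg, hIcb]
            field_simp
            ring
  have lfinal : Filter.Tendsto
      (fun y => (inner ℝ (u t) (slope (convH k fun τ => u τ - u₀) t y) : ℝ)
        + k 0 * ((y - t)⁻¹ * ∫ τ in Ioc t y, a τ))
      (nhdsWithin t (Ioi t)) (nhds ((inner ℝ (u t) (D₁ t) : ℝ) + k 0 * 0)) :=
    l1.add (l3.const_mul (k 0))
  rw [mul_zero, add_zero] at lfinal
  refine le_of_tendsto_of_tendsto l2 lfinal ?_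
  filter_upwards [Ioc_mem_nhdsGT_of_mem (⟨le_rfl, htT⟩ : t ∈ Ico t T)] with y hy
  have hr : 0 < y - t := sub_pos.2 hy.1
  have hmain := main y hy
  have hslopeeq : (inner ℝ (u t) (slope (convH k fun τ => u τ - u₀) t y) : ℝ)
      = (y - t)⁻¹ * (inner ℝ (u t)
          (convH k (fun τ => u τ - u₀) y - convH k (fun τ => u τ - u₀) t) : ℝ) := by
    rw [slope_def_module, real_inner_smul_right]
  have hslopeeq2 : slope (conv k fun τ => ‖u τ‖ - ‖u₀‖) t y
      = (y - t)⁻¹ * (conv k (fun τ => ‖u τ‖ - ‖u₀‖) y - conv k (fun τ => ‖u τ‖ - ‖u₀‖) t) := by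
    rw [slope_def_field, div_eq_inv_mul]
  simp only [hslopeeq, hslopeeq2]
  have hstep := mul_le_mul_of_nonneg_left hmain (inv_nonneg.2 hr.le)
  calc c * ((y - t)⁻¹ * (conv k (fun τ => ‖u τ‖ - ‖u₀‖) y - conv k (fun τ => ‖u τ‖ - ‖u₀‖) t))
      = (y - t)⁻¹ * (c * (conv k (fun τ => ‖u τ‖ - ‖u₀‖) y
          - conv k (fun τ => ‖u τ‖ - ‖u₀‖) t)) := by ring
    _ ≤ (y - t)⁻¹ * ((inner ℝ (u t)
            (convH k (fun τ => u τ - u₀) y - convH k (fun τ => u τ - u₀) t) : ℝ)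
          + k 0 * ∫ τ in Ioc t y, a τ) := hstep
    _ = (y - t)⁻¹ * (inner ℝ (u t)
            (convH k (fun τ => u τ - u₀) y - convH k (fun τ => u τ - u₀) t) : ℝ)
          + k 0 * ((y - t)⁻¹ * ∫ τ in Ioc t y, a τ) := by ring
end

section
/- Let (k,l) be a pair of type PC and μ > 0, and let s_μ be the relaxation function: the nonnegative, nonincreasing, locally absolutely continuous solution of s_μ(t) + μ(l⋆s_μ)(t) = 1 on [0,∞) with s_μ(0) = 1. Then lim_{t→∞} s_μ(t) = 0 if and only if l ∉ L₁(ℝ₊). Moreover, if l ∈ L₁(ℝ₊), then lim_{t→∞} s_μ(t) = 1/(1 + μ‖l‖_{L₁(ℝ₊)}) > 0. -/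
open MeasureTheory Set Filter
open Topology

open Metric Topology in
/-- From nonnegative integrals over all intervals to a.e. nonnegativity,
via the Lebesgue differentiation theorem. -/
lemma ae_nonneg_of_forall_integral_Ioc_nonneg (g : ℝ → ℝ)
    (hg : LocallyIntegrable g (volume : Measure ℝ))
    (h : ∀ a b : ℝ, a ≤ b → 0 ≤ ∫ x in Ioc a b, g x) :
    0 ≤ᵐ[(volume : Measure ℝ)] g := by
  filter_upwards [(Besicovitch.vitaliFamily (volume : Measure ℝ)).ae_tendsto_average hg] with x hx
  have hx' : Tendsto (fun r => ⨍ y in closedBall x r, g y) (𝓝[>] 0) (𝓝 (g x)) :=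
    hx.comp (Besicovitch.tendsto_filterAt _ x)
  refine ge_of_tendsto hx' ?_
  filter_upwards [self_mem_nhdsWithin] with r hr
  rw [setAverage_eq, Real.closedBall_eq_Icc, integral_Icc_eq_integral_Ioc]
  exact smul_nonneg (by positivity) (h _ _ (by linarith [(mem_Ioi.mp hr).le]))

lemma locallyIntegrable_indicator_Ioi (f : ℝ → ℝ)
    (hf : ∀ T : ℝ, IntegrableOn f (Ioc 0 T)) :
    LocallyIntegrable ((Ioi (0:ℝ)).indicator f) (volume : Measure ℝ) := by
  rw [locallyIntegrable_iff]
  intro K hK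
  obtain ⟨T, hT⟩ := hK.isBounded.subset_closedBall 0
  have h1 : IntegrableOn ((Ioi (0:ℝ)).indicator f) (Metric.closedBall 0 T) := by
    rw [IntegrableOn, integrable_indicator_iff measurableSet_Ioi, IntegrableOn,
      Measure.restrict_restrict measurableSet_Ioi]
    refine (hf T).mono_set ?_
    intro x ⟨hx1, hx2⟩
    rw [Real.closedBall_eq_Icc] at hx2
    exact ⟨hx1, by linarith [hx2.2]⟩
  exact h1.mono_set hT

/-- Fubini for the convolution triangle. -/
lemma integral_convolution_swap (f g : ℝ → ℝ) (t : ℝ)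
    (hf : IntegrableOn f (Ioc 0 t)) (hg : IntegrableOn g (Ioc 0 t)) :
    ∫ u in Ioc (0:ℝ) t, f u * ∫ τ in Ioc (0:ℝ) (t - u), g τ
      = ∫ τ in Ioc (0:ℝ) t, (∫ u in Ioc (0:ℝ) (t - τ), f u) * g τ := by
  have hFi : Integrable ((Ioc (0:ℝ) t).indicator f) volume :=
    (integrable_indicator_iff measurableSet_Ioc).2 hf
  have hGi : Integrable ((Ioc (0:ℝ) t).indicator g) volume :=
    (integrable_indicator_iff measurableSet_Ioc).2 hg
  have hSm : MeasurableSet {p : ℝ × ℝ | p.1 + p.2 ≤ t} :=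
    measurableSet_le (measurable_fst.add measurable_snd) measurable_const
  have hχ : Measurable fun p : ℝ × ℝ => if p.1 + p.2 ≤ t then (1:ℝ) else 0 :=
    Measurable.ite hSm measurable_const measurable_const
  set φ : ℝ → ℝ → ℝ := fun u τ => (Ioc (0:ℝ) t).indicator f u *
    (Ioc (0:ℝ) t).indicator g τ * (if u + τ ≤ t then (1:ℝ) else 0) with hφdef
  have hprod : Integrable (fun p : ℝ × ℝ =>
      (Ioc (0:ℝ) t).indicator f p.1 * (Ioc (0:ℝ) t).indicator g p.2) (volume.prod volume) :=
    hFi.mul_prod hGi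
  have hφi : Integrable (Function.uncurry φ) (volume.prod volume) := by
    refine hprod.norm.mono' (hprod.aestronglyMeasurable.mul hχ.aestronglyMeasurable) ?_
    refine Eventually.of_forall fun p => ?_
    obtain ⟨u, τ⟩ := p
    simp only [Function.uncurry_apply_pair, hφdef, norm_mul]
    refine mul_le_of_le_one_right (by positivity) ?_
    split_ifs <;> simp
  have inner1 : ∀ u : ℝ, (∫ τ, φ u τ)
      = (Ioc (0:ℝ) t).indicator f u * ∫ τ in Ioc (0:ℝ) (min t (t - u)), g τ := by
    intro u
    have h1 : (fun τ => φ u τ) = fun τ =>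
        (Ioc (0:ℝ) t).indicator f u * ((Ioc 0 t ∩ Iic (t - u)).indicator g τ) := by
      funext τ
      simp only [hφdef, Set.indicator_apply, mem_Ioc, mem_inter_iff, mem_Iic]
      have : u + τ ≤ t ↔ τ ≤ t - u := by constructor <;> intro <;> linarith
      split_ifs <;> first | ring1 | (exfalso; tauto)
    rw [h1, integral_const_mul]
    congr 1
    rw [integral_indicator (measurableSet_Ioc.inter measurableSet_Iic), Ioc_inter_Iic]
  have inner2 : ∀ τ : ℝ, (∫ u, φ u τ)
      = (Ioc (0:ℝ) t).indicator g τ * ∫ u in Ioc (0:ℝ) (min t (t - τ)), f u := by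
    intro τ
    have h1 : (fun u => φ u τ) = fun u =>
        (Ioc (0:ℝ) t).indicator g τ * ((Ioc 0 t ∩ Iic (t - τ)).indicator f u) := by
      funext u
      simp only [hφdef, Set.indicator_apply, mem_Ioc, mem_inter_iff, mem_Iic]
      have : u + τ ≤ t ↔ u ≤ t - τ := by constructor <;> intro <;> linarith
      split_ifs <;> first | ring1 | (exfalso; tauto)
    rw [h1, integral_const_mul]
    congr 1
    rw [integral_indicator (measurableSet_Ioc.inter measurableSet_Iic), Ioc_inter_Iic]
  have hswap := integral_integral_swap hφi
  calc ∫ u in Ioc (0:ℝ) t, f u * ∫ τ in Ioc (0:ℝ) (t - u), g τ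
      = ∫ u, (Ioc (0:ℝ) t).indicator f u * ∫ τ in Ioc (0:ℝ) (min t (t - u)), g τ := by
        rw [← integral_indicator measurableSet_Ioc]
        refine integral_congr_ae (Eventually.of_forall fun u => ?_)
        dsimp only
        by_cases h1 : u ∈ Ioc (0:ℝ) t
        · rw [Set.indicator_of_mem h1, Set.indicator_of_mem h1,
            min_eq_right (by linarith [h1.1] : t - u ≤ t)]
        · rw [Set.indicator_of_notMem h1, Set.indicator_of_notMem h1, zero_mul]
    _ = ∫ u, ∫ τ, φ u τ := by
        refine integral_congr_ae (Eventually.of_forall fun u => ?_)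
        dsimp only
        rw [inner1]
    _ = ∫ τ, ∫ u, φ u τ := hswap
    _ = ∫ τ, (Ioc (0:ℝ) t).indicator g τ * ∫ u in Ioc (0:ℝ) (min t (t - τ)), f u := by
        refine integral_congr_ae (Eventually.of_forall fun τ => ?_)
        dsimp only
        rw [inner2]
    _ = ∫ τ in Ioc (0:ℝ) t, (∫ u in Ioc (0:ℝ) (t - τ), f u) * g τ := by
        rw [← integral_indicator measurableSet_Ioc]
        refine integral_congr_ae (Eventually.of_forall fun τ => ?_)
        dsimp only
        by_cases h1 : τ ∈ Ioc (0:ℝ) t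
        · rw [Set.indicator_of_mem h1, Set.indicator_of_mem h1,
            min_eq_right (by linarith [h1.1] : t - τ ≤ t), mul_comm]
        · rw [Set.indicator_of_notMem h1, Set.indicator_of_notMem h1, zero_mul]
lemma continuousOn_primitive_Ici (f : ℝ → ℝ) (hf : ∀ T : ℝ, IntegrableOn f (Ioc 0 T)) :
    ContinuousOn (fun x => ∫ t in Ioc (0:ℝ) x, f t) (Ici 0) := by
  intro x hx
  have h1 : ContinuousOn (fun x => ∫ t in Ioc (0:ℝ) x, f t) (Icc 0 (x + 1)) :=
    intervalIntegral.continuousOn_primitive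
      ((integrableOn_Icc_iff_integrableOn_Ioc (by finiteness)).2 (hf (x + 1)))
  have h2 := h1 x ⟨hx, by linarith [mem_Ici.1 hx]⟩
  refine h2.mono_of_mem_nhdsWithin ?_
  rw [mem_nhdsWithin]
  exact ⟨Iio (x + 1), isOpen_Iio, lt_add_one x, fun y hy => ⟨hy.2, le_of_lt hy.1⟩⟩
/-- The relaxation function `s_μ` tends to `0` at infinity if and only if
`l ∉ L₁(ℝ₊)`; if `l ∈ L₁(ℝ₊)` then `s_μ(t) → 1/(1 + μ‖l‖_{L₁(ℝ₊)}) > 0`. -/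
theorem relaxation_function_limit
    (k l : ℝ → ℝ) (hPC : IsPCPair k l) (μ : ℝ) (hμ : 0 < μ)
    (s s' : ℝ → ℝ)
    (hs0 : s 0 = 1)
    (hsnn : ∀ t, 0 ≤ t → 0 ≤ s t)
    (hsmono : AntitoneOn s (Ici 0))
    (hs'int : ∀ T, 0 < T → IntegrableOn s' (Icc 0 T))
    (hsFTC : ∀ t, 0 ≤ t → s t = 1 + ∫ τ in (0:ℝ)..t, s' τ)
    (hVolterra : ∀ t, 0 ≤ t → s t + μ * conv l s t = 1) :
    (Tendsto s atTop (nhds 0) ↔ ¬ IntegrableOn l (Ioi 0)) ∧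
    (IntegrableOn l (Ioi 0) →
      Tendsto s atTop (nhds (1 / (1 + μ * ∫ t in Ioi (0:ℝ), |l t|))) ∧
      0 < 1 / (1 + μ * ∫ t in Ioi (0:ℝ), |l t|)) := by
  obtain ⟨-, -, -, hl0, -⟩ := hPC
  -- integrability of `l` and `s'` on all `Ioc 0 T`
  have hl' : ∀ T : ℝ, IntegrableOn l (Ioc 0 T) := by
    intro T
    rcases lt_or_ge 0 T with h | h
    · exact hl0 T h
    · rw [Ioc_eq_empty (not_lt.2 h)]; exact integrableOn_empty
  have hs'i : ∀ T : ℝ, IntegrableOn s' (Ioc 0 T) := by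
    intro T
    rcases lt_or_ge 0 T with h | h
    · exact (hs'int T h).mono_set Ioc_subset_Icc_self
    · rw [Ioc_eq_empty (not_lt.2 h)]; exact integrableOn_empty
  have hII : ∀ a b : ℝ, 0 ≤ a → a ≤ b → IntervalIntegrable s' volume a b := fun a b ha hab =>
    (intervalIntegrable_iff_integrableOn_Ioc_of_le hab).2 ((hs'i b).mono_set (Ioc_subset_Ioc ha le_rfl))
  have hlII : ∀ a b : ℝ, 0 ≤ a → a ≤ b → IntervalIntegrable l volume a b := fun a b ha hab =>
    (intervalIntegrable_iff_integrableOn_Ioc_of_le hab).2 ((hl' b).mono_set (Ioc_subset_Ioc ha le_rfl))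
  -- fundamental integral identities
  have hs_int : ∀ a b : ℝ, 0 ≤ a → a ≤ b → ∫ τ in Ioc a b, s' τ = s b - s a := by
    intro a b ha hab
    have h1 := intervalIntegral.integral_add_adjacent_intervals
      (a := (0:ℝ)) (b := a) (c := b) (μ := volume) (f := s')
      (hII 0 a le_rfl ha) (hII a b ha hab)
    have ea := hsFTC a ha
    have eb := hsFTC b (ha.trans hab)
    rw [← intervalIntegral.integral_of_le hab]
    linarith
  -- the primitive of l
  set L : ℝ → ℝ := fun x => ∫ u in Ioc (0:ℝ) x, l u with hLdef
  have hLx : ∀ y : ℝ, (∫ u in Ioc (0:ℝ) y, l u) = L y := fun _ => rfl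
  have hLcont : ContinuousOn L (Ici 0) := continuousOn_primitive_Ici l hl'
  have hLzero : ∀ x : ℝ, x ≤ 0 → L x = 0 := by
    intro x hx
    rw [hLdef]
    simp [Ioc_eq_empty (not_lt.2 hx)]
  have hLdiff : ∀ a b : ℝ, 0 ≤ a → a ≤ b → ∫ u in Ioc a b, l u = L b - L a := by
    intro a b ha hab
    have h1 := intervalIntegral.integral_add_adjacent_intervals
      (a := (0:ℝ)) (b := a) (c := b) (μ := volume) (f := l)
      (hlII 0 a le_rfl ha) (hlII a b ha hab)
    rw [intervalIntegral.integral_of_le ha, intervalIntegral.integral_of_le (ha.trans hab),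
      intervalIntegral.integral_of_le hab, hLx, hLx] at h1
    rw [← intervalIntegral.integral_of_le hab]
    rw [intervalIntegral.integral_of_le hab]
    linarith
  -- basic bounds for s
  have hs_le_one : ∀ t : ℝ, 0 ≤ t → s t ≤ 1 := by
    intro t ht
    have := hsmono (self_mem_Ici) (mem_Ici.2 ht) ht
    rwa [hs0] at this
  have hscont : ContinuousOn s (Ici 0) := by
    have h1 : ContinuousOn (fun t => 1 + ∫ u in Ioc (0:ℝ) t, s' u) (Ici 0) :=
      continuousOn_const.add (continuousOn_primitive_Ici s' hs'i)
    refine h1.congr ?_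
    intro t ht
    rw [hsFTC t ht, intervalIntegral.integral_of_le ht]
  -- the limit c
  set c : ℝ := ⨅ t : ℝ, s (max t 0) with hcdef
  have hanti : Antitone fun t : ℝ => s (max t 0) := fun a b hab =>
    hsmono (mem_Ici.2 (le_max_right a 0)) (mem_Ici.2 (le_max_right b 0)) (max_le_max hab le_rfl)
  have hbdd : BddBelow (range fun t : ℝ => s (max t 0)) := by
    refine ⟨0, fun y hy => ?_⟩
    obtain ⟨t, rfl⟩ := hy
    exact hsnn _ (le_max_right t 0)
  have htendsto : Tendsto s atTop (𝓝 c) := by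
    have h1 : Tendsto (fun t : ℝ => s (max t 0)) atTop (𝓝 c) := tendsto_atTop_ciInf hanti hbdd
    refine h1.congr' ?_
    filter_upwards [eventually_ge_atTop (0:ℝ)] with t ht
    rw [max_eq_left ht]
  have hcle : ∀ t : ℝ, 0 ≤ t → c ≤ s t := by
    intro t ht
    have := ciInf_le hbdd t
    rwa [max_eq_left ht] at this
  have hc0 : 0 ≤ c := le_ciInf fun t => hsnn _ (le_max_right t 0)
  have hc1 : c ≤ 1 := by
    have := ciInf_le hbdd 0
    simpa [hs0] using this
  -- reflection of the convolution
  have hconv_refl : ∀ t : ℝ, 0 ≤ t → conv l s t = ∫ u in Ioc (0:ℝ) t, l u * s (t - u) := by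
    intro t ht
    have h1 := intervalIntegral.integral_comp_sub_left
      (a := (0:ℝ)) (b := t) (fun u => l u * s (t - u)) t
    rw [show t - t = (0:ℝ) by ring, show t - 0 = t by ring] at h1
    rw [conv, ← intervalIntegral.integral_of_le ht, ← h1]
    refine intervalIntegral.integral_congr fun τ hτ => ?_
    rw [sub_sub_cancel]
  -- continuity/measurability helper for τ ↦ L (t - τ) type compositions
  have hcomp_cont : ∀ (F : ℝ → ℝ), ContinuousOn F (Ici 0) → ∀ t : ℝ,
      ContinuousOn (fun τ => F (t - τ)) (Icc 0 t) := by
    intro F hF t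
    refine hF.comp (continuousOn_const.sub continuousOn_id) ?_
    intro τ hτ
    exact mem_Ici.2 (by linarith [hτ.2])
  -- integrability of products with -s'
  have hprodint : ∀ (F : ℝ → ℝ), ContinuousOn F (Ici 0) → ∀ t : ℝ, 0 ≤ t →
      IntegrableOn (fun τ => F (t - τ) * s' τ) (Ioc 0 t) := by
    intro F hF t ht
    obtain ⟨C, hC⟩ := isCompact_Icc.exists_bound_of_continuousOn (hcomp_cont F hF t)
    refine Integrable.bdd_mul (c := C) (hs'i t) ?_ ?_
    · exact ((hcomp_cont F hF t).aestronglyMeasurable measurableSet_Icc).mono_measure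
        (Measure.restrict_mono Ioc_subset_Icc_self le_rfl)
    · filter_upwards [ae_restrict_mem measurableSet_Ioc] with τ hτ
      exact hC τ ⟨hτ.1.le, hτ.2⟩
  -- key identity
  have hkey : ∀ t : ℝ, 0 ≤ t →
      μ * L t = (1 - s t) + μ * ∫ τ in Ioc (0:ℝ) t, (-s' τ) * L (t - τ) := by
    intro t ht
    have hsplit : conv l s t
        = L t + ∫ u in Ioc (0:ℝ) t, l u * ∫ τ in Ioc (0:ℝ) (t - u), s' τ := by
      rw [hconv_refl t ht]
      have h2 : ∀ u ∈ Ioc (0:ℝ) t, l u * s (t - u)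
          = l u + l u * ∫ τ in Ioc (0:ℝ) (t - u), s' τ := by
        intro u hu
        rw [hsFTC (t - u) (by linarith [hu.2] : (0:ℝ) ≤ t - u),
          intervalIntegral.integral_of_le (by linarith [hu.2] : (0:ℝ) ≤ t - u)]
        ring
      rw [setIntegral_congr_fun measurableSet_Ioc h2, integral_add (hl' t) ?_, hLx]
      -- integrability of the second summand
      have hPcont : ContinuousOn (fun x => ∫ τ in Ioc (0:ℝ) x, s' τ) (Ici 0) :=
        continuousOn_primitive_Ici s' hs'i
      obtain ⟨C, hC⟩ := isCompact_Icc.exists_bound_of_continuousOn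
        (hcomp_cont _ hPcont t)
      have h3 : Integrable (fun u => (∫ τ in Ioc (0:ℝ) (t - u), s' τ) * l u)
          (volume.restrict (Ioc 0 t)) := by
        refine Integrable.bdd_mul (c := C) (hl' t) ?_ ?_
        · exact ((hcomp_cont _ hPcont t).aestronglyMeasurable measurableSet_Icc).mono_measure
            (Measure.restrict_mono Ioc_subset_Icc_self le_rfl)
        · filter_upwards [ae_restrict_mem measurableSet_Ioc] with τ hτ
          exact hC τ ⟨hτ.1.le, hτ.2⟩
      exact h3.congr (Eventually.of_forall fun x => mul_comm _ _)
    have hswap := integral_convolution_swap l s' t (hl' t) (hs'i t)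
    have hvol := hVolterra t ht
    simp only [hLx] at hswap
    rw [hswap] at hsplit
    have hneg : ∫ τ in Ioc (0:ℝ) t, (-s' τ) * L (t - τ)
        = -∫ τ in Ioc (0:ℝ) t, L (t - τ) * s' τ := by
      rw [← integral_neg]
      refine setIntegral_congr_fun measurableSet_Ioc fun τ _ => ?_
      ring
    rw [hneg, hsplit] at *
    rw [hsplit] at hvol
    ring_nf
    ring_nf at hvol
    linarith
  -- products with -s' are integrable (second form)
  have hwprod : ∀ (F : ℝ → ℝ), ContinuousOn F (Ici 0) → ∀ t : ℝ, 0 ≤ t →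
      IntegrableOn (fun τ => (-s' τ) * F (t - τ)) (Ioc 0 t) := by
    intro F hF t ht
    refine ((hprodint F hF t ht).neg).congr (Eventually.of_forall fun τ => ?_)
    simp only [Pi.neg_apply]
    ring
  -- -s' is a.e. nonnegative on (0,∞)
  have hw_ae : ∀ᵐ x : ℝ ∂(volume : Measure ℝ), x ∈ Ioi (0:ℝ) → 0 ≤ -s' x := by
    have hg := ae_nonneg_of_forall_integral_Ioc_nonneg
      ((Ioi (0:ℝ)).indicator (fun x => -s' x))
      (locallyIntegrable_indicator_Ioi _ (fun T => (hs'i T).neg)) ?_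
    · filter_upwards [hg] with x hx hx'
      rwa [Set.indicator_of_mem hx'] at hx
    · intro a b hab
      rw [setIntegral_indicator measurableSet_Ioi, Ioc_inter_Ioi]
      rcases le_or_gt b (max a 0) with h | h
      · rw [Ioc_eq_empty (not_lt.2 h)]; simp
      · rw [integral_neg, hs_int (max a 0) b (le_max_right a 0) h.le]
        have := hsmono (mem_Ici.2 (le_max_right a 0)) (mem_Ici.2 ((le_max_right a 0).trans h.le)) h.le
        linarith
  have hmass : ∀ a b : ℝ, 0 ≤ a → a ≤ b → ∫ τ in Ioc a b, (-s' τ) = s a - s b := by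
    intro a b ha hab
    rw [integral_neg, hs_int a b ha hab]
    ring
  -- main block under the hypothesis 0 < c
  have hmain : 0 < c → (∀ᵐ x : ℝ ∂(volume : Measure ℝ), x ∈ Ioi (0:ℝ) → 0 ≤ l x)
      ∧ IntegrableOn l (Ioi 0) := by
    intro hcpos
    -- C1 : L is nonnegative
    have hL_nonneg : ∀ T : ℝ, 0 ≤ T → ∀ x ∈ Icc (0:ℝ) T, 0 ≤ L x := by
      intro T hT
      obtain ⟨t0, ht0mem, ht0min⟩ := isCompact_Icc.exists_isMinOn (nonempty_Icc.2 hT)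
        (hLcont.mono (fun x hx => hx.1))
      have hmin : ∀ y ∈ Icc (0:ℝ) T, L t0 ≤ L y := fun y hy => ht0min hy
      have h0 : 0 ≤ L t0 := by
        by_contra hneg
        push_neg at hneg
        have hkey0 := hkey t0 ht0mem.1
        have hIlb : (∫ τ in Ioc (0:ℝ) t0, (-s' τ) * L t0)
            ≤ ∫ τ in Ioc (0:ℝ) t0, (-s' τ) * L (t0 - τ) := by
          refine integral_mono_ae (((hs'i t0).neg).mul_const _)
            (hwprod L hLcont t0 ht0mem.1) ?_
          filter_upwards [ae_restrict_mem measurableSet_Ioc, ae_restrict_of_ae hw_ae]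
            with τ h1 h2
          refine mul_le_mul_of_nonneg_left ?_ (h2 h1.1)
          exact hmin _ ⟨by linarith [h1.2], by linarith [h1.1, ht0mem.2]⟩
        have hmc : (∫ τ in Ioc (0:ℝ) t0, (-s' τ) * L t0) = (1 - s t0) * L t0 := by
          rw [integral_mul_const, hmass 0 t0 le_rfl ht0mem.1, hs0]
        have hst0c : c ≤ s t0 := hcle t0 ht0mem.1
        have hst01 : s t0 ≤ 1 := hs_le_one t0 ht0mem.1
        have hμI : μ * ((1 - s t0) * L t0) ≤ μ * ∫ τ in Ioc (0:ℝ) t0, (-s' τ) * L (t0 - τ) :=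
          mul_le_mul_of_nonneg_left (hmc ▸ hIlb) hμ.le
        nlinarith [mul_pos (mul_pos hμ (lt_of_lt_of_le hcpos hst0c)) (neg_pos.2 hneg)]
      exact fun x hx => h0.trans (hmin x hx)
    have hL_nonneg' : ∀ x : ℝ, 0 ≤ L x := by
      intro x
      rcases le_or_gt x 0 with h | h
      · rw [hLzero x h]
      · exact hL_nonneg x h.le x ⟨h.le, le_rfl⟩
    -- C2 : L is bounded by (1-c)/(μ c)
    have hL_bdd : ∀ x : ℝ, L x ≤ (1 - c) / (μ * c) := by
      have hrhs : 0 ≤ (1 - c) / (μ * c) := div_nonneg (by linarith) (by positivity)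
      intro x
      rcases le_or_gt x 0 with h | h
      · rw [hLzero x h]; exact hrhs
      obtain ⟨t0, ht0mem, ht0max⟩ := isCompact_Icc.exists_isMaxOn (nonempty_Icc.2 h.le)
        (hLcont.mono (fun y hy => hy.1))
      have hmax : ∀ y ∈ Icc (0:ℝ) x, L y ≤ L t0 := fun y hy => ht0max hy
      refine le_trans (hmax x ⟨h.le, le_rfl⟩) ?_
      have hkey0 := hkey t0 ht0mem.1
      have hIub : (∫ τ in Ioc (0:ℝ) t0, (-s' τ) * L (t0 - τ))
          ≤ ∫ τ in Ioc (0:ℝ) t0, (-s' τ) * L t0 := by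
        refine integral_mono_ae (hwprod L hLcont t0 ht0mem.1)
          (((hs'i t0).neg).mul_const _) ?_
        filter_upwards [ae_restrict_mem measurableSet_Ioc, ae_restrict_of_ae hw_ae]
          with τ h1 h2
        refine mul_le_mul_of_nonneg_left ?_ (h2 h1.1)
        exact hmax _ ⟨by linarith [h1.2], by linarith [h1.1, ht0mem.2]⟩
      have hmc : (∫ τ in Ioc (0:ℝ) t0, (-s' τ) * L t0) = (1 - s t0) * L t0 := by
        rw [integral_mul_const, hmass 0 t0 le_rfl ht0mem.1, hs0]
      have hLt0 : 0 ≤ L t0 := hL_nonneg' t0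
      have hst0c : c ≤ s t0 := hcle t0 ht0mem.1
      have hst01 : s t0 ≤ 1 := hs_le_one t0 ht0mem.1
      have hμI : μ * ∫ τ in Ioc (0:ℝ) t0, (-s' τ) * L (t0 - τ)
          ≤ μ * ((1 - s t0) * L t0) := mul_le_mul_of_nonneg_left (hmc ▸ hIub) hμ.le
      rw [le_div_iff₀ (by positivity : (0:ℝ) < μ * c)]
      nlinarith [mul_nonneg (mul_nonneg hμ.le (by linarith : (0:ℝ) ≤ s t0 - c)) hLt0]
    -- C3 : L is nondecreasing on [0,∞)
    have hL_mono : ∀ a b : ℝ, 0 ≤ a → a ≤ b → L a ≤ L b := by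
      intro a b ha hab
      set d := b - a with hddef
      have hd0 : 0 ≤ d := by simp only [hddef]; linarith
      have hGcont : ContinuousOn (fun x => L (x + d) - L x) (Icc 0 a) := by
        refine ContinuousOn.sub ?_ (hLcont.mono fun y hy => hy.1)
        refine hLcont.comp (continuousOn_id.add continuousOn_const) fun y hy => ?_
        exact mem_Ici.2 (by linarith [hy.1])
      obtain ⟨t0, ht0mem, ht0min⟩ := isCompact_Icc.exists_isMinOn (nonempty_Icc.2 ha) hGcont
      have hmin : ∀ y ∈ Icc (0:ℝ) a, L (t0 + d) - L t0 ≤ L (y + d) - L y :=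
        fun y hy => ht0min hy
      have hfin : 0 ≤ L (t0 + d) - L t0 := by
        by_contra hneg
        push_neg at hneg
        have ht00 : (0:ℝ) ≤ t0 := ht0mem.1
        have ht0d : (0:ℝ) ≤ t0 + d := by linarith
        have hk1 := hkey (t0 + d) ht0d
        have hk2 := hkey t0 ht00
        have hsplit2 : ∫ τ in Ioc (0:ℝ) (t0 + d), (-s' τ) * L (t0 + d - τ)
            = (∫ τ in Ioc (0:ℝ) t0, (-s' τ) * L (t0 + d - τ))
              + ∫ τ in Ioc t0 (t0 + d), (-s' τ) * L (t0 + d - τ) := by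
          rw [← setIntegral_union (Ioc_disjoint_Ioc_of_le le_rfl) measurableSet_Ioc
            ((hwprod L hLcont (t0 + d) ht0d).mono_set (Ioc_subset_Ioc_right (by linarith)))
            ((hwprod L hLcont (t0 + d) ht0d).mono_set (Ioc_subset_Ioc_left ht00)),
            Ioc_union_Ioc_eq_Ioc ht00 (by linarith)]
        have hI3 : 0 ≤ ∫ τ in Ioc t0 (t0 + d), (-s' τ) * L (t0 + d - τ) := by
          refine integral_nonneg_of_ae ?_
          filter_upwards [ae_restrict_mem measurableSet_Ioc, ae_restrict_of_ae hw_ae]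
            with τ h1 h2
          exact mul_nonneg (h2 (lt_of_le_of_lt ht00 h1.1)) (hL_nonneg' _)
        have hdiffint : IntegrableOn
            (fun τ => (-s' τ) * (L (t0 - τ + d) - L (t0 - τ))) (Ioc 0 t0) := by
          refine ((((hwprod L hLcont (t0 + d) ht0d).mono_set
            (Ioc_subset_Ioc_right (by linarith))).sub
            (hwprod L hLcont t0 ht00)).congr (Eventually.of_forall fun τ => ?_))
          simp only [Pi.sub_apply]
          have he : t0 + d - τ = t0 - τ + d := by ring
          rw [he]; ring
        have hGint : (∫ τ in Ioc (0:ℝ) t0, (-s' τ) * L (t0 + d - τ))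
              - ∫ τ in Ioc (0:ℝ) t0, (-s' τ) * L (t0 - τ)
            = ∫ τ in Ioc (0:ℝ) t0, (-s' τ) * (L (t0 - τ + d) - L (t0 - τ)) := by
          rw [← integral_sub ((hwprod L hLcont (t0 + d) ht0d).mono_set
            (Ioc_subset_Ioc_right (by linarith))) (hwprod L hLcont t0 ht00)]
          refine setIntegral_congr_fun measurableSet_Ioc fun τ _ => ?_
          have he : t0 + d - τ = t0 - τ + d := by ring
          rw [he]; ring
        have hGlb : (∫ τ in Ioc (0:ℝ) t0, (-s' τ) * (L (t0 + d) - L t0))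
            ≤ ∫ τ in Ioc (0:ℝ) t0, (-s' τ) * (L (t0 - τ + d) - L (t0 - τ)) := by
          refine integral_mono_ae (((hs'i t0).neg).mul_const _) hdiffint ?_
          filter_upwards [ae_restrict_mem measurableSet_Ioc, ae_restrict_of_ae hw_ae]
            with τ h1 h2
          refine mul_le_mul_of_nonneg_left ?_ (h2 h1.1)
          exact hmin _ ⟨by linarith [h1.2], by linarith [h1.1, ht0mem.2]⟩
        have hmc : (∫ τ in Ioc (0:ℝ) t0, (-s' τ) * (L (t0 + d) - L t0))
            = (1 - s t0) * (L (t0 + d) - L t0) := by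
          rw [integral_mul_const, hmass 0 t0 le_rfl ht00, hs0]
        have hsdec : s (t0 + d) ≤ s t0 :=
          hsmono (mem_Ici.2 ht00) (mem_Ici.2 ht0d) (by linarith)
        have hst0c : c ≤ s t0 := hcle t0 ht00
        have hst01 : s t0 ≤ 1 := hs_le_one t0 ht00
        have hμI : μ * ((1 - s t0) * (L (t0 + d) - L t0))
            ≤ μ * ((∫ τ in Ioc (0:ℝ) t0, (-s' τ) * L (t0 + d - τ))
              - ∫ τ in Ioc (0:ℝ) t0, (-s' τ) * L (t0 - τ)) := by
          rw [hGint]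
          exact mul_le_mul_of_nonneg_left (hmc ▸ hGlb) hμ.le
        have hμ3 : 0 ≤ μ * ∫ τ in Ioc t0 (t0 + d), (-s' τ) * L (t0 + d - τ) :=
          mul_nonneg hμ.le hI3
        nlinarith [mul_pos (mul_pos hμ (lt_of_lt_of_le hcpos hst0c))
          (neg_pos.2 hneg)]
      have hfin2 := hfin.trans (hmin a ⟨ha, le_rfl⟩)
      have hab' : a + d = b := by simp only [hddef]; ring
      rw [hab'] at hfin2
      linarith
    -- C4 : l ≥ 0 a.e. on (0,∞)
    have hl_ae : ∀ᵐ x : ℝ ∂(volume : Measure ℝ), x ∈ Ioi (0:ℝ) → 0 ≤ l x := by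
      have hg := ae_nonneg_of_forall_integral_Ioc_nonneg ((Ioi (0:ℝ)).indicator l)
        (locallyIntegrable_indicator_Ioi _ hl') ?_
      · filter_upwards [hg] with x hx hx'
        rwa [Set.indicator_of_mem hx'] at hx
      · intro a b hab
        rw [setIntegral_indicator measurableSet_Ioi, Ioc_inter_Ioi]
        rcases le_or_gt b (max a 0) with hb | hb
        · rw [Ioc_eq_empty (not_lt.2 hb)]; simp
        · rw [hLdiff (max a 0) b (le_max_right a 0) hb.le]
          linarith [hL_mono (max a 0) b (le_max_right a 0) hb.le]
    refine ⟨hl_ae, ?_⟩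
    refine integrableOn_Ioi_of_intervalIntegral_norm_bounded (μ := volume)
      ((1 - c)/(μ * c)) 0 (b := fun i : ℝ => i) (fun i : ℝ => hl' i) tendsto_id ?_
    filter_upwards [eventually_ge_atTop (0:ℝ)] with i hi
    rw [intervalIntegral.integral_of_le hi]
    have habs : ∫ x in Ioc (0:ℝ) i, ‖l x‖ = ∫ x in Ioc (0:ℝ) i, l x := by
      refine setIntegral_congr_ae measurableSet_Ioc ?_
      filter_upwards [hl_ae] with x hx hxm
      rw [Real.norm_eq_abs, abs_of_nonneg (hx hxm.1)]
    rw [habs, hLx]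
    exact hL_bdd i
  -- convergence of the convolution from the Volterra equation
  have hconv_tendsto : Tendsto (fun t => conv l s t) atTop (𝓝 ((1 - c)/μ)) := by
    have h1 : Tendsto (fun t => (1 - s t)/μ) atTop (𝓝 ((1 - c)/μ)) :=
      (tendsto_const_nhds.sub htendsto).div_const μ
    refine h1.congr' ?_
    filter_upwards [eventually_ge_atTop (0:ℝ)] with t ht
    have := hVolterra t ht
    rw [div_eq_iff hμ.ne']
    linarith
  -- dominated convergence when l is integrable
  have hDCT : IntegrableOn l (Ioi 0) →
      Tendsto (fun t => conv l s t) atTop (𝓝 ((∫ u in Ioi (0:ℝ), l u) * c)) := by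
    intro hint
    have hmeas : ∀ᶠ (t:ℝ) in atTop, AEStronglyMeasurable
        ((Ioc (0:ℝ) t).indicator (fun u => l u * s (t - u))) (volume.restrict (Ioi 0)) := by
      filter_upwards [eventually_ge_atTop (0:ℝ)] with t ht
      rw [aestronglyMeasurable_indicator_iff measurableSet_Ioc,
        Measure.restrict_restrict measurableSet_Ioc,
        inter_eq_self_of_subset_left Ioc_subset_Ioi_self]
      exact (hl' t).aestronglyMeasurable.mul
        (((hcomp_cont s hscont t).aestronglyMeasurable measurableSet_Icc).mono_measure
          (Measure.restrict_mono Ioc_subset_Icc_self le_rfl))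
    have hbound : ∀ᶠ (t:ℝ) in atTop, ∀ᵐ u ∂(volume.restrict (Ioi 0)),
        ‖(Ioc (0:ℝ) t).indicator (fun u => l u * s (t - u)) u‖ ≤ |l u| := by
      filter_upwards [eventually_ge_atTop (0:ℝ)] with t ht
      refine Eventually.of_forall fun u => ?_
      by_cases hu : u ∈ Ioc (0:ℝ) t
      · rw [Set.indicator_of_mem hu, Real.norm_eq_abs, abs_mul]
        refine mul_le_of_le_one_right (abs_nonneg _) ?_
        rw [abs_of_nonneg (hsnn _ (by linarith [hu.2]))]
        exact hs_le_one _ (by linarith [hu.2])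
      · rw [Set.indicator_of_notMem hu, norm_zero]
        exact abs_nonneg _
    have hlim : ∀ᵐ u ∂(volume.restrict (Ioi 0)),
        Tendsto (fun t => (Ioc (0:ℝ) t).indicator (fun u => l u * s (t - u)) u) atTop
          (𝓝 (l u * c)) := by
      filter_upwards [ae_restrict_mem measurableSet_Ioi] with u hu
      have h1 : Tendsto (fun t : ℝ => t - u) atTop atTop := by
        have := tendsto_atTop_add_const_right atTop (-u) (tendsto_id (α := ℝ))
        refine this.congr fun x => ?_
        simp only [id_eq]
        ring
      have h2 : Tendsto (fun t : ℝ => l u * s (t - u)) atTop (𝓝 (l u * c)) :=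
        (htendsto.comp h1).const_mul (l u)
      refine h2.congr' ?_
      filter_upwards [eventually_ge_atTop u] with t ht
      have hmem : u ∈ Ioc (0:ℝ) t := ⟨hu, ht⟩
      rw [Set.indicator_of_mem hmem]
    have h := tendsto_integral_filter_of_dominated_convergence
      (μ := volume.restrict (Ioi (0:ℝ))) (fun u => |l u|) hmeas hbound hint.abs hlim
    rw [show (∫ u in Ioi (0:ℝ), l u * c) = (∫ u in Ioi (0:ℝ), l u) * c
      from integral_mul_const c l] at h
    refine Tendsto.congr' ?_ h
    filter_upwards [eventually_ge_atTop (0:ℝ)] with t ht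
    rw [setIntegral_indicator measurableSet_Ioc,
      inter_eq_self_of_subset_right Ioc_subset_Ioi_self, ← hconv_refl t ht]
  -- the limit equation
  have hc_eq : IntegrableOn l (Ioi 0) → c * (1 + μ * ∫ u in Ioi (0:ℝ), l u) = 1 := by
    intro hint
    have h1 := tendsto_nhds_unique (hDCT hint) hconv_tendsto
    have h1' : (∫ u in Ioi (0:ℝ), l u) * c * μ = 1 - c :=
      (eq_div_iff hμ.ne').1 h1
    linear_combination h1'
  have hint_pos : IntegrableOn l (Ioi 0) → 0 < c := by
    intro hint
    rcases hc0.lt_or_eq with h | h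
    · exact h
    · exfalso
      have := hc_eq hint
      rw [← h] at this
      simp at this
  have hfinal : IntegrableOn l (Ioi 0) →
      c = 1 / (1 + μ * ∫ u in Ioi (0:ℝ), |l u|)
        ∧ 0 < 1 / (1 + μ * ∫ u in Ioi (0:ℝ), |l u|) := by
    intro hint
    have hcpos := hint_pos hint
    have habs : ∫ u in Ioi (0:ℝ), |l u| = ∫ u in Ioi (0:ℝ), l u := by
      refine setIntegral_congr_ae measurableSet_Ioi ?_
      filter_upwards [(hmain hcpos).1] with x hx hxm
      exact abs_of_nonneg (hx hxm)
    have heq := hc_eq hint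
    rw [habs]
    have hX : 0 < 1 + μ * ∫ u in Ioi (0:ℝ), l u := by nlinarith
    refine ⟨?_, by positivity⟩
    rw [eq_div_iff hX.ne']
    linarith [heq]
  constructor
  · constructor
    · intro h0 hint
      have hceq0 : c = 0 := tendsto_nhds_unique htendsto h0
      have := hint_pos hint
      rw [hceq0] at this
      exact lt_irrefl 0 this
    · intro hnint
      have hceq0 : c = 0 := by
        by_contra hne
        exact hnint (hmain (hc0.lt_of_ne (Ne.symm hne))).2
      rw [← hceq0]
      exact htendsto
  · intro hint
    obtain ⟨he, hp⟩ := hfinal hint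
    exact ⟨he ▸ htendsto, hp⟩
end

section
/- PC pairs are stable under exponential shifts: let (k,l) be a pair of type PC and μ ≥ 0. Define k_μ(t) = k(t)e^{−μt} and l_μ(t) = l(t)e^{−μt} for t > 0. Then k_μ is nonnegative, nonincreasing and locally integrable, the function l_μ + μ(1⋆l_μ) is locally integrable, and (k_μ ⋆ [l_μ + μ(1⋆l_μ)])(t) = 1 for all t ∈ (0,∞); that is, the pair (k_μ, l_μ + μ(1⋆l_μ)) is of type PC. -/
open MeasureTheory Set Real

namespace PCaux

/-- The shear `(x, y) ↦ (x + y, y)` as a measurable equivalence of `ℝ × ℝ`. -/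
def shearEquiv : (ℝ × ℝ) ≃ᵐ (ℝ × ℝ) where
  toFun := fun p => (p.1 + p.2, p.2)
  invFun := fun p => (p.1 - p.2, p.2)
  left_inv := fun p => by simp
  right_inv := fun p => by simp
  measurable_toFun := (measurable_fst.add measurable_snd).prodMk measurable_snd
  measurable_invFun := (measurable_fst.sub measurable_snd).prodMk measurable_snd

/-- The open triangle `{(x,y) : 0 < x, 0 < y, x + y < t}`. -/
def tri (t : ℝ) : Set (ℝ × ℝ) := {p : ℝ × ℝ | 0 < p.1 ∧ 0 < p.2 ∧ p.1 + p.2 < t}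

lemma tri_meas (t : ℝ) : MeasurableSet (tri t) :=
  ((measurableSet_lt measurable_const measurable_fst).inter
    ((measurableSet_lt measurable_const measurable_snd).inter
      (measurableSet_lt (measurable_fst.add measurable_snd) measurable_const)))

/-- The second triangle `{(x,y) : 0 < y < x < t}`. -/
def tri2 (t : ℝ) : Set (ℝ × ℝ) := {p : ℝ × ℝ | 0 < p.2 ∧ p.2 < p.1 ∧ p.1 < t}

lemma tri2_meas (t : ℝ) : MeasurableSet (tri2 t) :=
  ((measurableSet_lt measurable_const measurable_snd).inter
    ((measurableSet_lt measurable_snd measurable_fst).inter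
      (measurableSet_lt measurable_fst measurable_const)))

lemma integrable_triIndicator (t : ℝ) (f g : ℝ → ℝ)
    (hf : IntegrableOn f (Ioc 0 t)) (hg : IntegrableOn g (Ioc 0 t)) :
    Integrable ((tri t).indicator (fun p => f p.1 * g p.2)) (volume.prod volume) := by
  rw [integrable_indicator_iff (tri_meas t)]
  have h1 : IntegrableOn (fun p : ℝ × ℝ => f p.1 * g p.2) (Ioc 0 t ×ˢ Ioc 0 t)
      (volume.prod volume) := by
    rw [IntegrableOn, ← Measure.prod_restrict]
    exact hf.mul_prod hg
  refine h1.mono_set ?_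
  rintro ⟨x, y⟩ ⟨hx, hy, hxy⟩
  exact ⟨⟨hx, by linarith⟩, ⟨hy, by linarith⟩⟩

/-- Slicing the triangle integral with the first coordinate outside. -/
lemma sliceA (t : ℝ) (ht : 0 < t) (f g : ℝ → ℝ)
    (hf : IntegrableOn f (Ioc 0 t)) (hg : IntegrableOn g (Ioc 0 t)) :
    ∫ p, (tri t).indicator (fun p => f p.1 * g p.2) p ∂(volume.prod volume)
      = ∫ τ in (0:ℝ)..t, f τ * ∫ s in (0:ℝ)..(t - τ), g s := by
  rw [MeasureTheory.integral_prod _ (integrable_triIndicator t f g hf hg)]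
  have key : ∀ τ : ℝ,
      (∫ s, (tri t).indicator (fun p => f p.1 * g p.2) (τ, s))
        = (Ioo 0 t).indicator (fun τ => f τ * ∫ s in (0:ℝ)..(t - τ), g s) τ := by
    intro τ
    by_cases hτ : τ ∈ Ioo 0 t
    · obtain ⟨hτ0, hτt⟩ := hτ
      have h1 : (fun s => (tri t).indicator (fun p => f p.1 * g p.2) (τ, s))
          = (Ioo 0 (t - τ)).indicator (fun s => f τ * g s) := by
        funext s
        simp only [Set.indicator_apply, tri, mem_setOf_eq, mem_Ioo]
        by_cases hs : 0 < s ∧ s < t - τ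
        · rw [if_pos (show 0 < τ ∧ 0 < s ∧ τ + s < t from ⟨hτ0, hs.1, by linarith [hs.2]⟩),
            if_pos hs]
        · rw [if_neg, if_neg hs]
          rintro ⟨_, h2, h3⟩
          exact hs ⟨h2, by linarith⟩
      rw [h1, MeasureTheory.integral_indicator measurableSet_Ioo,
        Set.indicator_of_mem (show τ ∈ Ioo 0 t from ⟨hτ0, hτt⟩),
        intervalIntegral.integral_of_le (by linarith : (0:ℝ) ≤ t - τ),
        MeasureTheory.integral_Ioc_eq_integral_Ioo, ← MeasureTheory.integral_const_mul]
    · have h1 : (fun s => (tri t).indicator (fun p => f p.1 * g p.2) (τ, s))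
          = fun _ => (0:ℝ) := by
        funext s
        simp only [Set.indicator_apply, tri, mem_setOf_eq]
        rw [if_neg]
        rintro ⟨h1, h2, h3⟩
        exact hτ ⟨h1, by linarith⟩
      rw [h1, MeasureTheory.integral_zero, Set.indicator_of_notMem hτ]
  rw [show (fun τ => ∫ s, (tri t).indicator (fun p => f p.1 * g p.2) (τ, s))
      = (Ioo 0 t).indicator (fun τ => f τ * ∫ s in (0:ℝ)..(t - τ), g s) from funext key,
    MeasureTheory.integral_indicator measurableSet_Ioo,
    ← MeasureTheory.integral_Ioc_eq_integral_Ioo,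
    ← intervalIntegral.integral_of_le ht.le]

lemma integrable_tri2Indicator (t : ℝ) (f g : ℝ → ℝ)
    (hf : IntegrableOn f (Ioc 0 t)) (hg : IntegrableOn g (Ioc 0 t)) :
    Integrable ((tri2 t).indicator (fun p => f (p.1 - p.2) * g p.2)) (volume.prod volume) := by
  have hcomp : ((tri2 t).indicator (fun p => f (p.1 - p.2) * g p.2)) ∘ shearEquiv
      = (tri t).indicator (fun p => f p.1 * g p.2) := by
    funext q
    simp only [Function.comp_apply, Set.indicator_apply, tri, tri2, mem_setOf_eq, shearEquiv,
      MeasurableEquiv.coe_mk, Equiv.coe_fn_mk]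
    by_cases hq : 0 < q.1 ∧ 0 < q.2 ∧ q.1 + q.2 < t
    · rw [if_pos (show 0 < q.2 ∧ q.2 < q.1 + q.2 ∧ q.1 + q.2 < t from
        ⟨hq.2.1, by linarith [hq.1], hq.2.2⟩), if_pos hq]
      simp
    · rw [if_neg, if_neg hq]
      rintro ⟨h1, h2, h3⟩
      exact hq ⟨by linarith, h1, h3⟩
  have hmp : MeasurePreserving (fun z : ℝ × ℝ => (z.1 + z.2, z.2))
      (volume.prod volume) (volume.prod volume) :=
    measurePreserving_add_prod volume volume
  have := (hmp.integrable_comp_emb shearEquiv.measurableEmbedding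
    (g := (tri2 t).indicator (fun p => f (p.1 - p.2) * g p.2)))
  rw [← this]
  rw [show ((tri2 t).indicator (fun p => f (p.1 - p.2) * g p.2)) ∘
      (fun z : ℝ × ℝ => (z.1 + z.2, z.2)) = (tri t).indicator (fun p => f p.1 * g p.2) from hcomp]
  exact integrable_triIndicator t f g hf hg

/-- Change of variables: the `tri2` integral equals the `tri` integral. -/
lemma tri2_eq_tri (t : ℝ) (f g : ℝ → ℝ) :
    ∫ p, (tri2 t).indicator (fun p => f (p.1 - p.2) * g p.2) p ∂(volume.prod volume)
      = ∫ p, (tri t).indicator (fun p => f p.1 * g p.2) p ∂(volume.prod volume) := by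
  have hmp : MeasurePreserving (fun z : ℝ × ℝ => (z.1 + z.2, z.2))
      (volume.prod volume) (volume.prod volume) :=
    measurePreserving_add_prod volume volume
  rw [← hmp.integral_comp shearEquiv.measurableEmbedding
    ((tri2 t).indicator (fun p => f (p.1 - p.2) * g p.2))]
  congr 1
  funext q
  simp only [Set.indicator_apply, tri, tri2, mem_setOf_eq]
  by_cases hq : 0 < q.1 ∧ 0 < q.2 ∧ q.1 + q.2 < t
  · rw [if_pos ⟨hq.2.1, by linarith [hq.1], hq.2.2⟩, if_pos hq]
    simp
  · rw [if_neg, if_neg hq]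
    rintro ⟨h1, h2, h3⟩
    exact hq ⟨by linarith, h1, h3⟩

/-- Slicing the second triangle integral with the first coordinate outside. -/
lemma sliceB (t : ℝ) (ht : 0 < t) (f g : ℝ → ℝ)
    (hf : IntegrableOn f (Ioc 0 t)) (hg : IntegrableOn g (Ioc 0 t)) :
    ∫ p, (tri2 t).indicator (fun p => f (p.1 - p.2) * g p.2) p ∂(volume.prod volume)
      = ∫ s in (0:ℝ)..t, ∫ τ in (0:ℝ)..s, f (s - τ) * g τ := by
  rw [MeasureTheory.integral_prod _ (integrable_tri2Indicator t f g hf hg)]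
  have key : ∀ s : ℝ,
      (∫ τ, (tri2 t).indicator (fun p => f (p.1 - p.2) * g p.2) (s, τ))
        = (Ioo 0 t).indicator (fun s => ∫ τ in (0:ℝ)..s, f (s - τ) * g τ) s := by
    intro s
    by_cases hs : s ∈ Ioo 0 t
    · obtain ⟨hs0, hst⟩ := hs
      have h1 : (fun τ => (tri2 t).indicator (fun p => f (p.1 - p.2) * g p.2) (s, τ))
          = (Ioo 0 s).indicator (fun τ => f (s - τ) * g τ) := by
        funext τ
        simp only [Set.indicator_apply, tri2, mem_setOf_eq, mem_Ioo]
        by_cases hτ : 0 < τ ∧ τ < s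
        · rw [if_pos (show 0 < τ ∧ τ < s ∧ s < t from ⟨hτ.1, hτ.2, hst⟩), if_pos hτ]
        · rw [if_neg, if_neg hτ]
          rintro ⟨h1, h2, h3⟩
          exact hτ ⟨h1, h2⟩
      rw [h1, MeasureTheory.integral_indicator measurableSet_Ioo,
        Set.indicator_of_mem (show s ∈ Ioo 0 t from ⟨hs0, hst⟩),
        intervalIntegral.integral_of_le hs0.le,
        MeasureTheory.integral_Ioc_eq_integral_Ioo]
    · have h1 : (fun τ => (tri2 t).indicator (fun p => f (p.1 - p.2) * g p.2) (s, τ))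
          = fun _ => (0:ℝ) := by
        funext τ
        simp only [Set.indicator_apply, tri2, mem_setOf_eq]
        rw [if_neg]
        rintro ⟨h1, h2, h3⟩
        exact hs ⟨by linarith, h3⟩
      rw [h1, MeasureTheory.integral_zero, Set.indicator_of_notMem hs]
  rw [show (fun s => ∫ τ, (tri2 t).indicator (fun p => f (p.1 - p.2) * g p.2) (s, τ))
      = (Ioo 0 t).indicator (fun s => ∫ τ in (0:ℝ)..s, f (s - τ) * g τ) from funext key,
    MeasureTheory.integral_indicator measurableSet_Ioo,
    ← MeasureTheory.integral_Ioc_eq_integral_Ioo,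
    ← intervalIntegral.integral_of_le ht.le]

/-- The key Fubini identity: integrating a convolution equals convolving with the primitive. -/
lemma conv_primitive (t : ℝ) (ht : 0 < t) (f g : ℝ → ℝ)
    (hf : IntegrableOn f (Ioc 0 t)) (hg : IntegrableOn g (Ioc 0 t)) :
    ∫ s in (0:ℝ)..t, ∫ τ in (0:ℝ)..s, f (s - τ) * g τ
      = ∫ τ in (0:ℝ)..t, f τ * ∫ s in (0:ℝ)..(t - τ), g s := by
  rw [← sliceB t ht f g hf hg, tri2_eq_tri, sliceA t ht f g hf hg]

end PCaux

open PCaux in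
/-- Stability of `PC` pairs under exponential shifts: if `(k,l) ∈ PC` and `μ ≥ 0`,
then `(k·e^{-μ·}, l·e^{-μ·} + μ(1 ⋆ l·e^{-μ·})) ∈ PC`. -/
theorem pc_pair_exponential_shift
    (k l : ℝ → ℝ) (hPC : IsPCPair k l) (μ : ℝ) (hμ : 0 ≤ μ) :
    IsPCPair (fun t => k t * Real.exp (-μ * t))
      (fun t => l t * Real.exp (-μ * t) +
        μ * ∫ τ in (0:ℝ)..t, l τ * Real.exp (-μ * τ)) := by
  obtain ⟨hk0, hkmono, hkint, hlint, hconv⟩ := hPC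
  -- notation
  set kμ : ℝ → ℝ := fun t => k t * Real.exp (-μ * t) with hkμ
  set lμ : ℝ → ℝ := fun t => l t * Real.exp (-μ * t) with hlμ
  set L : ℝ → ℝ := fun t => ∫ τ in (0:ℝ)..t, lμ τ with hL
  -- integrability of kμ and lμ on Ioc 0 T
  have hexp_bdd : ∀ T : ℝ, ∀ᵐ x ∂(volume.restrict (Ioc 0 T)),
      ‖Real.exp (-μ * x)‖ ≤ 1 := by
    intro T
    refine (ae_restrict_iff' measurableSet_Ioc).2 (Filter.Eventually.of_forall ?_)
    intro x hx
    rw [Real.norm_eq_abs, abs_of_pos (Real.exp_pos _)]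
    exact Real.exp_le_one_iff.2 (by nlinarith [hx.1])
  have hexp_meas : ∀ T : ℝ, AEStronglyMeasurable (fun x => Real.exp (-μ * x))
      (volume.restrict (Ioc 0 T)) :=
    fun T => (Real.continuous_exp.comp (continuous_const.mul continuous_id)).aestronglyMeasurable
  have hkμint : ∀ T, 0 < T → IntegrableOn kμ (Ioc 0 T) := by
    intro T hT
    have := ((hkint T hT).bdd_mul (hexp_meas T) (hexp_bdd T))
    exact IntegrableOn.congr_fun this (fun x _ => by rw [mul_comm]) measurableSet_Ioc
  have hlμint : ∀ T, 0 < T → IntegrableOn lμ (Ioc 0 T) := by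
    intro T hT
    have := ((hlint T hT).bdd_mul (hexp_meas T) (hexp_bdd T))
    exact IntegrableOn.congr_fun this (fun x _ => by rw [mul_comm]) measurableSet_Ioc
  -- continuity of the primitive L on [0, T]
  have hLcont : ∀ T, 0 < T → ContinuousOn L (Icc 0 T) := by
    intro T hT
    have hint : IntegrableOn lμ (uIcc 0 T) := by
      rw [uIcc_of_le hT.le, integrableOn_Icc_iff_integrableOn_Ioc]
      exact hlμint T hT
    have := intervalIntegral.continuousOn_primitive_interval hint
    rwa [uIcc_of_le hT.le] at this
  -- the new second kernel
  have hm : ∀ T, 0 < T → IntegrableOn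
      (fun t => lμ t + μ * L t) (Ioc 0 T) := by
    intro T hT
    refine (hlμint T hT).add ?_
    have : IntegrableOn (fun t => μ * L t) (Icc 0 T) :=
      (continuousOn_const.mul (hLcont T hT)).integrableOn_Icc
    exact this.mono_set Ioc_subset_Icc_self
  refine ⟨?_, ?_, ?_, ?_, ?_⟩
  · intro t ht
    exact mul_nonneg (hk0 t ht) (Real.exp_pos _).le
  · intro s t hs hst
    have h1 : k t ≤ k s := hkmono s t hs hst
    have h2 : Real.exp (-μ * t) ≤ Real.exp (-μ * s) :=
      Real.exp_le_exp.2 (by nlinarith)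
    exact mul_le_mul h1 h2 (Real.exp_pos _).le (hk0 s hs)
  · exact hkμint
  · exact hm
  · -- the convolution identity
    intro t ht
    -- pointwise identity for conv kμ lμ
    have hconvμ : ∀ s, 0 < s → conv kμ lμ s = Real.exp (-μ * s) := by
      intro s hs
      have h1 : (fun τ => kμ (s - τ) * lμ τ)
          = fun τ => Real.exp (-μ * s) * (k (s - τ) * l τ) := by
        funext τ
        simp only [hkμ, hlμ]
        rw [show k (s - τ) * Real.exp (-μ * (s - τ)) * (l τ * Real.exp (-μ * τ))
            = (Real.exp (-μ * (s - τ)) * Real.exp (-μ * τ)) * (k (s - τ) * l τ) by ring,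
          ← Real.exp_add]
        ring_nf
      unfold conv
      rw [h1, intervalIntegral.integral_const_mul]
      rw [show (∫ τ in (0:ℝ)..s, k (s - τ) * l τ) = conv k l s from rfl, hconv s hs, mul_one]
    -- integrability of the first convolution integrand
    have hconvint : IntervalIntegrable (fun τ => k (t - τ) * l τ) volume 0 t := by
      by_contra h
      have := intervalIntegral.integral_undef h
      rw [show (∫ τ in (0:ℝ)..t, k (t - τ) * l τ) = conv k l t from rfl, hconv t ht] at this
      exact one_ne_zero this
    have ha : IntervalIntegrable (fun τ => kμ (t - τ) * lμ τ) volume 0 t := by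
      have h1 : (fun τ => kμ (t - τ) * lμ τ)
          = fun τ => Real.exp (-μ * t) * (k (t - τ) * l τ) := by
        funext τ
        simp only [hkμ, hlμ]
        rw [show k (t - τ) * Real.exp (-μ * (t - τ)) * (l τ * Real.exp (-μ * τ))
            = (Real.exp (-μ * (t - τ)) * Real.exp (-μ * τ)) * (k (t - τ) * l τ) by ring,
          ← Real.exp_add]
        ring_nf
      rw [h1]
      exact hconvint.const_mul _
    -- integrability of the second convolution integrand
    have hkμrefl : IntervalIntegrable (fun τ => kμ (t - τ)) volume 0 t := by
      have h1 : IntervalIntegrable kμ volume 0 t :=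
        (intervalIntegrable_iff_integrableOn_Ioc_of_le ht.le).2 (hkμint t ht)
      simpa using (h1.comp_sub_left t).symm
    obtain ⟨C, hC⟩ := (isCompact_Icc (a := (0:ℝ)) (b := t)).exists_bound_of_continuousOn
      (hLcont t ht)
    have hb : IntervalIntegrable (fun τ => kμ (t - τ) * (μ * L τ)) volume 0 t := by
      rw [intervalIntegrable_iff_integrableOn_Ioc_of_le ht.le]
      have hkr : IntegrableOn (fun τ => kμ (t - τ)) (Ioc 0 t) :=
        (intervalIntegrable_iff_integrableOn_Ioc_of_le ht.le).1 hkμrefl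
      have hmeas : AEStronglyMeasurable (fun τ => μ * L τ)
          (volume.restrict (Ioc 0 t)) := by
        have hc : ContinuousOn (fun τ => μ * L τ) (Icc 0 t) :=
          continuousOn_const.mul (hLcont t ht)
        exact (hc.aestronglyMeasurable measurableSet_Icc).mono_measure
          (Measure.restrict_mono Ioc_subset_Icc_self le_rfl)
      have hbound : ∀ᵐ x ∂(volume.restrict (Ioc 0 t)), ‖μ * L x‖ ≤ |μ| * C := by
        refine (ae_restrict_iff' measurableSet_Ioc).2 (Filter.Eventually.of_forall ?_)
        intro x hx
        rw [norm_mul, Real.norm_eq_abs, Real.norm_eq_abs]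
        have := hC x (Ioc_subset_Icc_self hx)
        rw [Real.norm_eq_abs] at this
        exact mul_le_mul_of_nonneg_left this (abs_nonneg μ)
      have := hkr.bdd_mul hmeas hbound
      exact IntegrableOn.congr_fun this (fun x _ => by rw [mul_comm]) measurableSet_Ioc
    -- split the integral
    unfold conv
    have hsplit : (fun τ => kμ (t - τ) * (lμ τ + μ * L τ))
        = fun τ => kμ (t - τ) * lμ τ + kμ (t - τ) * (μ * L τ) := by
      funext τ; ring
    rw [show (fun τ => kμ (t - τ) *
        (l τ * Real.exp (-μ * τ) + μ * ∫ σ in (0:ℝ)..τ, l σ * Real.exp (-μ * σ)))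
        = fun τ => kμ (t - τ) * (lμ τ + μ * L τ) from rfl]
    rw [hsplit, intervalIntegral.integral_add ha hb]
    -- first piece equals exp(-μ t)
    have hfirst : (∫ τ in (0:ℝ)..t, kμ (t - τ) * lμ τ) = Real.exp (-μ * t) := by
      rw [show (∫ τ in (0:ℝ)..t, kμ (t - τ) * lμ τ) = conv kμ lμ t from rfl]
      exact hconvμ t ht
    -- second piece: reflection + Fubini
    have hsecond : (∫ τ in (0:ℝ)..t, kμ (t - τ) * (μ * L τ))
        = μ * ∫ τ in (0:ℝ)..t, kμ τ * L (t - τ) := by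
      have := intervalIntegral.integral_comp_sub_left
        (a := (0:ℝ)) (b := t) (fun x => kμ x * (μ * L (t - x))) t
      simp only [sub_zero, sub_self] at this
      rw [show (fun τ => kμ (t - τ) * (μ * L τ))
          = fun τ => (fun x => kμ x * (μ * L (t - x))) (t - τ) from by
        funext τ; simp, this, ← intervalIntegral.integral_const_mul]
      congr 1
      funext x
      ring
    have hfub : (∫ τ in (0:ℝ)..t, kμ τ * L (t - τ))
        = ∫ s in (0:ℝ)..t, conv kμ lμ s := by
      rw [show (fun s : ℝ => conv kμ lμ s)
          = fun s => ∫ τ in (0:ℝ)..s, kμ (s - τ) * lμ τ from rfl]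
      rw [conv_primitive t ht kμ lμ (hkμint t ht) (hlμint t ht)]
    have hexpint : (∫ s in (0:ℝ)..t, conv kμ lμ s)
        = ∫ s in (0:ℝ)..t, Real.exp (-μ * s) := by
      rw [intervalIntegral.integral_of_le ht.le, intervalIntegral.integral_of_le ht.le]
      refine setIntegral_congr_fun measurableSet_Ioc (fun s hs => ?_)
      exact hconvμ s hs.1
    have hfinal : μ * ∫ s in (0:ℝ)..t, Real.exp (-μ * s) = 1 - Real.exp (-μ * t) := by
      rcases eq_or_lt_of_le hμ with hμ0 | hμpos
      · rw [← hμ0]; simp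
      · have hc : (-μ) ≠ 0 := by linarith
        have := intervalIntegral.integral_comp_mul_left (a := (0:ℝ)) (b := t)
          (fun x => Real.exp x) hc
        simp only [mul_zero, smul_eq_mul] at this
        rw [this, integral_exp, Real.exp_zero]
        field_simp
        ring
    rw [hfirst, hsecond, hfub, hexpint, hfinal]
    ring
end
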